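/- arXiv:0712.1754 — 6 statements merged into one kernel-verified Lean document; each statement's English description precedes it below -/
import Mathlib

section
/- For every integer n ≥ 3 there is a constant C > 0 such that for all x, y ∈ ℝⁿ with x ≠ 0 and y ≠ 0, (1 / H^{n−1}(∂B_{|x|}(0))) ∫_{∂B_{|x|}(0)} | |z|² − |y|² | / |z − y|² dH^{n−1}(z) ≤ C. -/
open MeasureTheory Filter Metric Real Topology Set
open scoped ENNReal NNReal

noncomputable section SphereAux

variable (m : ℕ)

/-- Upper bound on the Hausdorff measure of Euclidean balls via the sup-norm cube. -/
lemma em_ball_bound :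
    ∃ c : ℝ≥0∞, c ≠ ⊤ ∧ ∀ ρ : ℝ, 0 ≤ ρ →
      μH[(m : ℝ)] (Metric.closedBall (0 : EuclideanSpace ℝ (Fin m)) ρ) ≤
        c * ENNReal.ofReal ρ ^ m := by
  set K : ℝ≥0 := (Fintype.card (Fin m) : ℝ≥0) ^ (1 / (2:ℝ≥0∞)).toReal with hK
  refine ⟨(K : ℝ≥0∞) ^ (m:ℝ) * 2 ^ m, ?_, ?_⟩
  · exact ENNReal.mul_ne_top (ENNReal.rpow_ne_top_of_nonneg (by positivity) ENNReal.coe_ne_top)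
      (ENNReal.pow_ne_top ENNReal.ofNat_ne_top)
  · intro ρ hρ
    have ha : AntilipschitzWith _ (WithLp.equiv 2 (∀ _ : Fin m, ℝ)) := PiLp.antilipschitzWith_ofLp 2 (fun _ : Fin m => ℝ)
    have h1 := ha.le_hausdorffMeasure_image (d := (m:ℝ)) (by positivity)
      (Metric.closedBall (0 : EuclideanSpace ℝ (Fin m)) ρ)
    have hvol : (μH[(m:ℝ)] : Measure (∀ _ : Fin m, ℝ)) = volume := by
      simpa using hausdorffMeasure_pi_real (ι := Fin m)
    have himg : (WithLp.equiv 2 (∀ _ : Fin m, ℝ)) ''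
        Metric.closedBall (0 : EuclideanSpace ℝ (Fin m)) ρ ⊆
        Metric.closedBall (0 : ∀ _ : Fin m, ℝ) ρ := by
      rintro _ ⟨z, hz, rfl⟩
      have hl := (show LipschitzWith 1 (WithLp.equiv 2 (∀ _ : Fin m, ℝ)) from PiLp.lipschitzWith_ofLp 2 (fun _ : Fin m => ℝ)).dist_le_mul z 0
      simp only [NNReal.coe_one, one_mul] at hl
      rw [Metric.mem_closedBall] at hz ⊢
      have e0 : (WithLp.equiv 2 (∀ _ : Fin m, ℝ)) 0 = 0 := rfl
      rw [← e0]
      exact hl.trans hz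
    have h2 : μH[(m:ℝ)] ((WithLp.equiv 2 (∀ _ : Fin m, ℝ)) ''
        Metric.closedBall (0 : EuclideanSpace ℝ (Fin m)) ρ) ≤ ENNReal.ofReal ((2*ρ)^m) := by
      calc μH[(m:ℝ)] ((WithLp.equiv 2 (∀ _ : Fin m, ℝ)) ''
          Metric.closedBall (0 : EuclideanSpace ℝ (Fin m)) ρ)
          ≤ μH[(m:ℝ)] (Metric.closedBall (0 : ∀ _ : Fin m, ℝ) ρ) := measure_mono himg
        _ = volume (Metric.closedBall (0 : ∀ _ : Fin m, ℝ) ρ) := by rw [hvol]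
        _ = ENNReal.ofReal ((2*ρ)^m) := by
            rw [Real.volume_pi_closedBall 0 hρ]; simp
    calc μH[(m:ℝ)] (Metric.closedBall (0 : EuclideanSpace ℝ (Fin m)) ρ)
        ≤ (K : ℝ≥0∞) ^ (m:ℝ) * μH[(m:ℝ)] ((WithLp.equiv 2 (∀ _ : Fin m, ℝ)) ''
          Metric.closedBall (0 : EuclideanSpace ℝ (Fin m)) ρ) := h1
      _ ≤ (K : ℝ≥0∞) ^ (m:ℝ) * ENNReal.ofReal ((2*ρ)^m) := by gcongr
      _ = (K : ℝ≥0∞) ^ (m:ℝ) * 2 ^ m * ENNReal.ofReal ρ ^ m := by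
          rw [ENNReal.ofReal_pow (by positivity), ENNReal.ofReal_mul (by norm_num),
            ENNReal.ofReal_ofNat, mul_pow, mul_assoc]

/-- Lower bound: the Hausdorff measure of the unit Euclidean ball is positive. -/
lemma em_ball_pos :
    0 < μH[(m : ℝ)] (Metric.closedBall (0 : EuclideanSpace ℝ (Fin m)) 1) := by
  set K : ℝ≥0 := (Fintype.card (Fin m) : ℝ≥0) ^ (1 / (2:ℝ≥0∞)).toReal with hK
  set ρ₀ : ℝ := ((K:ℝ) + 1)⁻¹ with hρ₀
  have hρ₀pos : 0 < ρ₀ := by positivity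
  have hvol : (μH[(m:ℝ)] : Measure (∀ _ : Fin m, ℝ)) = volume := by
    simpa using hausdorffMeasure_pi_real (ι := Fin m)
  have ha : AntilipschitzWith _ (WithLp.equiv 2 (∀ _ : Fin m, ℝ)) := PiLp.antilipschitzWith_ofLp 2 (fun _ : Fin m => ℝ)
  have hsub : Metric.closedBall (0 : ∀ _ : Fin m, ℝ) ρ₀ ⊆
      (WithLp.equiv 2 (∀ _ : Fin m, ℝ)) ''
        Metric.closedBall (0 : EuclideanSpace ℝ (Fin m)) 1 := by
    intro x hx
    refine ⟨(WithLp.equiv 2 (∀ _ : Fin m, ℝ)).symm x, ?_, by simp⟩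
    rw [Metric.mem_closedBall] at hx ⊢
    have h1 := ha.le_mul_dist ((WithLp.equiv 2 (∀ _ : Fin m, ℝ)).symm x) 0
    have e0 : (WithLp.equiv 2 (∀ _ : Fin m, ℝ)) 0 = 0 := rfl
    rw [e0] at h1
    simp only [Equiv.apply_symm_apply] at h1
    calc dist ((WithLp.equiv 2 (∀ _ : Fin m, ℝ)).symm x) 0 ≤ (K:ℝ) * dist x 0 := h1
      _ ≤ (K:ℝ) * ρ₀ := by gcongr
      _ ≤ 1 := by
          rw [hρ₀, ← div_eq_mul_inv, div_le_one (by positivity)]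
          linarith [K.coe_nonneg]
  have h2 : (0:ℝ≥0∞) < μH[(m:ℝ)] ((WithLp.equiv 2 (∀ _ : Fin m, ℝ)) ''
      Metric.closedBall (0 : EuclideanSpace ℝ (Fin m)) 1) := by
    calc (0:ℝ≥0∞) < ENNReal.ofReal ((2*ρ₀)^m) := by
          rw [ENNReal.ofReal_pos]; positivity
      _ = volume (Metric.closedBall (0 : ∀ _ : Fin m, ℝ) ρ₀) := by
          rw [Real.volume_pi_closedBall 0 hρ₀pos.le]; simp
      _ = μH[(m:ℝ)] (Metric.closedBall (0 : ∀ _ : Fin m, ℝ) ρ₀) := by rw [hvol]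
      _ ≤ _ := measure_mono hsub
  have h3 := (show LipschitzWith 1 (WithLp.equiv 2 (∀ _ : Fin m, ℝ)) from PiLp.lipschitzWith_ofLp 2 (fun _ : Fin m => ℝ)).hausdorffMeasure_image_le
    (d := (m:ℝ)) (by positivity) (Metric.closedBall (0 : EuclideanSpace ℝ (Fin m)) 1)
  simp only [ENNReal.coe_one, ENNReal.one_rpow, one_mul] at h3
  exact h2.trans_le h3


/-- Lipschitz-type estimate for the graph function of the sphere. -/
lemma sqrt_graph_lip {a b D : ℝ} (ha : 0 ≤ a) (ha' : a ≤ 1/2) (hb : 0 ≤ b) (hb' : b ≤ 1/2)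
    (hD : (b - a)^2 ≤ D^2) : (√(1-a^2) - √(1-b^2))^2 ≤ D^2 := by
  set x := √(1-a^2) with hxdef
  set y := √(1-b^2) with hydef
  have hx : x^2 = 1-a^2 := Real.sq_sqrt (by nlinarith)
  have hy : y^2 = 1-b^2 := Real.sq_sqrt (by nlinarith)
  have hx2 : 1/2 ≤ x := by
    rw [hxdef, show (1:ℝ)/2 = √(1/4) by
      rw [show (1:ℝ)/4 = (1/2)^2 by norm_num, Real.sqrt_sq]; norm_num]
    exact Real.sqrt_le_sqrt (by nlinarith)
  have hy2 : 1/2 ≤ y := by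
    rw [hydef, show (1:ℝ)/2 = √(1/4) by
      rw [show (1:ℝ)/4 = (1/2)^2 by norm_num, Real.sqrt_sq]; norm_num]
    exact Real.sqrt_le_sqrt (by nlinarith)
  have hab : (x - y) * (x + y) = b^2 - a^2 := by linear_combination hx - hy
  have h6 : (x-y)^2 * (x+y)^2 = (b^2-a^2)^2 := by rw [← mul_pow, hab]
  have hD0 : (0:ℝ) ≤ D^2 := le_trans (sq_nonneg _) hD
  have h7 : (b^2-a^2)^2 ≤ D^2 := by
    have hba : (b+a)^2 ≤ 1 := by nlinarith
    calc (b^2-a^2)^2 = (b-a)^2 * (b+a)^2 := by ring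
      _ ≤ D^2 * 1 := mul_le_mul hD hba (sq_nonneg _) hD0
      _ = D^2 := mul_one _
  have h8 : 1 ≤ (x+y)^2 := by nlinarith
  calc (x - y)^2 = (x-y)^2 * 1 := (mul_one _).symm
    _ ≤ (x-y)^2 * (x+y)^2 := mul_le_mul_of_nonneg_left h8 (sq_nonneg _)
    _ = (b^2-a^2)^2 := h6
    _ ≤ D^2 := h7

/-- A spherical cap of radius `t ≤ 1/2` is a Lipschitz image of a ball in dimension `m`. -/
lemma cap_bound (p : EuclideanSpace ℝ (Fin (m+1))) (hp : ‖p‖ = 1) {t : ℝ}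
    (ht : 0 < t) (ht' : t ≤ 1/2) :
    μH[(m:ℝ)] (Metric.sphere (0 : EuclideanSpace ℝ (Fin (m+1))) 1 ∩ Metric.closedBall p t) ≤
      ((2:ℝ≥0) : ℝ≥0∞)^(m:ℝ) *
        μH[(m:ℝ)] (Metric.closedBall (0 : EuclideanSpace ℝ (Fin m)) t) := by
  haveI : Fact (Module.finrank ℝ (EuclideanSpace ℝ (Fin (m+1))) = m + 1) := ⟨finrank_euclideanSpace_fin⟩
  have hp0 : p ≠ 0 := by intro h; rw [h] at hp; simp at hp
  set Kp : Submodule ℝ (EuclideanSpace ℝ (Fin (m+1))) := (ℝ ∙ p)ᗮ with hKp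
  set b : OrthonormalBasis (Fin m) ℝ Kp := OrthonormalBasis.fromOrthogonalSpanSingleton m hp0
    with hb
  set ψ : EuclideanSpace ℝ (Fin m) → EuclideanSpace ℝ (Fin (m+1)) :=
    fun v => ((b.repr.symm v : Kp) : EuclideanSpace ℝ (Fin (m+1))) with hψ
  set g : EuclideanSpace ℝ (Fin m) → ℝ := fun v => √(1 - ‖v‖^2) with hg
  set F : EuclideanSpace ℝ (Fin m) → EuclideanSpace ℝ (Fin (m+1)) :=
    fun v => g v • p + ψ v with hF
  -- basic facts
  have hinner : ∀ x ∈ Kp, (inner ℝ p x : ℝ) = 0 := by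
    intro x hx
    exact hx p (Submodule.mem_span_singleton_self p)
  have horm : ∀ (a : ℝ) (u : EuclideanSpace ℝ (Fin (m+1))), u ∈ Kp →
      ‖a • p + u‖^2 = a^2 + ‖u‖^2 := by
    intro a u hu
    rw [norm_add_sq_real]
    have h1 : (inner ℝ (a • p) u : ℝ) = a * (inner ℝ p u : ℝ) := real_inner_smul_left p u a
    rw [h1, hinner u hu, norm_smul, hp]
    simp [mul_pow]
  have hgnorm : ∀ v : EuclideanSpace ℝ (Fin m), ‖v‖ ≤ 1 → (g v)^2 = 1 - ‖v‖^2 := by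
    intro v hv
    rw [hg]
    exact Real.sq_sqrt (by nlinarith [norm_nonneg v])
  have hghalf : ∀ v : EuclideanSpace ℝ (Fin m), ‖v‖ ≤ 1/2 → 1/2 ≤ g v := by
    intro v hv
    rw [hg]
    rw [show (1:ℝ)/2 = √(1/4) by rw [show (1:ℝ)/4 = (1/2)^2 by norm_num, Real.sqrt_sq]; norm_num]
    apply Real.sqrt_le_sqrt
    nlinarith [norm_nonneg v]
  -- Lipschitz estimate for F on the ball of radius 1/2
  have hLip : LipschitzOnWith 2 F (Metric.closedBall (0 : EuclideanSpace ℝ (Fin m)) (1/2)) := by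
    apply LipschitzOnWith.of_dist_le_mul
    intro v hv w hw
    rw [Metric.mem_closedBall, dist_zero_right] at hv hw
    have hsub : F v - F w = (g v - g w) • p + (ψ v - ψ w) := by
      rw [hF]; simp only [sub_smul]; abel
    have hmem : ψ v - ψ w ∈ Kp := by
      rw [hψ]
      exact sub_mem (SetLike.coe_mem _) (SetLike.coe_mem _)
    have hψd : ‖ψ v - ψ w‖ = ‖v - w‖ := by
      rw [hψ, ← Submodule.coe_sub, ← map_sub]
      rw [Submodule.norm_coe]
      exact b.repr.symm.norm_map _
    have hgd : (g v - g w)^2 ≤ ‖v - w‖^2 := by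
      have h5 : |‖w‖ - ‖v‖| ≤ ‖v - w‖ :=
        (abs_norm_sub_norm_le w v).trans (le_of_eq (norm_sub_rev w v))
      have h5' : (‖w‖ - ‖v‖)^2 ≤ ‖v - w‖^2 := by
        rw [← sq_abs]; exact pow_le_pow_left₀ (abs_nonneg _) h5 2
      exact sqrt_graph_lip (norm_nonneg v) hv (norm_nonneg w) hw h5'
    have hFd : ‖F v - F w‖^2 = (g v - g w)^2 + ‖v - w‖^2 := by
      rw [hsub, horm _ _ hmem, hψd]
    have hFd2 : ‖F v - F w‖^2 ≤ (2 * ‖v - w‖)^2 := by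
      rw [hFd, show (2 * ‖v - w‖)^2 = 4 * ‖v - w‖^2 by ring]
      linarith [hgd, sq_nonneg ‖v - w‖]
    have h2d : (0:ℝ) ≤ 2 * dist v w := by positivity
    calc dist (F v) (F w) ≤ 2 * dist v w := by
          apply le_of_sq_le_sq _ h2d
          rw [dist_eq_norm, dist_eq_norm]
          exact hFd2
      _ = ((2:ℝ≥0):ℝ) * dist v w := by norm_num
  have hcap : Metric.sphere (0 : EuclideanSpace ℝ (Fin (m+1))) 1 ∩ Metric.closedBall p t ⊆
      F '' (Metric.closedBall (0 : EuclideanSpace ℝ (Fin m)) t) := by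
    rintro z ⟨hz1, hz2⟩
    rw [mem_sphere_zero_iff_norm] at hz1
    rw [Metric.mem_closedBall, dist_eq_norm] at hz2
    set u : Kp := Kp.orthogonalProjectionOnto z with hu
    set v : EuclideanSpace ℝ (Fin m) := b.repr u with hvdef
    set a : ℝ := inner ℝ p z with ha
    have hdecomp : z = a • p + (u : EuclideanSpace ℝ (Fin (m+1))) := by
      have h0 := Submodule.starProjection_add_starProjection_orthogonal (K := ℝ ∙ p) z
      have h1 : (ℝ ∙ p).starProjection z
          = a • p := by
        rw [ha]; exact Submodule.starProjection_unit_singleton ℝ hp z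
      rw [h1] at h0
      exact h0.symm
    have hnormsplit : a^2 + ‖(u : EuclideanSpace ℝ (Fin (m+1)))‖^2 = 1 := by
      have hh := horm a (u : EuclideanSpace ℝ (Fin (m+1))) (SetLike.coe_mem u)
      rw [← hdecomp, hz1] at hh
      linarith [hh]
    have h2a : ‖z - p‖^2 = 2 - 2*a := by
      rw [norm_sub_sq_real, hz1, hp, real_inner_comm, ← ha]
      ring
    have hapos : 7/8 ≤ a := by
      have ht2 : ‖z - p‖^2 ≤ t^2 := pow_le_pow_left₀ (norm_nonneg _) hz2 2
      nlinarith
    have hprojp : Kp.orthogonalProjectionOnto p = 0 :=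
      Submodule.orthogonalProjectionOnto_apply_of_mem_orthogonal
        (Submodule.le_orthogonal_orthogonal _ (Submodule.mem_span_singleton_self p))
    have humapsub : u = Kp.orthogonalProjectionOnto (z - p) := by
      rw [hu, map_sub, hprojp, sub_zero]
    have hunorm : ‖(u : EuclideanSpace ℝ (Fin (m+1)))‖ ≤ t := by
      rw [Submodule.norm_coe, humapsub]
      calc ‖Kp.orthogonalProjectionOnto (z - p)‖
          ≤ ‖Kp.orthogonalProjectionOnto‖ * ‖z - p‖ := ContinuousLinearMap.le_opNorm _ _
        _ ≤ 1 * ‖z - p‖ :=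
            mul_le_mul_of_nonneg_right (Submodule.orthogonalProjectionOnto_norm_le Kp) (norm_nonneg _)
        _ = ‖z - p‖ := one_mul _
        _ ≤ t := hz2
    have hvnorm : ‖v‖ = ‖(u : EuclideanSpace ℝ (Fin (m+1)))‖ := by
      rw [hvdef, b.repr.norm_map, Submodule.norm_coe]
    refine ⟨v, ?_, ?_⟩
    · rw [Metric.mem_closedBall, dist_zero_right, hvnorm]
      exact hunorm
    · have hgv : g v = a := by
        have hv2 : 1 - ‖v‖^2 = a^2 := by
          rw [hvnorm]; linarith [hnormsplit]
        show √(1 - ‖v‖^2) = a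
        rw [hv2]
        exact Real.sqrt_sq (by linarith)
      have hψv : ψ v = (u : EuclideanSpace ℝ (Fin (m+1))) := by
        show ((b.repr.symm (b.repr u) : Kp) : EuclideanSpace ℝ (Fin (m+1))) = _
        rw [LinearIsometryEquiv.symm_apply_apply]
      show g v • p + ψ v = z
      rw [hgv, hψv]
      exact hdecomp.symm
  have hLip' : LipschitzOnWith 2 F (Metric.closedBall (0 : EuclideanSpace ℝ (Fin m)) t) :=
    hLip.mono (Metric.closedBall_subset_closedBall (by linarith))
  calc μH[(m:ℝ)] (Metric.sphere (0 : EuclideanSpace ℝ (Fin (m+1))) 1 ∩ Metric.closedBall p t)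
      ≤ μH[(m:ℝ)] (F '' (Metric.closedBall (0 : EuclideanSpace ℝ (Fin m)) t)) :=
        measure_mono hcap
    _ ≤ ((2:ℝ≥0) : ℝ≥0∞)^(m:ℝ) *
        μH[(m:ℝ)] (Metric.closedBall (0 : EuclideanSpace ℝ (Fin m)) t) :=
        hLip'.hausdorffMeasure_image_le (by positivity)

/-- Lower bound: the Hausdorff measure of the unit sphere dominates the measure of a ball
in one lower dimension. -/
lemma sphere_lower :
    μH[(m:ℝ)] (Metric.closedBall (0 : EuclideanSpace ℝ (Fin m)) 1) ≤
      μH[(m:ℝ)] (Metric.sphere (0 : EuclideanSpace ℝ (Fin (m+1))) 1) := by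
  haveI : Fact (Module.finrank ℝ (EuclideanSpace ℝ (Fin (m+1))) = m + 1) :=
    ⟨finrank_euclideanSpace_fin⟩
  set p : EuclideanSpace ℝ (Fin (m+1)) := EuclideanSpace.single 0 (1:ℝ) with hpdef
  have hp : ‖p‖ = 1 := by rw [hpdef, EuclideanSpace.norm_single]; norm_num
  have hp0 : p ≠ 0 := by intro h; rw [h] at hp; simp at hp
  set Kp : Submodule ℝ (EuclideanSpace ℝ (Fin (m+1))) := (ℝ ∙ p)ᗮ with hKp
  set b : OrthonormalBasis (Fin m) ℝ Kp := OrthonormalBasis.fromOrthogonalSpanSingleton m hp0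
    with hb
  set ψ : EuclideanSpace ℝ (Fin m) → EuclideanSpace ℝ (Fin (m+1)) :=
    fun v => ((b.repr.symm v : Kp) : EuclideanSpace ℝ (Fin (m+1))) with hψ
  set g : EuclideanSpace ℝ (Fin m) → ℝ := fun v => √(1 - ‖v‖^2) with hg
  set prj : EuclideanSpace ℝ (Fin (m+1)) → EuclideanSpace ℝ (Fin m) :=
    fun z => b.repr (Kp.orthogonalProjectionOnto z) with hprj
  have hinner : ∀ x ∈ Kp, (inner ℝ p x : ℝ) = 0 := by
    intro x hx
    exact hx p (Submodule.mem_span_singleton_self p)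
  have horm : ∀ (a : ℝ) (u : EuclideanSpace ℝ (Fin (m+1))), u ∈ Kp →
      ‖a • p + u‖^2 = a^2 + ‖u‖^2 := by
    intro a u hu
    rw [norm_add_sq_real]
    have h1 : (inner ℝ (a • p) u : ℝ) = a * (inner ℝ p u : ℝ) := real_inner_smul_left p u a
    rw [h1, hinner u hu, norm_smul, hp]
    simp [mul_pow]
  have hprojp : Kp.orthogonalProjectionOnto p = 0 :=
    Submodule.orthogonalProjectionOnto_apply_of_mem_orthogonal
      (Submodule.le_orthogonal_orthogonal _ (Submodule.mem_span_singleton_self p))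
  have hprjlip : LipschitzWith 1 prj := by
    apply LipschitzWith.of_dist_le_mul
    intro z z'
    rw [NNReal.coe_one, one_mul, hprj]
    simp only
    rw [dist_eq_norm, ← map_sub, b.repr.norm_map, ← map_sub, dist_eq_norm]
    calc ‖Kp.orthogonalProjectionOnto (z - z')‖
        ≤ ‖Kp.orthogonalProjectionOnto‖ * ‖z - z'‖ := ContinuousLinearMap.le_opNorm _ _
      _ ≤ 1 * ‖z - z'‖ :=
          mul_le_mul_of_nonneg_right (Submodule.orthogonalProjectionOnto_norm_le Kp) (norm_nonneg _)
      _ = ‖z - z'‖ := one_mul _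
  have hsub : Metric.closedBall (0 : EuclideanSpace ℝ (Fin m)) 1 ⊆
      prj '' (Metric.sphere (0 : EuclideanSpace ℝ (Fin (m+1))) 1) := by
    intro v hv
    rw [Metric.mem_closedBall, dist_zero_right] at hv
    set z : EuclideanSpace ℝ (Fin (m+1)) := g v • p + ψ v with hz
    have hgv : (g v)^2 = 1 - ‖v‖^2 := Real.sq_sqrt (by nlinarith [norm_nonneg v])
    have hψmem : ψ v ∈ Kp := SetLike.coe_mem _
    have hznorm : ‖z‖ = 1 := by
      have h1 : ‖z‖^2 = 1 := by
        rw [hz, horm _ _ hψmem, hgv]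
        have : ‖ψ v‖ = ‖v‖ := by
          rw [hψ, Submodule.norm_coe, b.repr.symm.norm_map]
        rw [this]; ring
      rw [← Real.sqrt_sq (norm_nonneg z), h1, Real.sqrt_one]
    refine ⟨z, ?_, ?_⟩
    · rw [mem_sphere_zero_iff_norm]; exact hznorm
    · rw [hprj]
      simp only
      rw [hz, map_add, _root_.map_smul, hprojp, smul_zero, zero_add]
      have : Kp.orthogonalProjectionOnto (ψ v) = b.repr.symm v :=
        Submodule.orthogonalProjectionOnto_mem_subspace_eq_self (b.repr.symm v)
      rw [this, LinearIsometryEquiv.apply_symm_apply]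
  calc μH[(m:ℝ)] (Metric.closedBall (0 : EuclideanSpace ℝ (Fin m)) 1)
      ≤ μH[(m:ℝ)] (prj '' (Metric.sphere (0 : EuclideanSpace ℝ (Fin (m+1))) 1)) :=
        measure_mono hsub
    _ ≤ ((1:ℝ≥0) : ℝ≥0∞)^(m:ℝ) *
        μH[(m:ℝ)] (Metric.sphere (0 : EuclideanSpace ℝ (Fin (m+1))) 1) :=
        hprjlip.hausdorffMeasure_image_le (by positivity) _
    _ = μH[(m:ℝ)] (Metric.sphere (0 : EuclideanSpace ℝ (Fin (m+1))) 1) := by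
        rw [ENNReal.coe_one, ENNReal.one_rpow, one_mul]

/-- Finiteness of the Hausdorff measure of the unit sphere. -/
lemma sphere_meas_lt_top :
    μH[(m:ℝ)] (Metric.sphere (0 : EuclideanSpace ℝ (Fin (m+1))) 1) < ⊤ := by
  obtain ⟨c, hc, hcb⟩ := em_ball_bound m
  have hcpt : IsCompact (Metric.sphere (0 : EuclideanSpace ℝ (Fin (m+1))) 1) :=
    isCompact_sphere 0 1
  have hcover : Metric.sphere (0 : EuclideanSpace ℝ (Fin (m+1))) 1 ⊆
      ⋃ i : (Metric.sphere (0 : EuclideanSpace ℝ (Fin (m+1))) 1),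
        Metric.ball (i : EuclideanSpace ℝ (Fin (m+1))) (1/4) := by
    intro z hz
    exact Set.mem_iUnion.2 ⟨⟨z, hz⟩, Metric.mem_ball_self (by norm_num)⟩
  obtain ⟨s, hs⟩ := hcpt.elim_finite_subcover _ (fun i => Metric.isOpen_ball) hcover
  have hbound : ∀ i : (Metric.sphere (0 : EuclideanSpace ℝ (Fin (m+1))) 1),
      μH[(m:ℝ)] (Metric.sphere (0 : EuclideanSpace ℝ (Fin (m+1))) 1 ∩
        Metric.ball (i : EuclideanSpace ℝ (Fin (m+1))) (1/4)) < ⊤ := by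
    intro i
    have h1 : Metric.sphere (0 : EuclideanSpace ℝ (Fin (m+1))) 1 ∩
        Metric.ball (i : EuclideanSpace ℝ (Fin (m+1))) (1/4) ⊆
        Metric.sphere (0 : EuclideanSpace ℝ (Fin (m+1))) 1 ∩
        Metric.closedBall (i : EuclideanSpace ℝ (Fin (m+1))) (1/4) :=
      Set.inter_subset_inter_right _ Metric.ball_subset_closedBall
    have h2 := cap_bound m (i : EuclideanSpace ℝ (Fin (m+1)))
      (mem_sphere_zero_iff_norm.1 i.2) (t := 1/4) (by norm_num) (by norm_num)
    calc μH[(m:ℝ)] (Metric.sphere (0 : EuclideanSpace ℝ (Fin (m+1))) 1 ∩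
          Metric.ball (i : EuclideanSpace ℝ (Fin (m+1))) (1/4))
        ≤ _ := measure_mono h1
      _ ≤ ((2:ℝ≥0) : ℝ≥0∞)^(m:ℝ) *
          μH[(m:ℝ)] (Metric.closedBall (0 : EuclideanSpace ℝ (Fin m)) (1/4)) := h2
      _ ≤ ((2:ℝ≥0) : ℝ≥0∞)^(m:ℝ) * (c * ENNReal.ofReal (1/4) ^ m) := by
          gcongr
          exact hcb (1/4) (by norm_num)
      _ < ⊤ := by
          apply ENNReal.mul_lt_top
          · exact ENNReal.rpow_lt_top_of_nonneg (by positivity) ENNReal.coe_ne_top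
          · exact ENNReal.mul_lt_top hc.lt_top
              (ENNReal.pow_lt_top ENNReal.ofReal_lt_top)
  calc μH[(m:ℝ)] (Metric.sphere (0 : EuclideanSpace ℝ (Fin (m+1))) 1)
      ≤ μH[(m:ℝ)] (⋃ i ∈ s, Metric.sphere (0 : EuclideanSpace ℝ (Fin (m+1))) 1 ∩
        Metric.ball (i : EuclideanSpace ℝ (Fin (m+1))) (1/4)) := by
        apply measure_mono
        intro z hz
        obtain ⟨i, his, hi⟩ := Set.mem_iUnion₂.1 (hs hz)
        exact Set.mem_iUnion₂.2 ⟨i, his, hz, hi⟩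
    _ ≤ ∑ i ∈ s, μH[(m:ℝ)] (Metric.sphere (0 : EuclideanSpace ℝ (Fin (m+1))) 1 ∩
        Metric.ball (i : EuclideanSpace ℝ (Fin (m+1))) (1/4)) := measure_biUnion_finset_le _ _
    _ < ⊤ := ENNReal.sum_lt_top.2 fun i _ => hbound i

/-- Uniform cap bound on the unit sphere: arbitrary centers and radii. -/
lemma unit_cap_bound :
    ∃ A : ℝ≥0∞, A ≠ ⊤ ∧ ∀ (w : EuclideanSpace ℝ (Fin (m+1))) (τ : ℝ), 0 < τ →
      μH[(m:ℝ)] (Metric.sphere (0 : EuclideanSpace ℝ (Fin (m+1))) 1 ∩ Metric.closedBall w τ) ≤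
        A * ENNReal.ofReal τ ^ m := by
  obtain ⟨c, hc, hcb⟩ := em_ball_bound m
  set M : ℝ≥0∞ := μH[(m:ℝ)] (Metric.sphere (0 : EuclideanSpace ℝ (Fin (m+1))) 1) with hM
  have hMt : M < ⊤ := sphere_meas_lt_top m
  set A : ℝ≥0∞ := M * 4 ^ m + ((2:ℝ≥0) : ℝ≥0∞)^(m:ℝ) * c * 2 ^ m with hA
  refine ⟨A, ?_, ?_⟩
  · rw [hA]
    apply ENNReal.add_ne_top.2
    constructor
    · exact (ENNReal.mul_lt_top hMt (ENNReal.pow_lt_top (by norm_num))).ne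
    · exact (ENNReal.mul_lt_top (ENNReal.mul_lt_top
        (ENNReal.rpow_lt_top_of_nonneg (by positivity) ENNReal.coe_ne_top) hc.lt_top)
        (ENNReal.pow_lt_top (by norm_num))).ne
  · intro w τ hτ
    rcases le_or_gt (1/4 : ℝ) τ with hτ4 | hτ4
    · -- large radius : use the total measure
      have h1 : (1:ℝ≥0∞) ≤ 4 * ENNReal.ofReal τ := by
        rw [show (4:ℝ≥0∞) = ENNReal.ofReal 4 by norm_num, ← ENNReal.ofReal_mul (by norm_num)]
        rw [ENNReal.one_le_ofReal]
        linarith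
      have h2 : (1:ℝ≥0∞) ≤ (4 * ENNReal.ofReal τ) ^ m := one_le_pow_of_one_le' h1 m
      calc μH[(m:ℝ)] (Metric.sphere (0 : EuclideanSpace ℝ (Fin (m+1))) 1 ∩
            Metric.closedBall w τ)
          ≤ M := measure_mono Set.inter_subset_left
        _ = M * 1 := (mul_one _).symm
        _ ≤ M * (4 * ENNReal.ofReal τ) ^ m := by gcongr
        _ = M * 4 ^ m * ENNReal.ofReal τ ^ m := by rw [mul_pow]; ring
        _ ≤ A * ENNReal.ofReal τ ^ m := by
            gcongr
            rw [hA]; exact le_self_add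
    · -- small radius : reduce to a cap centered on the sphere
      rcases Set.eq_empty_or_nonempty (Metric.sphere (0 : EuclideanSpace ℝ (Fin (m+1))) 1 ∩
        Metric.closedBall w τ) with hemp | ⟨q, hq1, hq2⟩
      · rw [hemp, measure_empty]; exact zero_le
      · have hsub : Metric.sphere (0 : EuclideanSpace ℝ (Fin (m+1))) 1 ∩
            Metric.closedBall w τ ⊆
            Metric.sphere (0 : EuclideanSpace ℝ (Fin (m+1))) 1 ∩
            Metric.closedBall q (2*τ) := by
          rintro z ⟨hz1, hz2⟩
          refine ⟨hz1, ?_⟩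
          rw [Metric.mem_closedBall] at *
          calc dist z q ≤ dist z w + dist w q := dist_triangle _ _ _
            _ ≤ τ + τ := add_le_add hz2 (by rw [dist_comm]; exact hq2)
            _ = 2*τ := by ring
        have h2 := cap_bound m q (mem_sphere_zero_iff_norm.1 hq1) (t := 2*τ)
          (by linarith) (by linarith)
        calc μH[(m:ℝ)] (Metric.sphere (0 : EuclideanSpace ℝ (Fin (m+1))) 1 ∩
              Metric.closedBall w τ)
            ≤ _ := measure_mono hsub
          _ ≤ ((2:ℝ≥0) : ℝ≥0∞)^(m:ℝ) *
              μH[(m:ℝ)] (Metric.closedBall (0 : EuclideanSpace ℝ (Fin m)) (2*τ)) := h2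
          _ ≤ ((2:ℝ≥0) : ℝ≥0∞)^(m:ℝ) * (c * ENNReal.ofReal (2*τ) ^ m) := by
              gcongr
              exact hcb (2*τ) (by linarith)
          _ = ((2:ℝ≥0) : ℝ≥0∞)^(m:ℝ) * c * 2 ^ m * ENNReal.ofReal τ ^ m := by
              rw [ENNReal.ofReal_mul (by norm_num), mul_pow]
              rw [show ENNReal.ofReal 2 = 2 by norm_num]
              ring
          _ ≤ A * ENNReal.ofReal τ ^ m := by
              gcongr
              rw [hA]; exact le_add_self

open scoped Pointwise in
/-- Scaling the unit sphere. -/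
lemma smul_unit_sphere {E : Type*} [NormedAddCommGroup E] [NormedSpace ℝ E] {r : ℝ}
    (hr : 0 < r) : r • (Metric.sphere (0:E) 1) = Metric.sphere (0:E) r := by
  ext z
  constructor
  · rintro ⟨w, hw, rfl⟩
    rw [mem_sphere_zero_iff_norm] at *
    rw [norm_smul, hw, Real.norm_eq_abs, abs_of_pos hr, mul_one]
  · intro hz
    rw [mem_sphere_zero_iff_norm] at hz
    refine ⟨r⁻¹ • z, ?_, smul_inv_smul₀ hr.ne' z⟩
    rw [mem_sphere_zero_iff_norm, norm_smul, hz, Real.norm_eq_abs, abs_of_pos (by positivity)]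
    field_simp

/-- The Hausdorff measure of the sphere of radius `r`. -/
lemma sphere_r_meas {r : ℝ} (hr : 0 < r) :
    μH[(m:ℝ)] (Metric.sphere (0 : EuclideanSpace ℝ (Fin (m+1))) r) =
      ENNReal.ofReal r ^ m *
        μH[(m:ℝ)] (Metric.sphere (0 : EuclideanSpace ℝ (Fin (m+1))) 1) := by
  rw [← smul_unit_sphere (E := EuclideanSpace ℝ (Fin (m+1))) hr,
    Measure.hausdorffMeasure_smul₀ (by positivity) hr.ne']
  rw [ENNReal.smul_def, smul_eq_mul]
  congr 1
  rw [ENNReal.coe_rpow_of_nonneg _ (by positivity), show ((‖r‖₊ : ℝ≥0) : ℝ≥0∞) = ENNReal.ofReal r from Real.enorm_eq_ofReal hr.le,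
    ENNReal.rpow_natCast]

open scoped Pointwise in
/-- Uniform cap bound for spheres of any radius. -/
lemma cap_r_bound :
    ∃ A : ℝ≥0∞, A ≠ ⊤ ∧ ∀ (r : ℝ), 0 < r → ∀ (w : EuclideanSpace ℝ (Fin (m+1))) (ρ : ℝ),
      0 < ρ →
      μH[(m:ℝ)] (Metric.sphere (0 : EuclideanSpace ℝ (Fin (m+1))) r ∩ Metric.closedBall w ρ) ≤
        A * ENNReal.ofReal ρ ^ m := by
  obtain ⟨A, hA, hcap⟩ := unit_cap_bound m
  refine ⟨A, hA, ?_⟩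
  intro r hr w ρ hρ
  have hsub : Metric.sphere (0 : EuclideanSpace ℝ (Fin (m+1))) r ∩ Metric.closedBall w ρ ⊆
      r • (Metric.sphere (0 : EuclideanSpace ℝ (Fin (m+1))) 1 ∩
        Metric.closedBall (r⁻¹ • w) (ρ/r)) := by
    rintro z ⟨hz1, hz2⟩
    rw [mem_sphere_zero_iff_norm] at hz1
    refine ⟨r⁻¹ • z, ⟨?_, ?_⟩, smul_inv_smul₀ hr.ne' z⟩
    · rw [mem_sphere_zero_iff_norm, norm_smul, hz1, Real.norm_eq_abs,
        abs_of_pos (by positivity)]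
      field_simp
    · rw [Metric.mem_closedBall] at hz2 ⊢
      rw [dist_smul₀, Real.norm_eq_abs, abs_of_pos (by positivity)]
      rw [div_eq_inv_mul]
      exact mul_le_mul_of_nonneg_left hz2 (by positivity)
  calc μH[(m:ℝ)] (Metric.sphere (0 : EuclideanSpace ℝ (Fin (m+1))) r ∩ Metric.closedBall w ρ)
      ≤ μH[(m:ℝ)] (r • (Metric.sphere (0 : EuclideanSpace ℝ (Fin (m+1))) 1 ∩
        Metric.closedBall (r⁻¹ • w) (ρ/r))) := measure_mono hsub
    _ = ENNReal.ofReal r ^ m * μH[(m:ℝ)] (Metric.sphere (0 : EuclideanSpace ℝ (Fin (m+1))) 1 ∩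
        Metric.closedBall (r⁻¹ • w) (ρ/r)) := by
        rw [Measure.hausdorffMeasure_smul₀ (by positivity) hr.ne', ENNReal.smul_def, smul_eq_mul]
        congr 1
        rw [ENNReal.coe_rpow_of_nonneg _ (by positivity), show ((‖r‖₊ : ℝ≥0) : ℝ≥0∞) = ENNReal.ofReal r from Real.enorm_eq_ofReal hr.le,
          ENNReal.rpow_natCast]
    _ ≤ ENNReal.ofReal r ^ m * (A * ENNReal.ofReal (ρ/r) ^ m) := by
        gcongr
        exact hcap _ _ (by positivity)
    _ = A * (ENNReal.ofReal r * ENNReal.ofReal (ρ/r)) ^ m := by rw [mul_pow]; ring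
    _ = A * ENNReal.ofReal ρ ^ m := by
        rw [← ENNReal.ofReal_mul hr.le, mul_div_cancel₀ _ hr.ne']

/-- Layer-cake bound for the integral of `‖z - y‖⁻¹` over spheres. -/
lemma lint_inv_bound (hm : 2 ≤ m) :
    ∃ B : ℝ≥0∞, B ≠ ⊤ ∧ ∀ (r : ℝ), 0 < r → ∀ (y : EuclideanSpace ℝ (Fin (m+1))),
      ∫⁻ z in Metric.sphere (0 : EuclideanSpace ℝ (Fin (m+1))) r,
          ENNReal.ofReal (‖z - y‖⁻¹) ∂μH[(m:ℝ)] ≤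
        B * ENNReal.ofReal r ^ (m-1) := by
  obtain ⟨A, hA, hcap⟩ := cap_r_bound m
  set M : ℝ≥0∞ := μH[(m:ℝ)] (Metric.sphere (0 : EuclideanSpace ℝ (Fin (m+1))) 1) with hMdef
  have hMt : M < ⊤ := sphere_meas_lt_top m
  refine ⟨M + A, ENNReal.add_ne_top.2 ⟨hMt.ne, hA⟩, ?_⟩
  intro r hr y
  have hrpos : (0:ℝ) < r⁻¹ := by positivity
  have hm' : (2:ℝ) ≤ (m:ℝ) := by exact_mod_cast hm
  have hT : μH[(m:ℝ)] (Metric.sphere (0 : EuclideanSpace ℝ (Fin (m+1))) r) =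
      ENNReal.ofReal r ^ m * M := sphere_r_meas m hr
  have hTfin : μH[(m:ℝ)] (Metric.sphere (0 : EuclideanSpace ℝ (Fin (m+1))) r) < ⊤ := by
    rw [hT]
    exact ENNReal.mul_lt_top (ENNReal.pow_lt_top ENNReal.ofReal_lt_top) hMt
  set μ' : Measure (EuclideanSpace ℝ (Fin (m+1))) :=
    μH[(m:ℝ)].restrict (Metric.sphere (0 : EuclideanSpace ℝ (Fin (m+1))) r) with hμ'
  haveI : IsFiniteMeasure μ' := by
    constructor
    rw [hμ', Measure.restrict_apply_univ]
    exact hTfin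
  have hmble : Measurable (fun z : EuclideanSpace ℝ (Fin (m+1)) => ‖z - y‖⁻¹) :=
    ((measurable_id.sub_const y).norm).inv
  have hlc := lintegral_eq_lintegral_meas_lt μ'
    (f := fun z => ‖z - y‖⁻¹) (Eventually.of_forall fun z => by positivity) hmble.aemeasurable
  rw [show (∫⁻ z in Metric.sphere (0 : EuclideanSpace ℝ (Fin (m+1))) r,
      ENNReal.ofReal (‖z - y‖⁻¹) ∂μH[(m:ℝ)]) = ∫⁻ z, ENNReal.ofReal (‖z - y‖⁻¹) ∂μ' from rfl,
    hlc]
  have hsplit : Set.Ioi (0:ℝ) = Set.Ioc 0 r⁻¹ ∪ Set.Ioi r⁻¹ :=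
    (Set.Ioc_union_Ioi_eq_Ioi hrpos.le).symm
  rw [hsplit, lintegral_union measurableSet_Ioi (Set.Ioc_disjoint_Ioi le_rfl)]
  have hp1 : ∫⁻ t in Set.Ioc (0:ℝ) r⁻¹, μ' {a | t < ‖a - y‖⁻¹} ≤
      M * ENNReal.ofReal r ^ (m-1) := by
    have hb : ∀ t : ℝ, μ' {a | t < ‖a - y‖⁻¹} ≤ ENNReal.ofReal r ^ m * M := by
      intro t
      calc μ' {a | t < ‖a - y‖⁻¹} ≤ μ' Set.univ := measure_mono (Set.subset_univ _)
        _ = _ := by rw [hμ', Measure.restrict_apply_univ, hT]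
    calc ∫⁻ t in Set.Ioc (0:ℝ) r⁻¹, μ' {a | t < ‖a - y‖⁻¹}
        ≤ ∫⁻ _ in Set.Ioc (0:ℝ) r⁻¹, (ENNReal.ofReal r ^ m * M) :=
          lintegral_mono fun t => hb t
      _ = (ENNReal.ofReal r ^ m * M) * volume (Set.Ioc (0:ℝ) r⁻¹) := setLIntegral_const _ _
      _ = (ENNReal.ofReal r ^ m * M) * ENNReal.ofReal r⁻¹ := by
          rw [Real.volume_Ioc, sub_zero]
      _ = M * ENNReal.ofReal r ^ (m-1) := by
          rw [ENNReal.ofReal_inv_of_pos hr]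
          rw [show m = (m-1)+1 from (Nat.sub_add_cancel (by omega)).symm, pow_succ]
          rw [show m - 1 + 1 - 1 = m - 1 from by omega]
          rw [mul_comm (ENNReal.ofReal r ^ (m-1) * ENNReal.ofReal r) M, mul_assoc, mul_assoc,
            ENNReal.mul_inv_cancel (by simp [hr]) ENNReal.ofReal_ne_top, mul_one]
  have hp2 : ∫⁻ t in Set.Ioi r⁻¹, μ' {a | t < ‖a - y‖⁻¹} ≤
      A * ENNReal.ofReal r ^ (m-1) := by
    have hb : ∀ t ∈ Set.Ioi r⁻¹, μ' {a | t < ‖a - y‖⁻¹} ≤ A * ENNReal.ofReal t⁻¹ ^ m := by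
      intro t ht
      rw [Set.mem_Ioi] at ht
      have htpos : (0:ℝ) < t := lt_trans hrpos ht
      have hsubset : {a : EuclideanSpace ℝ (Fin (m+1)) | t < ‖a - y‖⁻¹} ⊆
          Metric.closedBall y t⁻¹ := by
        intro a ha
        rw [Set.mem_setOf_eq] at ha
        have hne : ‖a - y‖ ≠ 0 := by
          intro h0
          rw [h0] at ha
          simp at ha
          linarith
        have hpos : 0 < ‖a - y‖ := lt_of_le_of_ne (norm_nonneg _) (Ne.symm hne)
        rw [Metric.mem_closedBall, dist_eq_norm]
        rw [lt_inv_comm₀ htpos hpos] at ha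
        exact ha.le
      calc μ' {a | t < ‖a - y‖⁻¹} ≤ μ' (Metric.closedBall y t⁻¹) := measure_mono hsubset
        _ = μH[(m:ℝ)] (Metric.sphere (0 : EuclideanSpace ℝ (Fin (m+1))) r ∩
            Metric.closedBall y t⁻¹) := by
            rw [hμ', Measure.restrict_apply measurableSet_closedBall, Set.inter_comm]
        _ ≤ A * ENNReal.ofReal t⁻¹ ^ m := hcap r hr y t⁻¹ (by positivity)
    have hint : IntegrableOn (fun t : ℝ => t ^ (-(m:ℝ))) (Set.Ioi r⁻¹) :=
      integrableOn_Ioi_rpow_of_lt (by push_cast; linarith [hm']) hrpos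
    calc ∫⁻ t in Set.Ioi r⁻¹, μ' {a | t < ‖a - y‖⁻¹}
        ≤ ∫⁻ t in Set.Ioi r⁻¹, A * ENNReal.ofReal t⁻¹ ^ m :=
          setLIntegral_mono' measurableSet_Ioi hb
      _ = A * ∫⁻ t in Set.Ioi r⁻¹, ENNReal.ofReal t⁻¹ ^ m := by
          rw [lintegral_const_mul' A _ hA]
      _ = A * ∫⁻ t in Set.Ioi r⁻¹, ENNReal.ofReal (t ^ (-(m:ℝ))) := by
          congr 1
          apply setLIntegral_congr_fun measurableSet_Ioi
          intro t ht
          rw [Set.mem_Ioi] at ht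
          have htpos : (0:ℝ) < t := lt_trans hrpos ht
          beta_reduce
          rw [← ENNReal.ofReal_pow (by positivity)]
          congr 1
          rw [Real.rpow_neg htpos.le, Real.rpow_natCast, ← inv_pow]
      _ = A * ENNReal.ofReal (∫ t in Set.Ioi r⁻¹, t ^ (-(m:ℝ))) := by
          congr 1
          rw [← ofReal_integral_eq_lintegral_ofReal hint]
          filter_upwards [ae_restrict_mem measurableSet_Ioi] with t ht
          exact Real.rpow_nonneg (le_of_lt (lt_trans hrpos ht)) _
      _ ≤ A * ENNReal.ofReal r ^ (m-1) := by
          gcongr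
          rw [integral_Ioi_rpow_of_lt (by push_cast; linarith [hm']) hrpos]
          have hval : -(r⁻¹) ^ (-(m:ℝ) + 1) / (-(m:ℝ) + 1) =
              (r⁻¹) ^ (1 - (m:ℝ)) / ((m:ℝ) - 1) := by
            rw [show -(m:ℝ) + 1 = 1 - (m:ℝ) by ring]
            rw [div_eq_div_iff (by push_cast; nlinarith [hm'])
              (by push_cast; nlinarith [hm'])]
            ring
          rw [hval]
          have hrw : (r⁻¹) ^ ((1:ℝ) - (m:ℝ)) = r ^ ((m:ℝ) - 1) := by
            rw [← Real.rpow_neg_one r, ← Real.rpow_mul hr.le]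
            rw [show (-1 : ℝ) * (1 - (m:ℝ)) = (m:ℝ) - 1 by ring]
          rw [hrw]
          have hdiv : r ^ ((m:ℝ) - 1) / ((m:ℝ) - 1) ≤ r ^ ((m:ℝ) - 1) := by
            apply div_le_self (Real.rpow_nonneg hr.le _)
            push_cast
            linarith [hm']
          calc ENNReal.ofReal (r ^ ((m:ℝ) - 1) / ((m:ℝ) - 1))
              ≤ ENNReal.ofReal (r ^ ((m:ℝ) - 1)) := ENNReal.ofReal_le_ofReal hdiv
            _ = ENNReal.ofReal r ^ (m-1) := by
                rw [show (m:ℝ) - 1 = ((m - 1 : ℕ) : ℝ) from by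
                  push_cast [Nat.cast_sub (by omega : 1 ≤ m)]; ring]
                rw [Real.rpow_natCast, ENNReal.ofReal_pow hr.le]
  calc (∫⁻ t in Set.Ioc (0:ℝ) r⁻¹, μ' {a | t < ‖a - y‖⁻¹}) +
        ∫⁻ t in Set.Ioi r⁻¹, μ' {a | t < ‖a - y‖⁻¹}
      ≤ M * ENNReal.ofReal r ^ (m-1) + A * ENNReal.ofReal r ^ (m-1) := add_le_add hp1 hp2
    _ = (M + A) * ENNReal.ofReal r ^ (m-1) := (add_mul _ _ _).symm

end SphereAux

/-- Proposition 2.1 (i): for every `n ≥ 3` the spherical averages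
`⨍_{∂B_{|x|}(0)} ||z|² − |y|²| / |z − y|² dH^{n−1}(z)` are bounded uniformly in
`x ≠ 0` and `y ≠ 0`. -/
theorem sphere_average_kernel_bound
    (n : ℕ) (hn : 3 ≤ n) :
    ∃ C : ℝ, 0 < C ∧ ∀ x y : EuclideanSpace ℝ (Fin n), x ≠ 0 → y ≠ 0 →
      (μH[(n : ℝ) - 1] (Metric.sphere (0 : EuclideanSpace ℝ (Fin n)) ‖x‖)).toReal⁻¹ *
        ∫ z in Metric.sphere (0 : EuclideanSpace ℝ (Fin n)) ‖x‖,
          |‖z‖ ^ 2 - ‖y‖ ^ 2| / ‖z - y‖ ^ 2 ∂μH[(n : ℝ) - 1] ≤ C := by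
  obtain ⟨m, rfl⟩ : ∃ m, n = m + 1 := ⟨n - 1, by omega⟩
  have hm : 2 ≤ m := by omega
  have hd : ((m + 1 : ℕ) : ℝ) - 1 = ((m : ℕ) : ℝ) := by push_cast; ring
  obtain ⟨B, hB, hJ⟩ := lint_inv_bound m hm
  set M : ℝ≥0∞ := μH[(m:ℝ)] (Metric.sphere (0 : EuclideanSpace ℝ (Fin (m+1))) 1) with hMdef
  have hMt : M < ⊤ := sphere_meas_lt_top m
  have hM0 : 0 < M := lt_of_lt_of_le (em_ball_pos m) (sphere_lower m)
  have hMr : 0 < M.toReal := ENNReal.toReal_pos hM0.ne' hMt.ne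
  set C : ℝ := 3 + (3 * B.toReal) / M.toReal with hC
  have hBr : 0 ≤ B.toReal := ENNReal.toReal_nonneg
  have hC0 : 0 < C := by positivity
  refine ⟨C, hC0, ?_⟩
  intro x y hx hy
  rw [hd]
  set r : ℝ := ‖x‖ with hrdef
  have hrpos : 0 < r := norm_pos_iff.2 hx
  set s : ℝ := ‖y‖ with hsdef
  have hspos : 0 < s := norm_pos_iff.2 hy
  set S : Set (EuclideanSpace ℝ (Fin (m+1))) :=
    Metric.sphere (0 : EuclideanSpace ℝ (Fin (m+1))) r with hSdef
  have hT : μH[(m:ℝ)] S = ENNReal.ofReal r ^ m * M := sphere_r_meas m hrpos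
  have hTfin : μH[(m:ℝ)] S < ⊤ := by
    rw [hT]
    exact ENNReal.mul_lt_top (ENNReal.pow_lt_top ENNReal.ofReal_lt_top) hMt
  have hTr : (μH[(m:ℝ)] S).toReal = r^m * M.toReal := by
    rw [hT, ENNReal.toReal_mul, ENNReal.toReal_pow, ENNReal.toReal_ofReal hrpos.le]
  have hTpos : 0 < (μH[(m:ℝ)] S).toReal := by rw [hTr]; positivity
  set f : EuclideanSpace ℝ (Fin (m+1)) → ℝ := fun z => |‖z‖ ^ 2 - ‖y‖ ^ 2| / ‖z - y‖ ^ 2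
    with hfdef
  have hfmble : Measurable f := by
    apply Measurable.div
    · exact (((continuous_norm.pow 2).sub continuous_const).abs).measurable
    · exact (((continuous_id.sub continuous_const).norm).pow 2).measurable
  have hfnonneg : ∀ z, 0 ≤ f z := fun z => by positivity
  rcases le_or_gt (2*r) s with hcase | hcase
  · -- the center is far away : pointwise bound by 3
    have hpt : ∀ z ∈ S, ‖f z‖ ≤ 3 := by
      intro z hz
      rw [hSdef, mem_sphere_zero_iff_norm] at hz
      have h1 : s - r ≤ ‖z - y‖ := by
        calc s - r = ‖y‖ - ‖z‖ := by rw [hz]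
          _ ≤ ‖y - z‖ := norm_sub_norm_le y z
          _ = ‖z - y‖ := norm_sub_rev y z
      have h2 : (0:ℝ) < s - r := by linarith
      have h3 : (s - r)^2 ≤ ‖z - y‖^2 := pow_le_pow_left₀ h2.le h1 2
      have habs : |‖z‖ ^ 2 - ‖y‖ ^ 2| = s^2 - r^2 := by
        rw [hz, ← hsdef, abs_of_nonpos (by nlinarith)]
        ring
      have hfz : f z = (s^2 - r^2) / ‖z - y‖^2 := by rw [hfdef]; simp only; rw [habs]
      rw [Real.norm_eq_abs, abs_of_nonneg (hfnonneg z), hfz,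
        div_le_iff₀ (by nlinarith)]
      nlinarith
    have hb := norm_setIntegral_le_of_norm_le_const (μ := μH[(m:ℝ)]) (s := S)
      hTfin hpt
    have habs : ∫ z in S, f z ∂μH[(m:ℝ)] ≤ 3 * (μH[(m:ℝ)] S).toReal :=
      le_trans (le_abs_self _) (by rw [← Real.norm_eq_abs]; exact hb)
    calc (μH[(m:ℝ)] S).toReal⁻¹ * ∫ z in S, f z ∂μH[(m:ℝ)]
        ≤ (μH[(m:ℝ)] S).toReal⁻¹ * (3 * (μH[(m:ℝ)] S).toReal) :=
          mul_le_mul_of_nonneg_left habs (inv_nonneg.2 ENNReal.toReal_nonneg)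
      _ = 3 := by
          rw [mul_comm 3 _, ← mul_assoc, inv_mul_cancel₀ hTpos.ne', one_mul]
      _ ≤ C := by
          rw [hC]
          have : 0 ≤ 3 * B.toReal / M.toReal := by positivity
          linarith
  · -- the center is nearby : integral bound via the layer-cake estimate
    have hpt : ∀ᵐ z ∂(μH[(m:ℝ)].restrict S),
        ENNReal.ofReal (f z) ≤ ENNReal.ofReal (3*r) * ENNReal.ofReal (‖z - y‖⁻¹) := by
      filter_upwards [ae_restrict_mem (isClosed_sphere.measurableSet)] with z hz
      rw [hSdef, mem_sphere_zero_iff_norm] at hz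
      by_cases hzy : z = y
      · have : f z = 0 := by
          rw [hfdef]; simp only; rw [hzy]; simp
        rw [this, ENNReal.ofReal_zero]
        exact zero_le
      · have hdpos : 0 < ‖z - y‖ := by
          rw [norm_pos_iff]
          exact sub_ne_zero_of_ne hzy
        have hnum : |‖z‖ ^ 2 - ‖y‖ ^ 2| ≤ 3 * r * ‖z - y‖ := by
          rw [hz, ← hsdef]
          have h1 : |r - s| ≤ ‖z - y‖ := by
            calc |r - s| = |‖z‖ - ‖y‖| := by rw [hz, ← hsdef]
              _ ≤ ‖z - y‖ := abs_norm_sub_norm_le z y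
          have h2 : |r^2 - s^2| = |r - s| * (r + s) := by
            rw [show r^2 - s^2 = (r - s) * (r + s) by ring, abs_mul,
              abs_of_nonneg (show (0:ℝ) ≤ r + s by linarith)]
          rw [h2]
          calc |r - s| * (r + s) ≤ ‖z - y‖ * (3*r) :=
              mul_le_mul h1 (by linarith) (by linarith) (norm_nonneg _)
            _ = 3 * r * ‖z - y‖ := by ring
        have hfle : f z ≤ 3 * r * ‖z - y‖⁻¹ := by
          rw [hfdef]
          simp only
          rw [div_le_iff₀ (by positivity)]
          calc |‖z‖ ^ 2 - ‖y‖ ^ 2| ≤ 3 * r * ‖z - y‖ := hnum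
            _ = 3 * r * ‖z - y‖⁻¹ * ‖z - y‖ ^ 2 := by
                field_simp
        calc ENNReal.ofReal (f z) ≤ ENNReal.ofReal (3 * r * ‖z - y‖⁻¹) :=
            ENNReal.ofReal_le_ofReal hfle
          _ = ENNReal.ofReal (3*r) * ENNReal.ofReal (‖z - y‖⁻¹) :=
            ENNReal.ofReal_mul (by positivity)
    have hup : ∫⁻ z in S, ENNReal.ofReal (f z) ∂μH[(m:ℝ)] ≤
        ENNReal.ofReal (3*r) * (B * ENNReal.ofReal r ^ (m-1)) := by
      calc ∫⁻ z in S, ENNReal.ofReal (f z) ∂μH[(m:ℝ)]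
          ≤ ∫⁻ z in S, ENNReal.ofReal (3*r) * ENNReal.ofReal (‖z - y‖⁻¹) ∂μH[(m:ℝ)] :=
            lintegral_mono_ae hpt
        _ = ENNReal.ofReal (3*r) *
            ∫⁻ z in S, ENNReal.ofReal (‖z - y‖⁻¹) ∂μH[(m:ℝ)] :=
            lintegral_const_mul' _ _ ENNReal.ofReal_ne_top
        _ ≤ ENNReal.ofReal (3*r) * (B * ENNReal.ofReal r ^ (m-1)) := by
            gcongr
            exact hJ r hrpos y
    have heq : ∫ z in S, f z ∂μH[(m:ℝ)] =
        (∫⁻ z in S, ENNReal.ofReal (f z) ∂μH[(m:ℝ)]).toReal :=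
      integral_eq_lintegral_of_nonneg_ae (Eventually.of_forall hfnonneg)
        (hfmble.aestronglyMeasurable.restrict)
    have hfin : ENNReal.ofReal (3*r) * (B * ENNReal.ofReal r ^ (m-1)) ≠ ⊤ :=
      ENNReal.mul_ne_top ENNReal.ofReal_ne_top
        (ENNReal.mul_ne_top hB (ENNReal.pow_ne_top ENNReal.ofReal_ne_top))
    have hIle : ∫ z in S, f z ∂μH[(m:ℝ)] ≤ 3 * B.toReal * r^m := by
      rw [heq]
      calc (∫⁻ z in S, ENNReal.ofReal (f z) ∂μH[(m:ℝ)]).toReal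
          ≤ (ENNReal.ofReal (3*r) * (B * ENNReal.ofReal r ^ (m-1))).toReal :=
            ENNReal.toReal_mono hfin hup
        _ = 3 * B.toReal * r^m := by
            rw [ENNReal.toReal_mul, ENNReal.toReal_mul, ENNReal.toReal_pow,
              ENNReal.toReal_ofReal (by positivity), ENNReal.toReal_ofReal hrpos.le]
            have hrm : r * r^(m-1) = r^m := by
              rw [← pow_succ', Nat.sub_add_cancel (by omega)]
            calc 3 * r * (B.toReal * r^(m-1)) = 3 * B.toReal * (r * r^(m-1)) := by ring
              _ = 3 * B.toReal * r^m := by rw [hrm]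
    calc (μH[(m:ℝ)] S).toReal⁻¹ * ∫ z in S, f z ∂μH[(m:ℝ)]
        ≤ (μH[(m:ℝ)] S).toReal⁻¹ * (3 * B.toReal * r^m) :=
          mul_le_mul_of_nonneg_left hIle (inv_nonneg.2 ENNReal.toReal_nonneg)
      _ = 3 * B.toReal / M.toReal := by
          rw [hTr]
          have h1 : r^m ≠ 0 := by positivity
          field_simp
      _ ≤ C := by
          rw [hC]
          linarith
end

section
/- For every integer n ≥ 4 there is a constant C > 0 such that for all x, y ∈ ℝⁿ with x ≠ 0 and y ≠ 0, (|x|² + |y|²) · (1 / H^{n−1}(∂B_{|x|}(0))) ∫_{∂B_{|x|}(0)} |z − y|^{−2} dH^{n−1}(z) ≤ C. -/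
open MeasureTheory Filter Metric Real Topology
open Set
open scoped NNReal ENNReal Pointwise

namespace SphereAvg
variable {m : ℕ}

/-- Hausdorff measure on Euclidean space is bounded by a constant times the pi-volume
of the image under the canonical equiv. -/
lemma hausdorff_le_pi_volume (m : ℕ) :
    ∃ c : ℝ≥0∞, c ≠ ∞ ∧ ∀ A : Set (EuclideanSpace ℝ (Fin m)),
      μH[(m:ℝ)] A ≤ c * volume ((WithLp.equiv 2 (Fin m → ℝ)) '' A) := by
  set κ : ℝ≥0 := (m : ℝ≥0) ^ (2⁻¹:ℝ) with hκ
  refine ⟨(κ : ℝ≥0∞) ^ (m:ℝ), ENNReal.rpow_ne_top_of_nonneg (Nat.cast_nonneg m) ENNReal.coe_ne_top, fun A => ?_⟩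
  have hL : LipschitzWith κ ((WithLp.equiv 2 (Fin m → ℝ)).symm) := by
    intro x y
    have h := PiLp.antilipschitzWith_ofLp 2 (fun _ : Fin m => ℝ)
      ((WithLp.equiv 2 (Fin m → ℝ)).symm x) ((WithLp.equiv 2 (Fin m → ℝ)).symm y)
    simpa using h
  have h2 := hL.hausdorffMeasure_image_le (d := (m:ℝ)) (Nat.cast_nonneg m)
      ((WithLp.equiv 2 (Fin m → ℝ)) '' A)
  have h3 : ((WithLp.equiv 2 (Fin m → ℝ)).symm) '' ((WithLp.equiv 2 (Fin m → ℝ)) '' A) = A := by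
    simp [Set.image_image]
  rw [h3] at h2
  have h4 := hausdorffMeasure_pi_real (ι := Fin m)
  simp only [Fintype.card_fin] at h4
  rw [h4] at h2
  exact h2

/-- Upper regularity: Hausdorff measure of balls in Euclidean space. -/
lemma hausdorff_closedBall_le (m : ℕ) :
    ∃ c : ℝ≥0∞, c ≠ ∞ ∧ ∀ (u : EuclideanSpace ℝ (Fin m)) (s : ℝ), 0 ≤ s →
      μH[(m:ℝ)] (closedBall u s) ≤ c * ENNReal.ofReal s ^ m := by
  obtain ⟨c, hc, h⟩ := hausdorff_le_pi_volume m
  refine ⟨c * (ENNReal.ofReal 2) ^ m, ENNReal.mul_ne_top hc (ENNReal.pow_ne_top ENNReal.ofReal_ne_top), fun u s hs => ?_⟩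
  have h1 : (WithLp.equiv 2 (Fin m → ℝ)) '' (closedBall u s) ⊆
      closedBall ((WithLp.equiv 2 (Fin m → ℝ)) u) s := by
    rintro _ ⟨z, hz, rfl⟩
    have := (PiLp.lipschitzWith_ofLp 2 (fun _ : Fin m => ℝ)).dist_le_mul z u
    simp only [ENNReal.coe_one, NNReal.coe_one, one_mul] at this
    exact mem_closedBall.2 (this.trans (mem_closedBall.1 hz))
  calc μH[(m:ℝ)] (closedBall u s) ≤ c * volume ((WithLp.equiv 2 (Fin m → ℝ)) '' (closedBall u s)) :=
        h _
    _ ≤ c * volume (closedBall ((WithLp.equiv 2 (Fin m → ℝ)) u) s) := by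
        gcongr

    _ = c * (ENNReal.ofReal 2 ^ m * ENNReal.ofReal s ^ m) := by
        rw [Real.volume_pi_closedBall _ hs, Fintype.card_fin, mul_pow,
          ENNReal.ofReal_mul (by positivity), ENNReal.ofReal_pow (by norm_num : (0:ℝ) ≤ 2),
          ENNReal.ofReal_pow hs]
    _ = c * ENNReal.ofReal 2 ^ m * ENNReal.ofReal s ^ m := by ring

/-- Lower bound: positive Hausdorff measure of closed balls in Euclidean space. -/
lemma hausdorff_closedBall_pos (m : ℕ) {s : ℝ} (hs : 0 < s) :
    0 < μH[(m:ℝ)] (closedBall (0 : EuclideanSpace ℝ (Fin m)) s) := by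
  set κ : ℝ≥0 := (m : ℝ≥0) ^ (2⁻¹:ℝ) with hκ
  have hL : LipschitzWith κ ((WithLp.equiv 2 (Fin m → ℝ)).symm) := by
    intro x y
    have h := PiLp.antilipschitzWith_ofLp 2 (fun _ : Fin m => ℝ)
      ((WithLp.equiv 2 (Fin m → ℝ)).symm x) ((WithLp.equiv 2 (Fin m → ℝ)).symm y)
    simpa using h
  set t : ℝ := s / ((κ:ℝ) + 1) with ht
  have hκ0 : (0:ℝ) ≤ κ := κ.coe_nonneg
  have htpos : 0 < t := div_pos hs (by linarith)
  -- the euclidean ball contains the image under equiv.symm of a small pi-ball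
  have h1 : ball (0 : Fin m → ℝ) t ⊆
      (WithLp.equiv 2 (Fin m → ℝ)) '' (closedBall (0 : EuclideanSpace ℝ (Fin m)) s) := by
    intro x hx
    refine ⟨(WithLp.equiv 2 (Fin m → ℝ)).symm x, ?_, by simp⟩
    have h2 := hL.dist_le_mul x 0
    have h3 : dist ((WithLp.equiv 2 (Fin m → ℝ)).symm x)
        ((WithLp.equiv 2 (Fin m → ℝ)).symm 0) ≤ κ * dist x 0 := h2
    have h4 : (WithLp.equiv 2 (Fin m → ℝ)).symm (0 : Fin m → ℝ) = 0 := by simp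
    rw [h4] at h3
    have h5 : dist x 0 < t := by simpa using hx
    have h6 : (κ:ℝ) * t ≤ s := by
      rw [ht, mul_comm, div_mul_eq_mul_div, div_le_iff₀ (by linarith : (0:ℝ) < (κ:ℝ)+1)]
      nlinarith
    exact mem_closedBall.2 <| by
      calc dist ((WithLp.equiv 2 (Fin m → ℝ)).symm x) 0 ≤ κ * dist x 0 := h3
        _ ≤ κ * t := by nlinarith [dist_nonneg (x := x) (y := (0 : Fin m → ℝ))]
        _ ≤ s := h6
  have h2 : (0:ℝ≥0∞) < volume (ball (0 : Fin m → ℝ) t) := by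
    rw [Real.volume_pi_ball _ htpos]
    positivity
  have h3 : volume (ball (0 : Fin m → ℝ) t) ≤
      μH[(m:ℝ)] (closedBall (0 : EuclideanSpace ℝ (Fin m)) s) := by
    have h4 := (PiLp.lipschitzWith_ofLp 2 (fun _ : Fin m => ℝ)).hausdorffMeasure_image_le
      (d := (m:ℝ)) (Nat.cast_nonneg m) (closedBall (0 : EuclideanSpace ℝ (Fin m)) s)
    have h5 := hausdorffMeasure_pi_real (ι := Fin m)
    simp only [Fintype.card_fin] at h5
    rw [h5, ENNReal.coe_one, ENNReal.one_rpow, one_mul] at h4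
    exact (measure_mono h1).trans h4
  exact h2.trans_le h3


/-- insert a coordinate, as a map into Euclidean space -/
noncomputable def ins (i : Fin (m+1)) (x : ℝ) (u : EuclideanSpace ℝ (Fin m)) :
    EuclideanSpace ℝ (Fin (m+1)) :=
  (WithLp.equiv 2 (Fin (m+1) → ℝ)).symm (i.insertNth x ((WithLp.equiv 2 (Fin m → ℝ)) u))

/-- remove a coordinate, as a map between Euclidean spaces -/
noncomputable def rem (i : Fin (m+1)) (w : EuclideanSpace ℝ (Fin (m+1))) :
    EuclideanSpace ℝ (Fin m) :=
  (WithLp.equiv 2 (Fin m → ℝ)).symm (i.removeNth ((WithLp.equiv 2 (Fin (m+1) → ℝ)) w))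

@[simp] lemma ins_apply_same (i : Fin (m+1)) (x : ℝ) (u : EuclideanSpace ℝ (Fin m)) :
    ins i x u i = x := by
  show (i.insertNth x (fun k => u k) : Fin (m+1) → ℝ) i = x
  simp

@[simp] lemma ins_apply_succAbove (i : Fin (m+1)) (x : ℝ) (u : EuclideanSpace ℝ (Fin m))
    (k : Fin m) : ins i x u (i.succAbove k) = u k := by
  show (i.insertNth x (fun k => u k) : Fin (m+1) → ℝ) (i.succAbove k) = u k
  simp

@[simp] lemma rem_apply (i : Fin (m+1)) (w : EuclideanSpace ℝ (Fin (m+1))) (k : Fin m) :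
    rem i w k = w (i.succAbove k) := rfl

@[simp] lemma rem_ins (i : Fin (m+1)) (x : ℝ) (u : EuclideanSpace ℝ (Fin m)) :
    rem i (ins i x u) = u := by
  ext k; simp

lemma ins_rem (i : Fin (m+1)) (w : EuclideanSpace ℝ (Fin (m+1))) :
    ins i (w i) (rem i w) = w := by
  ext j
  refine Fin.succAboveCases i ?_ ?_ j
  · simp
  · intro k; simp

lemma dist_ins (i : Fin (m+1)) (x y : ℝ) (u v : EuclideanSpace ℝ (Fin m)) :
    dist (ins i x u) (ins i y v) = Real.sqrt ((x-y)^2 + dist u v^2) := by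
  rw [EuclideanSpace.dist_eq]
  congr 1
  rw [Fin.sum_univ_succAbove (fun j => dist (ins i x u j) (ins i y v j) ^ 2) i]
  simp only [ins_apply_same, ins_apply_succAbove]
  rw [EuclideanSpace.dist_eq, Real.sq_sqrt (by positivity)]
  congr 1
  · rw [Real.dist_eq, sq_abs]

lemma ins_zero_zero (i : Fin (m+1)) : ins i (0:ℝ) (0 : EuclideanSpace ℝ (Fin m)) = 0 := by
  ext j
  refine Fin.succAboveCases i ?_ ?_ j
  · simp
  · intro k
    simp only [ins_apply_succAbove]
    rfl

lemma norm_ins (i : Fin (m+1)) (x : ℝ) (u : EuclideanSpace ℝ (Fin m)) :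
    ‖ins i x u‖ = Real.sqrt (x^2 + ‖u‖^2) := by
  have h := dist_ins i x 0 u 0
  rw [ins_zero_zero] at h
  simpa using h

lemma dist_rem_le (i : Fin (m+1)) (w w' : EuclideanSpace ℝ (Fin (m+1))) :
    dist (rem i w) (rem i w') ≤ dist w w' := by
  rw [EuclideanSpace.dist_eq, EuclideanSpace.dist_eq]
  apply Real.sqrt_le_sqrt
  rw [Fin.sum_univ_succAbove (fun j => dist (w j) (w' j) ^ 2) i]
  have h : ∀ k : Fin m, dist (rem i w k) (rem i w' k) ^2
      = dist (w (i.succAbove k)) (w' (i.succAbove k)) ^ 2 := fun k => rfl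
  simp only [h]
  exact le_add_of_nonneg_left (by positivity)

lemma norm_rem_sq (i : Fin (m+1)) (w : EuclideanSpace ℝ (Fin (m+1))) :
    ‖rem i w‖^2 = ‖w‖^2 - (w i)^2 := by
  have h := norm_ins i (w i) (rem i w)
  rw [ins_rem] at h
  have h2 : ‖w‖^2 = (w i)^2 + ‖rem i w‖^2 := by
    rw [h, Real.sq_sqrt (by positivity)]
  linarith

/-- the graph domain -/
def D (m : ℕ) : Set (EuclideanSpace ℝ (Fin m)) := {u | ‖u‖^2 ≤ 1 - 1/(m+1)}

/-- graph parametrization of a piece of the unit sphere -/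
noncomputable def gmap (i : Fin (m+1)) (σ : ℝ) (u : EuclideanSpace ℝ (Fin m)) :
    EuclideanSpace ℝ (Fin (m+1)) :=
  ins i (σ * Real.sqrt (1 - ‖u‖^2)) u

lemma gmap_lipschitzOn (i : Fin (m+1)) {σ : ℝ} (hσ : σ^2 = 1) :
    LipschitzOnWith ((m:ℝ≥0)+2) (gmap i σ) (D m) := by
  rw [lipschitzOnWith_iff_dist_le_mul]
  intro u hu u' hu'
  set a := ‖u‖
  set b := ‖u'‖
  set A := 1 - a^2 with hA
  set B := 1 - b^2 with hB
  have hMpos : (0:ℝ) < (m:ℝ)+1 := by positivity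
  have hAm : 1/((m:ℝ)+1) ≤ A := by
    have := hu
    simp only [D, Set.mem_setOf_eq] at this
    push_cast at this ⊢
    linarith
  have hBm : 1/((m:ℝ)+1) ≤ B := by
    have := hu'
    simp only [D, Set.mem_setOf_eq] at this
    push_cast at this ⊢
    linarith
  have hApos : 0 < A := lt_of_lt_of_le (by positivity) hAm
  have hBpos : 0 < B := lt_of_lt_of_le (by positivity) hBm
  have ha1 : a ≤ 1 := by nlinarith [norm_nonneg u]
  have hb1 : b ≤ 1 := by nlinarith [norm_nonneg u']
  have ha0 : 0 ≤ a := norm_nonneg u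
  have hb0 : 0 ≤ b := norm_nonneg u'
  set d := dist u u' with hd
  have hd0 : 0 ≤ d := dist_nonneg
  have habd : |a - b| ≤ d := by
    have := abs_norm_sub_norm_le u u'
    rwa [← dist_eq_norm] at this
  set g1 := Real.sqrt A
  set g2 := Real.sqrt B
  have hg1 : g1^2 = A := Real.sq_sqrt hApos.le
  have hg2 : g2^2 = B := Real.sq_sqrt hBpos.le
  have hg10 : 0 ≤ g1 := Real.sqrt_nonneg _
  have hg20 : 0 ≤ g2 := Real.sqrt_nonneg _
  -- key estimate
  have hsum : 2/((m:ℝ)+1) ≤ (g1+g2)^2 := by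
    have hAB : A + B ≤ (g1+g2)^2 := by nlinarith [mul_nonneg hg10 hg20]
    have h2 : 2/((m:ℝ)+1) = 1/((m:ℝ)+1) + 1/((m:ℝ)+1) := by ring
    rw [h2]
    linarith
  have hABd : (A-B)^2 ≤ 4*d^2 := by
    have h1 : A - B = (b-a)*(b+a) := by ring
    have h2 : |A - B| ≤ d * 2 := by
      rw [h1, abs_mul]
      have : |b - a| ≤ d := by rwa [abs_sub_comm] at habd
      have h3 : |b + a| ≤ 2 := by rw [abs_of_nonneg (by linarith)]; linarith
      exact mul_le_mul this h3 (abs_nonneg _) hd0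
    calc (A-B)^2 = |A-B|^2 := (sq_abs _).symm
      _ ≤ (d*2)^2 := by gcongr
      _ = 4*d^2 := by ring
  have hkey : (g1-g2)^2*(g1+g2)^2 = (A-B)^2 := by
    have h0 : (g1-g2)^2*(g1+g2)^2 = (g1^2-g2^2)^2 := by ring
    simp only [h0, hg1, hg2]
  have hg12 : (g1-g2)^2 ≤ 2*((m:ℝ)+1)*d^2 := by
    have h1 : (g1-g2)^2 * (2/((m:ℝ)+1)) ≤ (A-B)^2 := by
      calc (g1-g2)^2 * (2/((m:ℝ)+1)) ≤ (g1-g2)^2 * (g1+g2)^2 :=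
            mul_le_mul_of_nonneg_left hsum (sq_nonneg _)
        _ = (A-B)^2 := hkey
    have h2 : (g1-g2)^2 * (2/((m:ℝ)+1)) ≤ 4*d^2 := h1.trans hABd
    have h3 : (g1-g2)^2 * 2 ≤ 4*d^2*((m:ℝ)+1) := by
      have := mul_le_mul_of_nonneg_right h2 hMpos.le
      field_simp at this
      linarith
    linarith
  -- conclude
  have hdist : dist (gmap i σ u) (gmap i σ u') = Real.sqrt ((σ*g1 - σ*g2)^2 + d^2) :=
    dist_ins i (σ*g1) (σ*g2) u u'
  rw [hdist]
  have h4 : (σ*g1 - σ*g2)^2 = (g1-g2)^2 := by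
    have : (σ*g1 - σ*g2)^2 = σ^2*(g1-g2)^2 := by ring
    rw [this, hσ, one_mul]
  rw [h4]
  have h5 : (g1-g2)^2 + d^2 ≤ (((m:ℝ)+2) * d)^2 := by nlinarith [sq_nonneg d]
  calc Real.sqrt ((g1-g2)^2 + d^2) ≤ Real.sqrt ((((m:ℝ)+2)*d)^2) := Real.sqrt_le_sqrt h5
    _ = ((m:ℝ)+2)*d := Real.sqrt_sq (by positivity)
    _ = (((m:ℝ≥0)+2 : ℝ≥0):ℝ) * d := by push_cast; ring

lemma sum_sq_eq_one {w : EuclideanSpace ℝ (Fin (m+1))} (hw : w ∈ sphere (0:EuclideanSpace ℝ (Fin (m+1))) 1) :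
    ∑ j, (w j)^2 = 1 := by
  have h1 : ‖w‖ = 1 := by simpa using hw
  have h2 : ‖w‖^2 = 1 := by rw [h1]; norm_num
  rw [EuclideanSpace.norm_eq, Real.sq_sqrt (by positivity)] at h2
  simpa [Real.norm_eq_abs, sq_abs] using h2

lemma exists_big_coord {w : EuclideanSpace ℝ (Fin (m+1))}
    (hw : w ∈ sphere (0:EuclideanSpace ℝ (Fin (m+1))) 1) :
    ∃ i, 1/((m:ℝ)+1) ≤ (w i)^2 := by
  by_contra h
  push_neg at h
  have h1 : ∑ j, (w j)^2 < ∑ _j : Fin (m+1), 1/((m:ℝ)+1) :=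
    Finset.sum_lt_sum_of_nonempty (by simp) (fun j _ => h j)
  rw [sum_sq_eq_one hw] at h1
  rw [Finset.sum_const, Finset.card_univ, Fintype.card_fin] at h1
  have : ((m:ℝ)+1) ≠ 0 := by positivity
  rw [nsmul_eq_mul] at h1
  push_cast at h1
  rw [mul_one_div, div_self this] at h1
  exact lt_irrefl _ h1

lemma sphere_subset_graphs (v : EuclideanSpace ℝ (Fin (m+1))) (s : ℝ) :
    sphere (0:EuclideanSpace ℝ (Fin (m+1))) 1 ∩ closedBall v s ⊆
      ⋃ i : Fin (m+1),
        (gmap i 1 '' (D m ∩ closedBall (rem i v) s) ∪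
         gmap i (-1) '' (D m ∩ closedBall (rem i v) s)) := by
  rintro w ⟨hw, hwb⟩
  obtain ⟨i, hi⟩ := exists_big_coord hw
  refine Set.mem_iUnion.2 ⟨i, ?_⟩
  have hu1 : rem i w ∈ D m := by
    simp only [D, Set.mem_setOf_eq]
    have h1 : ‖w‖ = 1 := by simpa using hw
    have := norm_rem_sq i w
    rw [h1] at this
    rw [this]
    have : (1:ℝ)/((m:ℝ)+1) = 1/(↑m+1) := rfl
    push_cast
    linarith
  have hu2 : rem i w ∈ closedBall (rem i v) s :=
    mem_closedBall.2 ((dist_rem_le i w v).trans (mem_closedBall.1 hwb))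
  have hnormrem : Real.sqrt (1 - ‖rem i w‖^2) = |w i| := by
    have h1 : ‖w‖ = 1 := by simpa using hw
    have h2 := norm_rem_sq i w
    rw [h1] at h2
    have h3 : 1 - ‖rem i w‖^2 = (w i)^2 := by rw [h2]; ring
    rw [h3, Real.sqrt_sq_eq_abs]
  rcases le_or_gt 0 (w i) with hs0 | hs0
  · refine Set.mem_union_left _ ⟨rem i w, ⟨hu1, hu2⟩, ?_⟩
    show ins i (1 * Real.sqrt (1 - ‖rem i w‖^2)) (rem i w) = w
    rw [one_mul, hnormrem, abs_of_nonneg hs0, ins_rem]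
  · refine Set.mem_union_right _ ⟨rem i w, ⟨hu1, hu2⟩, ?_⟩
    show ins i ((-1) * Real.sqrt (1 - ‖rem i w‖^2)) (rem i w) = w
    rw [hnormrem, abs_of_neg hs0]
    have : (-1 : ℝ) * -(w i) = w i := by ring
    rw [this, ins_rem]


lemma sphere_cap_bound (m : ℕ) :
    ∃ K : ℝ≥0∞, K ≠ ∞ ∧ ∀ (v : EuclideanSpace ℝ (Fin (m+1))) (s : ℝ), 0 ≤ s →
      μH[(m:ℝ)] (sphere (0:EuclideanSpace ℝ (Fin (m+1))) 1 ∩ closedBall v s)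
        ≤ K * ENNReal.ofReal s ^ m := by
  obtain ⟨c, hc, hcball⟩ := hausdorff_closedBall_le m
  set L : ℝ≥0∞ := ((((m:ℝ≥0)+2) : ℝ≥0∞)) ^ (m:ℝ) with hL
  have hLt : L ≠ ∞ := ENNReal.rpow_ne_top_of_nonneg (Nat.cast_nonneg m) ENNReal.coe_ne_top
  refine ⟨((m:ℝ≥0∞)+1) * (2 * (L * c)), by
    refine ENNReal.mul_ne_top (by finiteness) (ENNReal.mul_ne_top (by finiteness)
      (ENNReal.mul_ne_top hLt hc)), fun v s hs => ?_⟩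
  have himg : ∀ (i : Fin (m+1)) (σ : ℝ), σ^2 = 1 →
      μH[(m:ℝ)] (gmap i σ '' (D m ∩ closedBall (rem i v) s)) ≤ L * (c * ENNReal.ofReal s ^ m) := by
    intro i σ hσ
    have h1 := ((gmap_lipschitzOn i hσ).mono
        (Set.inter_subset_left (s := D m) (t := closedBall (rem i v) s))).hausdorffMeasure_image_le
      (d := (m:ℝ)) (Nat.cast_nonneg m)
    refine h1.trans ?_
    have h2 : μH[(m:ℝ)] (D m ∩ closedBall (rem i v) s) ≤ c * ENNReal.ofReal s ^ m :=
      (measure_mono Set.inter_subset_right).trans (hcball (rem i v) s hs)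
    have h3 : ((((m:ℝ≥0)+2) : ℝ≥0) : ℝ≥0∞) ^ (m:ℝ) = L := rfl
    rw [h3]
    exact mul_le_mul_right h2 L
  calc μH[(m:ℝ)] (sphere (0:EuclideanSpace ℝ (Fin (m+1))) 1 ∩ closedBall v s)
      ≤ μH[(m:ℝ)] (⋃ i : Fin (m+1),
        (gmap i 1 '' (D m ∩ closedBall (rem i v) s) ∪
         gmap i (-1) '' (D m ∩ closedBall (rem i v) s))) :=
        measure_mono (sphere_subset_graphs v s)
    _ ≤ ∑ i : Fin (m+1), μH[(m:ℝ)] (gmap i 1 '' (D m ∩ closedBall (rem i v) s) ∪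
         gmap i (-1) '' (D m ∩ closedBall (rem i v) s)) := measure_iUnion_fintype_le _ _
    _ ≤ ∑ _i : Fin (m+1), 2 * (L * (c * ENNReal.ofReal s ^ m)) := by
        refine Finset.sum_le_sum fun i _ => ?_
        refine (measure_union_le _ _).trans ?_
        have := himg i 1 (by norm_num)
        have h2 := himg i (-1) (by norm_num)
        rw [two_mul]
        exact add_le_add this h2
    _ = ((m:ℝ≥0∞)+1) * (2 * (L * c)) * ENNReal.ofReal s ^ m := by
        rw [Finset.sum_const, Finset.card_univ, Fintype.card_fin, nsmul_eq_mul]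
        push_cast
        ring

lemma sphere_hausdorff_pos (m : ℕ) :
    0 < μH[(m:ℝ)] (sphere (0:EuclideanSpace ℝ (Fin (m+1))) 1) := by
  have h1 : closedBall (0:EuclideanSpace ℝ (Fin m)) (1/2) ⊆
      rem (0 : Fin (m+1)) '' (sphere (0:EuclideanSpace ℝ (Fin (m+1))) 1) := by
    intro u hu
    have hu2 : ‖u‖ ≤ 1/2 := by simpa using hu
    refine ⟨gmap 0 1 u, ?_, by rw [gmap]; exact rem_ins _ _ _⟩
    rw [mem_sphere_zero_iff_norm]
    show ‖ins 0 (1 * Real.sqrt (1-‖u‖^2)) u‖ = 1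
    rw [norm_ins, one_mul, Real.sq_sqrt (by nlinarith [norm_nonneg u])]
    have : 1 - ‖u‖^2 + ‖u‖^2 = 1 := by ring
    rw [this, Real.sqrt_one]
  have h2 : 0 < μH[(m:ℝ)] (closedBall (0:EuclideanSpace ℝ (Fin m)) (1/2)) :=
    hausdorff_closedBall_pos m (by norm_num)
  have hLip : LipschitzWith 1 (rem (0 : Fin (m+1))) :=
    LipschitzWith.of_dist_le_mul (fun w w' => by rw [NNReal.coe_one, one_mul]; exact dist_rem_le _ w w')
  have h3 := hLip.hausdorffMeasure_image_le (d := (m:ℝ)) (Nat.cast_nonneg m)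
    (sphere (0:EuclideanSpace ℝ (Fin (m+1))) 1)
  rw [ENNReal.coe_one, ENNReal.one_rpow, one_mul] at h3
  exact h2.trans_le ((measure_mono h1).trans h3)


lemma ennreal_ofReal_half_pow (k : ℕ) :
    ENNReal.ofReal ((1/2:ℝ)^k) = (2⁻¹ : ℝ≥0∞)^k := by
  rw [show (1/2:ℝ) = 2⁻¹ by norm_num, ENNReal.ofReal_pow (by norm_num),
    ENNReal.ofReal_inv_of_pos (by norm_num), ENNReal.ofReal_ofNat]

lemma ennreal_inv_half_pow_sq (k : ℕ) :
    (((2⁻¹ : ℝ≥0∞)^k)^2)⁻¹ = 4^k := by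
  rw [← pow_mul, ENNReal.inv_pow, inv_inv, show (4:ℝ≥0∞) = 2^2 by norm_num,
    ← pow_mul, mul_comm]

lemma F_le_of_dist {v w : EuclideanSpace ℝ (Fin (m+1))} {c : ℝ}
    (h : c ≤ dist w v) : ((‖w - v‖₊ : ℝ≥0∞) ^ 2)⁻¹ ≤ ((ENNReal.ofReal c) ^ 2)⁻¹ := by
  gcongr
  rw [← ENNReal.ofReal_coe_nnreal, coe_nnnorm, ← dist_eq_norm]
  exact ENNReal.ofReal_le_ofReal h

lemma unit_sphere_lintegral_bound (m : ℕ) (hm : 3 ≤ m) :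
    ∃ M : ℝ≥0∞, M ≠ ∞ ∧ ∀ v : EuclideanSpace ℝ (Fin (m+1)),
      ENNReal.ofReal (1 + ‖v‖^2) *
        ∫⁻ w in sphere (0:EuclideanSpace ℝ (Fin (m+1))) 1,
          ((‖w - v‖₊ : ℝ≥0∞) ^ 2)⁻¹ ∂μH[(m:ℝ)] ≤ M := by
  classical
  obtain ⟨K, hK, hcap⟩ := sphere_cap_bound m
  have hm0 : (0:ℝ) < (m:ℝ) := by exact_mod_cast (by omega : 0 < m)
  haveI hNA : NoAtoms (μH[(m:ℝ)] : Measure (EuclideanSpace ℝ (Fin (m+1)))) :=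
    Measure.noAtoms_hausdorff (EuclideanSpace ℝ (Fin (m+1))) hm0
  set S : Set (EuclideanSpace ℝ (Fin (m+1))) := sphere 0 1 with hSdef
  have hSK : μH[(m:ℝ)] S ≤ K := by
    have h1 := hcap 0 1 zero_le_one
    rw [Set.inter_eq_self_of_subset_left sphere_subset_closedBall] at h1
    simpa using h1
  -- uniform bound on the lintegral
  have hbase : ∀ v : EuclideanSpace ℝ (Fin (m+1)),
      (∫⁻ w in S, ((‖w - v‖₊ : ℝ≥0∞) ^ 2)⁻¹ ∂μH[(m:ℝ)]) ≤ 12 * K := by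
    intro v
    set F : EuclideanSpace ℝ (Fin (m+1)) → ℝ≥0∞ := fun w => ((‖w - v‖₊ : ℝ≥0∞) ^ 2)⁻¹ with hF
    set T : ℕ → Set (EuclideanSpace ℝ (Fin (m+1))) := fun k =>
      (S ∩ closedBall v ((1/2)^k)) ∩ {w | (1/2:ℝ)^(k+1) < dist w v} with hT
    have hcover : S ⊆ {v} ∪ ((S \ ball v (1/2)) ∪ ⋃ k : ℕ, T k) := by
      intro w hw
      rcases eq_or_ne w v with rfl | hwv
      · exact Set.mem_union_left _ rfl
      refine Set.mem_union_right _ ?_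
      have hd : 0 < dist w v := dist_pos.2 hwv
      rcases le_or_gt (1/2 : ℝ) (dist w v) with hdd | hdd
      · exact Set.mem_union_left _ ⟨hw, fun hball => absurd (mem_ball.1 hball) (not_lt.2 hdd)⟩
      · refine Set.mem_union_right _ ?_
        have hex : ∃ j : ℕ, (1/2:ℝ)^j < dist w v := exists_pow_lt_of_lt_one hd (by norm_num)
        set k0 := Nat.find hex with hk0
        have hk0pos : 0 < k0 := by
          rcases Nat.eq_zero_or_pos k0 with h0 | h0
          · exfalso
            have := Nat.find_spec hex
            rw [← hk0, h0] at this
            simp only [pow_zero] at this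
            linarith
          · exact h0
        refine Set.mem_iUnion.2 ⟨k0 - 1, ?_⟩
        have hup : dist w v ≤ (1/2:ℝ)^(k0-1) := by
          have := Nat.find_min hex (m := k0 - 1) (by omega)
          linarith [not_lt.1 this]
        have hlow : (1/2:ℝ)^(k0-1+1) < dist w v := by
          have h1 : k0 - 1 + 1 = k0 := by omega
          rw [h1]
          exact Nat.find_spec hex
        exact ⟨⟨hw, mem_closedBall.2 hup⟩, hlow⟩
    have hsplit : (∫⁻ w in S, F w ∂μH[(m:ℝ)]) ≤
        (∫⁻ w in ({v} : Set (EuclideanSpace ℝ (Fin (m+1)))), F w ∂μH[(m:ℝ)]) +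
        ((∫⁻ w in S \ ball v (1/2), F w ∂μH[(m:ℝ)]) + ∑' k : ℕ, ∫⁻ w in T k, F w ∂μH[(m:ℝ)]) := by
      refine (lintegral_mono_set hcover).trans ?_
      refine (lintegral_union_le _ _ _).trans ?_
      gcongr
      refine (lintegral_union_le _ _ _).trans ?_
      gcongr
      exact lintegral_iUnion_le _ _
    have hsing : (∫⁻ w in ({v} : Set (EuclideanSpace ℝ (Fin (m+1)))), F w ∂μH[(m:ℝ)]) = 0 :=
      setLIntegral_measure_zero _ _ (@NullSingletonClass.measure_singleton _ _ _ hNA v)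
    have hout : (∫⁻ w in S \ ball v (1/2), F w ∂μH[(m:ℝ)]) ≤ 4 * K := by
      have h1 : ∀ w ∈ S \ ball v (1/2), F w ≤ 4 := by
        rintro w ⟨-, hw2⟩
        have hdd : (1/2:ℝ) ≤ dist w v := not_lt.1 (fun h => hw2 (mem_ball.2 h))
        refine (F_le_of_dist hdd).trans ?_
        have h2 := ennreal_ofReal_half_pow 1
        rw [pow_one, pow_one] at h2
        rw [h2]
        rw [show ((2⁻¹:ℝ≥0∞)^2)⁻¹ = 4 by
          rw [← pow_one (2⁻¹ : ℝ≥0∞), ennreal_inv_half_pow_sq 1, pow_one]]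
      calc (∫⁻ w in S \ ball v (1/2), F w ∂μH[(m:ℝ)])
          ≤ ∫⁻ _w in S \ ball v (1/2), (4:ℝ≥0∞) ∂μH[(m:ℝ)] := setLIntegral_mono measurable_const h1
        _ = 4 * μH[(m:ℝ)] (S \ ball v (1/2)) := setLIntegral_const _ _
        _ ≤ 4 * K := by
            gcongr
            exact (measure_mono Set.diff_subset).trans hSK
    have hTk : ∀ k : ℕ, (∫⁻ w in T k, F w ∂μH[(m:ℝ)]) ≤ (4 * K) * (2⁻¹)^k := by
      intro k
      have h1 : ∀ w ∈ T k, F w ≤ 4^(k+1) := by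
        rintro w ⟨-, hw2⟩
        refine (F_le_of_dist (le_of_lt hw2)).trans ?_
        rw [ennreal_ofReal_half_pow (k+1), ennreal_inv_half_pow_sq (k+1)]
      have h2 : μH[(m:ℝ)] (T k) ≤ K * ((2⁻¹ : ℝ≥0∞))^(k*m) := by
        have h3 : T k ⊆ S ∩ closedBall v ((1/2)^k) := Set.inter_subset_left
        refine (measure_mono h3).trans ?_
        refine (hcap v _ (by positivity)).trans ?_
        rw [ennreal_ofReal_half_pow k, ← pow_mul]
      calc (∫⁻ w in T k, F w ∂μH[(m:ℝ)])
          ≤ ∫⁻ _w in T k, (4:ℝ≥0∞)^(k+1) ∂μH[(m:ℝ)] := setLIntegral_mono measurable_const h1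
        _ = 4^(k+1) * μH[(m:ℝ)] (T k) := setLIntegral_const _ _
        _ ≤ 4^(k+1) * (K * (2⁻¹)^(k*m)) := by gcongr
        _ ≤ (4 * K) * (2⁻¹)^k := by
            have h4 : ((2⁻¹:ℝ≥0∞))^(k*m) ≤ ((2⁻¹:ℝ≥0∞))^(k*3) :=
              pow_le_pow_of_le_one zero_le (by norm_num) (by nlinarith)
            calc (4:ℝ≥0∞)^(k+1) * (K * (2⁻¹)^(k*m))
                ≤ 4^(k+1) * (K * (2⁻¹)^(k*3)) := by gcongr
              _ = (4 * K) * (4^k * ((2⁻¹)^3)^k) := by rw [pow_succ, pow_mul]; ring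
              _ = (4 * K) * ((4 * (2⁻¹)^3)^k) := by rw [mul_pow]
              _ = (4 * K) * (2⁻¹)^k := by
                  congr 2
                  rw [show ((2⁻¹:ℝ≥0∞))^3 = 8⁻¹ by
                    rw [← ENNReal.inv_pow]; norm_num]
                  rw [show (8:ℝ≥0∞) = 4 * 2 by norm_num,
                    ENNReal.mul_inv (Or.inl (by norm_num)) (Or.inl (by norm_num)),
                    ← mul_assoc, ENNReal.mul_inv_cancel (by norm_num) (by norm_num), one_mul]
    have hsum : (∑' k : ℕ, ∫⁻ w in T k, F w ∂μH[(m:ℝ)]) ≤ 8 * K := by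
      refine (ENNReal.tsum_le_tsum hTk).trans ?_
      rw [ENNReal.tsum_mul_left, ENNReal.tsum_geometric, ENNReal.one_sub_inv_two, inv_inv]
      calc (4 * K) * 2 = 8 * K := by ring
        _ ≤ 8 * K := le_rfl
    calc (∫⁻ w in S, F w ∂μH[(m:ℝ)]) ≤ _ := hsplit
      _ ≤ 0 + (4 * K + 8 * K) := by
          rw [hsing]
          gcongr
      _ = 12 * K := by ring
  -- now the weighted bound
  refine ⟨60 * K, ENNReal.mul_ne_top (by norm_num) hK, fun v => ?_⟩
  rcases le_or_gt ‖v‖ 2 with hv | hv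
  · calc ENNReal.ofReal (1 + ‖v‖^2) * ∫⁻ w in S, ((‖w - v‖₊ : ℝ≥0∞) ^ 2)⁻¹ ∂μH[(m:ℝ)]
        ≤ ENNReal.ofReal 5 * (12 * K) := by
          gcongr
          · nlinarith [norm_nonneg v]
          · exact hbase v
      _ = 5 * (12 * K) := by norm_num
      _ = 60 * K := by ring
  · -- decay case
    have hvpos : (0:ℝ) < ‖v‖/2 := by linarith
    set X : ℝ≥0∞ := (ENNReal.ofReal (‖v‖/2))^2 with hX
    have hX0 : X ≠ 0 := by
      simp only [hX]
      positivity
    have hXt : X ≠ ∞ := by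
      simp only [hX]
      exact ENNReal.pow_ne_top ENNReal.ofReal_ne_top
    have hptw : ∀ w ∈ S, ((‖w - v‖₊ : ℝ≥0∞) ^ 2)⁻¹ ≤ X⁻¹ := by
      intro w hw
      have hw1 : ‖w‖ = 1 := mem_sphere_zero_iff_norm.1 hw
      have hd : ‖v‖/2 ≤ dist w v := by
        have := norm_sub_norm_le v w
        rw [← dist_eq_norm, dist_comm] at this
        rw [hw1] at this
        linarith
      exact F_le_of_dist hd
    have hint : (∫⁻ w in S, ((‖w - v‖₊ : ℝ≥0∞) ^ 2)⁻¹ ∂μH[(m:ℝ)]) ≤ X⁻¹ * K := by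
      calc (∫⁻ w in S, ((‖w - v‖₊ : ℝ≥0∞) ^ 2)⁻¹ ∂μH[(m:ℝ)])
          ≤ ∫⁻ _w in S, X⁻¹ ∂μH[(m:ℝ)] := setLIntegral_mono measurable_const hptw
        _ = X⁻¹ * μH[(m:ℝ)] S := setLIntegral_const _ _
        _ ≤ X⁻¹ * K := by gcongr
    have hweight : ENNReal.ofReal (1 + ‖v‖^2) ≤ 8 * X := by
      have h1 : (1:ℝ) + ‖v‖^2 ≤ 8 * (‖v‖/2)^2 := by nlinarith
      calc ENNReal.ofReal (1 + ‖v‖^2) ≤ ENNReal.ofReal (8 * (‖v‖/2)^2) :=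
            ENNReal.ofReal_le_ofReal h1
        _ = ENNReal.ofReal 8 * ENNReal.ofReal ((‖v‖/2)^2) := ENNReal.ofReal_mul (by norm_num)
        _ = 8 * X := by
            rw [ENNReal.ofReal_ofNat, hX, ENNReal.ofReal_pow (by positivity)]
    calc ENNReal.ofReal (1 + ‖v‖^2) * ∫⁻ w in S, ((‖w - v‖₊ : ℝ≥0∞) ^ 2)⁻¹ ∂μH[(m:ℝ)]
        ≤ (8 * X) * (X⁻¹ * K) := mul_le_mul' hweight hint
      _ = 8 * K * (X * X⁻¹) := by ring
      _ = 8 * K := by rw [ENNReal.mul_inv_cancel hX0 hXt, mul_one]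
      _ ≤ 60 * K := mul_le_mul_left (by norm_num) K


open scoped Pointwise

lemma measure_sphere_scaled (m : ℕ) {r : ℝ} (hr : 0 < r) :
    μH[(m:ℝ)] (sphere (0:EuclideanSpace ℝ (Fin (m+1))) r)
      = ((‖r‖₊ : ℝ≥0∞))^m * μH[(m:ℝ)] (sphere (0:EuclideanSpace ℝ (Fin (m+1))) 1) := by
  have h1 : sphere (0:EuclideanSpace ℝ (Fin (m+1))) r
      = r • sphere (0:EuclideanSpace ℝ (Fin (m+1))) 1 := by
    rw [smul_sphere r (0:EuclideanSpace ℝ (Fin (m+1))) zero_le_one, smul_zero, mul_one,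
      Real.norm_of_nonneg hr.le]
  rw [h1, Measure.hausdorffMeasure_smul₀ (Nat.cast_nonneg m) hr.ne' _, ENNReal.smul_def,
    NNReal.rpow_natCast, smul_eq_mul, ENNReal.coe_pow]

lemma setLIntegral_sphere_scaled (m : ℕ) {r : ℝ} (hr : 0 < r)
    (g : EuclideanSpace ℝ (Fin (m+1)) → ℝ≥0∞) (hg : Measurable g) :
    (∫⁻ z in sphere (0:EuclideanSpace ℝ (Fin (m+1))) r, g z ∂μH[(m:ℝ)]) =
      ((‖r‖₊ : ℝ≥0∞))^m * ∫⁻ w in sphere (0:EuclideanSpace ℝ (Fin (m+1))) 1,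
        g (r • w) ∂μH[(m:ℝ)] := by
  have hρ0 : (‖r‖₊ : ℝ≥0∞) ≠ 0 := by
    simp only [ne_eq, ENNReal.coe_eq_zero, nnnorm_eq_zero]
    exact hr.ne'
  have hρt : (‖r‖₊ : ℝ≥0∞) ≠ ∞ := ENNReal.coe_ne_top
  have hT : Measurable (fun w : EuclideanSpace ℝ (Fin (m+1)) => r • w) :=
    measurable_const_smul r
  have hmeq : (μH[(m:ℝ)] : Measure (EuclideanSpace ℝ (Fin (m+1)))) =
      ((‖r‖₊:ℝ≥0∞))^m • Measure.map (fun w : EuclideanSpace ℝ (Fin (m+1)) => r • w) μH[(m:ℝ)] := by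
    ext A hA
    rw [Measure.smul_apply, Measure.map_apply hT hA, Set.preimage_smul₀ hr.ne' A,
      Measure.hausdorffMeasure_smul₀ (Nat.cast_nonneg m) (inv_ne_zero hr.ne') A,
      NNReal.rpow_natCast]
    simp only [ENNReal.smul_def, smul_eq_mul, ENNReal.coe_pow, nnnorm_inv,
      ENNReal.coe_inv (show ‖r‖₊ ≠ 0 by simpa [nnnorm_eq_zero] using hr.ne')]
    rw [← mul_assoc, ← mul_pow, ENNReal.mul_inv_cancel hρ0 hρt, one_pow, one_mul]
  conv_lhs => rw [hmeq]
  rw [Measure.restrict_smul, lintegral_smul_measure,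
    setLIntegral_map Metric.isClosed_sphere.measurableSet hg hT]
  congr 2
  rw [Set.preimage_smul₀ hr.ne',
    smul_sphere r⁻¹ (0:EuclideanSpace ℝ (Fin (m+1))) hr.le, smul_zero,
    Real.norm_of_nonneg (inv_nonneg.2 hr.le), inv_mul_cancel₀ hr.ne']

end SphereAvg

/-- Case 2 (n > 3) in the proof of Proposition 2.1 (i): for every `n ≥ 4` the quantity
`(|x|² + |y|²) ⨍_{∂B_{|x|}(0)} |z − y|⁻² dH^{n−1}(z)` is bounded uniformly in
`x ≠ 0`, `y ≠ 0` in `ℝⁿ`. -/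
theorem sphere_average_kernel_bound_dim_ge4
    (n : ℕ) (hn : 4 ≤ n) :
    ∃ C : ℝ, 0 < C ∧ ∀ x y : EuclideanSpace ℝ (Fin n), x ≠ 0 → y ≠ 0 →
      (‖x‖ ^ 2 + ‖y‖ ^ 2) *
        ((μH[(n : ℝ) - 1] (Metric.sphere (0 : EuclideanSpace ℝ (Fin n)) ‖x‖)).toReal⁻¹ *
          ∫ z in Metric.sphere (0 : EuclideanSpace ℝ (Fin n)) ‖x‖,
            (‖z - y‖ ^ 2)⁻¹ ∂μH[(n : ℝ) - 1]) ≤ C := by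
  obtain ⟨m, rfl⟩ : ∃ m, n = m + 1 := ⟨n - 1, by omega⟩
  have hm : 3 ≤ m := by omega
  have hd : ((m+1 : ℕ) : ℝ) - 1 = (m:ℝ) := by push_cast; ring
  rw [hd]
  obtain ⟨M, hM, hbound⟩ := SphereAvg.unit_sphere_lintegral_bound m hm
  obtain ⟨K, hK, hcap⟩ := SphereAvg.sphere_cap_bound m
  set μS : ℝ≥0∞ := μH[(m:ℝ)] (Metric.sphere (0 : EuclideanSpace ℝ (Fin (m+1))) 1) with hμS
  have hS0 : 0 < μS := SphereAvg.sphere_hausdorff_pos m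
  have hSfin : μS ≠ ∞ := by
    have h1 := hcap 0 1 zero_le_one
    rw [Set.inter_eq_self_of_subset_left Metric.sphere_subset_closedBall] at h1
    simp only [ENNReal.ofReal_one, one_pow, mul_one] at h1
    exact (h1.trans_lt (lt_top_iff_ne_top.2 hK)).ne
  set Ce : ℝ≥0∞ := M * μS⁻¹ with hCe
  have hCet : Ce ≠ ∞ := ENNReal.mul_ne_top hM (ENNReal.inv_ne_top.2 hS0.ne')
  refine ⟨max Ce.toReal 1, lt_of_lt_of_le one_pos (le_max_right _ _), fun x y hx hy => ?_⟩
  set r : ℝ := ‖x‖ with hrdef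
  have hr : 0 < r := norm_pos_iff.2 hx
  set v : EuclideanSpace ℝ (Fin (m+1)) := r⁻¹ • y with hv
  set ρ : ℝ≥0∞ := (‖r‖₊ : ℝ≥0∞) with hρ
  have hρ0 : ρ ≠ 0 := by
    simp only [hρ, ne_eq, ENNReal.coe_eq_zero, nnnorm_eq_zero]
    exact hr.ne'
  have hρt : ρ ≠ ∞ := ENNReal.coe_ne_top
  set g : EuclideanSpace ℝ (Fin (m+1)) → ℝ≥0∞ := fun z => ((‖z - y‖₊ : ℝ≥0∞)^2)⁻¹ with hg
  have hgm : Measurable g := by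
    have h1 : Measurable fun z : EuclideanSpace ℝ (Fin (m+1)) => (‖z - y‖₊ : ℝ≥0∞) :=
      (continuous_id.sub continuous_const).nnnorm.measurable.coe_nnreal_ennreal
    exact (h1.pow_const 2).inv
  set I : ℝ≥0∞ := ∫⁻ w in Metric.sphere (0 : EuclideanSpace ℝ (Fin (m+1))) 1,
    ((‖w - v‖₊ : ℝ≥0∞)^2)⁻¹ ∂μH[(m:ℝ)] with hI
  have hsub : ∀ w : EuclideanSpace ℝ (Fin (m+1)),
      g (r • w) = (ρ^2)⁻¹ * ((‖w - v‖₊ : ℝ≥0∞)^2)⁻¹ := by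
    intro w
    have h1 : r • w - y = r • (w - v) := by
      rw [hv, smul_sub, smul_inv_smul₀ hr.ne']
    simp only [hg, h1, nnnorm_smul]
    rw [ENNReal.coe_mul, mul_pow,
      ENNReal.mul_inv (Or.inl (pow_ne_zero 2 hρ0)) (Or.inl (ENNReal.pow_ne_top hρt))]
  have hQ : (∫⁻ z in Metric.sphere (0:EuclideanSpace ℝ (Fin (m+1))) r, g z ∂μH[(m:ℝ)])
      = ρ^m * ((ρ^2)⁻¹ * I) := by
    rw [SphereAvg.setLIntegral_sphere_scaled m hr g hgm]
    congr 1
    calc (∫⁻ w in Metric.sphere (0:EuclideanSpace ℝ (Fin (m+1))) 1, g (r • w) ∂μH[(m:ℝ)])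
        = ∫⁻ w in Metric.sphere (0:EuclideanSpace ℝ (Fin (m+1))) 1,
            (ρ^2)⁻¹ * ((‖w - v‖₊ : ℝ≥0∞)^2)⁻¹ ∂μH[(m:ℝ)] := lintegral_congr fun w => hsub w
      _ = (ρ^2)⁻¹ * I := lintegral_const_mul' _ _ (ENNReal.inv_ne_top.2 (pow_ne_zero 2 hρ0))
  have hyv : ‖y‖ = r * ‖v‖ := by
    rw [hv, norm_smul, Real.norm_of_nonneg (inv_nonneg.2 hr.le)]
    field_simp
  have hWr : r^2 + ‖y‖^2 = r^2 * (1 + ‖v‖^2) := by rw [hyv]; ring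
  have hρ2 : ENNReal.ofReal (r^2) = ρ^2 := by
    rw [ENNReal.ofReal_pow hr.le, hρ, ← ENNReal.ofReal_coe_nnreal, coe_nnnorm, Real.norm_of_nonneg hr.le]
  have hE : ENNReal.ofReal (r^2 + ‖y‖^2) *
      ((μH[(m:ℝ)] (Metric.sphere (0:EuclideanSpace ℝ (Fin (m+1))) r))⁻¹ *
        ∫⁻ z in Metric.sphere (0:EuclideanSpace ℝ (Fin (m+1))) r, g z ∂μH[(m:ℝ)]) ≤ Ce := by
    rw [SphereAvg.measure_sphere_scaled m hr, hQ, hWr, ENNReal.ofReal_mul (by positivity), hρ2,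
      ENNReal.mul_inv (Or.inl (pow_ne_zero m hρ0)) (Or.inl (ENNReal.pow_ne_top hρt))]
    calc (ρ^2 * ENNReal.ofReal (1+‖v‖^2)) * (((ρ^m)⁻¹ * μS⁻¹) * (ρ^m * ((ρ^2)⁻¹ * I)))
        = (ENNReal.ofReal (1+‖v‖^2) * I) * μS⁻¹ * ((ρ^m) * (ρ^m)⁻¹) * ((ρ^2) * (ρ^2)⁻¹) := by
          ring
      _ = (ENNReal.ofReal (1+‖v‖^2) * I) * μS⁻¹ := by
          rw [ENNReal.mul_inv_cancel (pow_ne_zero m hρ0) (ENNReal.pow_ne_top hρt),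
            ENNReal.mul_inv_cancel (pow_ne_zero 2 hρ0) (ENNReal.pow_ne_top hρt), mul_one, mul_one]
      _ ≤ M * μS⁻¹ := mul_le_mul_left (hbound v) _
  have hIfin : I ≠ ∞ := by
    have h1 : (1:ℝ≥0∞) ≤ ENNReal.ofReal (1 + ‖v‖^2) := by
      rw [show (1:ℝ≥0∞) = ENNReal.ofReal 1 by simp]
      exact ENNReal.ofReal_le_ofReal (by nlinarith [sq_nonneg ‖v‖])
    have h2 : I ≤ M := by
      calc I = 1 * I := (one_mul I).symm
        _ ≤ ENNReal.ofReal (1+‖v‖^2) * I := mul_le_mul_left h1 I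
        _ ≤ M := hbound v
    exact (h2.trans_lt (lt_top_iff_ne_top.2 hM)).ne
  have hQfin : (∫⁻ z in Metric.sphere (0:EuclideanSpace ℝ (Fin (m+1))) r, g z ∂μH[(m:ℝ)]) ≠ ∞ := by
    rw [hQ]
    exact ENNReal.mul_ne_top (ENNReal.pow_ne_top hρt)
      (ENNReal.mul_ne_top (ENNReal.inv_ne_top.2 (pow_ne_zero 2 hρ0)) hIfin)
  have hmeas : AEStronglyMeasurable (fun z : EuclideanSpace ℝ (Fin (m+1)) => (‖z - y‖^2)⁻¹)
      ((μH[(m:ℝ)]).restrict (Metric.sphere (0:EuclideanSpace ℝ (Fin (m+1))) r)) :=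
    (((continuous_id.sub continuous_const).norm.pow 2).measurable.inv).aestronglyMeasurable
  have hint_eq : (∫ z in Metric.sphere (0:EuclideanSpace ℝ (Fin (m+1))) r,
        (‖z - y‖^2)⁻¹ ∂μH[(m:ℝ)])
      = (∫⁻ z in Metric.sphere (0:EuclideanSpace ℝ (Fin (m+1))) r,
          ENNReal.ofReal ((‖z - y‖^2)⁻¹) ∂μH[(m:ℝ)]).toReal :=
    integral_eq_lintegral_of_nonneg_ae (Filter.Eventually.of_forall fun z => by positivity) hmeas
  have hPQ : (∫⁻ z in Metric.sphere (0:EuclideanSpace ℝ (Fin (m+1))) r,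
        ENNReal.ofReal ((‖z - y‖^2)⁻¹) ∂μH[(m:ℝ)])
      ≤ ∫⁻ z in Metric.sphere (0:EuclideanSpace ℝ (Fin (m+1))) r, g z ∂μH[(m:ℝ)] := by
    refine lintegral_mono fun z => ?_
    rcases eq_or_lt_of_le (norm_nonneg (z - y)) with h0 | h0
    · rw [← h0]
      simp [hg]
    · simp only [hg]
      rw [ENNReal.ofReal_inv_of_pos (by positivity), ENNReal.ofReal_pow (norm_nonneg _),
        ← coe_nnnorm, ENNReal.ofReal_coe_nnreal]
  rw [hint_eq]
  have h1 : (∫⁻ z in Metric.sphere (0:EuclideanSpace ℝ (Fin (m+1))) r,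
        ENNReal.ofReal ((‖z - y‖^2)⁻¹) ∂μH[(m:ℝ)]).toReal
      ≤ (∫⁻ z in Metric.sphere (0:EuclideanSpace ℝ (Fin (m+1))) r, g z ∂μH[(m:ℝ)]).toReal :=
    ENNReal.toReal_mono hQfin hPQ
  calc (r ^ 2 + ‖y‖ ^ 2) *
      ((μH[(m:ℝ)] (Metric.sphere (0:EuclideanSpace ℝ (Fin (m+1))) r)).toReal⁻¹ *
        (∫⁻ z in Metric.sphere (0:EuclideanSpace ℝ (Fin (m+1))) r,
          ENNReal.ofReal ((‖z - y‖^2)⁻¹) ∂μH[(m:ℝ)]).toReal)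
      ≤ (r ^ 2 + ‖y‖ ^ 2) *
      ((μH[(m:ℝ)] (Metric.sphere (0:EuclideanSpace ℝ (Fin (m+1))) r)).toReal⁻¹ *
        (∫⁻ z in Metric.sphere (0:EuclideanSpace ℝ (Fin (m+1))) r, g z ∂μH[(m:ℝ)]).toReal) := by
        refine mul_le_mul_of_nonneg_left (mul_le_mul_of_nonneg_left h1 ?_) (by positivity)
        positivity
    _ = (ENNReal.ofReal (r^2 + ‖y‖^2) *
        ((μH[(m:ℝ)] (Metric.sphere (0:EuclideanSpace ℝ (Fin (m+1))) r))⁻¹ *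
          ∫⁻ z in Metric.sphere (0:EuclideanSpace ℝ (Fin (m+1))) r, g z ∂μH[(m:ℝ)])).toReal := by
        rw [ENNReal.toReal_mul, ENNReal.toReal_mul, ENNReal.toReal_inv,
          ENNReal.toReal_ofReal (by positivity)]
    _ ≤ Ce.toReal := ENNReal.toReal_mono hCet hE
    _ ≤ max Ce.toReal 1 := le_max_left _ _
end

section
/- Let n ≥ 4 be an integer. There is a constant C > 0, depending only on n, such that for every measurable radially symmetric function f : ℝⁿ → ℝ with ∫_{ℝⁿ} |f| dH^n < ∞ and every x ∈ ℝⁿ \ {0}, |x|² ∫_{ℝⁿ} |x − y|^{−2} |f(y)| dH^n(y) ≤ C ∫_{ℝⁿ} |f| dH^n. -/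
open MeasureTheory Filter Metric Real Topology Set ENNReal

private lemma radial_transfer {n : ℕ} {f : EuclideanSpace ℝ (Fin n) → ℝ}
    (hrad : ∀ x y : EuclideanSpace ℝ (Fin n), ‖x‖ = ‖y‖ → f x = f y)
    {x z : EuclideanSpace ℝ (Fin n)} (hxz : ‖x‖ = ‖z‖) (s : ℝ) :
    ∫⁻ y in closedBall z s, ENNReal.ofReal |f y| ∂μH[(n : ℝ)] =
      ∫⁻ y in closedBall x s, ENNReal.ofReal |f y| ∂μH[(n : ℝ)] := by
  set O : EuclideanSpace ℝ (Fin n) ≃ₗᵢ[ℝ] EuclideanSpace ℝ (Fin n) :=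
    Submodule.reflection (ℝ ∙ (x - z))ᗮ with hOdef
  have hOx : O x = z := Submodule.reflection_sub hxz
  have hmp : MeasurePreserving (O : EuclideanSpace ℝ (Fin n) → EuclideanSpace ℝ (Fin n))
      μH[(n : ℝ)] μH[(n : ℝ)] := O.toIsometryEquiv.measurePreserving_hausdorffMeasure _
  have hemb : MeasurableEmbedding (O : EuclideanSpace ℝ (Fin n) → EuclideanSpace ℝ (Fin n)) :=
    O.toHomeomorph.measurableEmbedding
  have key := hmp.setLIntegral_comp_preimage_emb hemb
      (fun y => ENNReal.ofReal |f y|) (closedBall z s)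
  have hpre : (O : EuclideanSpace ℝ (Fin n) → EuclideanSpace ℝ (Fin n)) ⁻¹' closedBall z s
      = closedBall x s := by
    ext y
    simp only [Set.mem_preimage, mem_closedBall]
    rw [← hOx, dist_eq_norm, dist_eq_norm, ← map_sub, O.norm_map]
  rw [hpre] at key
  rw [← key]
  exact lintegral_congr fun y => by rw [hrad (O y) y (O.norm_map y)]

private lemma ball_mass {n : ℕ} (hn : 4 ≤ n) {f : EuclideanSpace ℝ (Fin n) → ℝ}
    (hrad : ∀ x y : EuclideanSpace ℝ (Fin n), ‖x‖ = ‖y‖ → f x = f y)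
    {x : EuclideanSpace ℝ (Fin n)} (hx : x ≠ 0) {s : ℝ} (hs : 0 < s) (hsR : s ≤ ‖x‖ / 2) :
    ∫⁻ y in closedBall x s, ENNReal.ofReal |f y| ∂μH[(n : ℝ)] ≤
      ENNReal.ofReal (8 * (8 * s / ‖x‖) ^ 3) *
        ∫⁻ y, ENNReal.ofReal |f y| ∂μH[(n : ℝ)] := by
  have hR : 0 < ‖x‖ := norm_pos_iff.2 hx
  haveI : Nontrivial (EuclideanSpace ℝ (Fin n)) :=
    Module.nontrivial_of_finrank_pos (R := ℝ) (by rw [finrank_euclideanSpace_fin]; omega)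
  set R := ‖x‖ with hRdef
  set L := ∫⁻ y, ENNReal.ofReal |f y| ∂μH[(n : ℝ)] with hLdef
  set m := ∫⁻ y in closedBall x s, ENNReal.ofReal |f y| ∂μH[(n : ℝ)] with hmdef
  have hmL : m ≤ L := setLIntegral_le_lintegral _ _
  rcases lt_or_ge (R / 16) s with hbig | hsmall
  · have ha : (1:ℝ)/2 ≤ 8 * s / R := by
      rw [le_div_iff₀ hR]; linarith
    have h1 : (1:ℝ) ≤ 8 * (8 * s / R) ^ 3 := by
      nlinarith [ha, sq_nonneg (8*s/R - 1/2), sq_nonneg (8*s/R + 1/2)]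
    calc m ≤ L := hmL
      _ ≤ _ := le_mul_of_one_le_left (by positivity) (ENNReal.one_le_ofReal.2 h1)
  · -- packing argument
    set 𝒮 : Set (Set (EuclideanSpace ℝ (Fin n))) :=
      {T | T ⊆ sphere (0 : EuclideanSpace ℝ (Fin n)) R ∧
        T.Pairwise fun a b => 2 * s < dist a b} with hSdef
    have hzorn : ∀ c ⊆ 𝒮, IsChain (· ⊆ ·) c → ∃ ub ∈ 𝒮, ∀ t ∈ c, t ⊆ ub := by
      intro c hc hchain
      refine ⟨⋃₀ c, ⟨sUnion_subset fun t ht => (hc ht).1, ?_⟩,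
        fun t ht => subset_sUnion_of_mem ht⟩
      intro a ha b hb hab
      obtain ⟨ta, hta, haa⟩ := ha
      obtain ⟨tb, htb, hbb⟩ := hb
      rcases eq_or_ne ta tb with rfl | hne
      · exact (hc hta).2 haa hbb hab
      · rcases hchain hta htb hne with h | h
        · exact (hc htb).2 (h haa) hbb hab
        · exact (hc hta).2 haa (h hbb) hab
    obtain ⟨M, hMmem, hMmax⟩ : ∃ M, M ∈ 𝒮 ∧ ∀ T ∈ 𝒮, M ⊆ T → T = M := by
      obtain ⟨M, hM⟩ := zorn_subset 𝒮 hzorn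
      exact ⟨M, hM.1, fun T hT hMT => subset_antisymm (hM.2 hT hMT) hMT⟩
    have hMsphere : M ⊆ sphere (0 : EuclideanSpace ℝ (Fin n)) R := hMmem.1
    have hMsep := hMmem.2
    have hcov : ∀ p ∈ sphere (0 : EuclideanSpace ℝ (Fin n)) R, ∃ z ∈ M, dist p z ≤ 2 * s := by
      intro p hp
      by_contra hcon
      push_neg at hcon
      have hpM : p ∉ M := fun h => by
        have := hcon p h
        simp only [dist_self] at this
        linarith
      have hins : insert p M ∈ 𝒮 := by
        refine ⟨insert_subset hp hMsphere, ?_⟩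
        rw [Set.pairwise_insert]
        exact ⟨hMsep, fun b hb hbp => ⟨hcon b hb, by rw [dist_comm]; exact hcon b hb⟩⟩
      have heq := hMmax _ hins (subset_insert _ _)
      exact hpM (heq ▸ mem_insert p M)
    have hcnt : M.Countable := by
      have hdisj : M.PairwiseDisjoint fun z => ball z s := by
        intro a ha b hb hab
        exact ball_disjoint_ball (by have := hMsep ha hb hab; linarith)
      exact hdisj.countable_of_isOpen (fun z _ => isOpen_ball) fun z _ => ⟨z, mem_ball_self hs⟩
    haveI := hcnt.to_subtype
    have htrans : ∀ z : M, ∫⁻ y in closedBall (z : EuclideanSpace ℝ (Fin n)) s,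
        ENNReal.ofReal |f y| ∂μH[(n : ℝ)] = m := by
      intro z
      exact radial_transfer hrad (mem_sphere_zero_iff_norm.1 (hMsphere z.2)).symm s
    have hdisj2 : Pairwise (Function.onFun Disjoint fun z : M =>
        closedBall (z : EuclideanSpace ℝ (Fin n)) s) := by
      intro a b hab
      have hne : (a : EuclideanSpace ℝ (Fin n)) ≠ b := Subtype.coe_injective.ne hab
      exact closedBall_disjoint_closedBall (by have := hMsep a.2 b.2 hne; linarith)
    have hsum : ∑' _ : M, m ≤ L := by
      calc ∑' z : M, m = ∑' z : M, ∫⁻ y in closedBall (z : EuclideanSpace ℝ (Fin n)) s,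
            ENNReal.ofReal |f y| ∂μH[(n : ℝ)] := tsum_congr fun z => (htrans z).symm
        _ = ∫⁻ y in ⋃ z : M, closedBall (z : EuclideanSpace ℝ (Fin n)) s,
            ENNReal.ofReal |f y| ∂μH[(n : ℝ)] :=
          (lintegral_iUnion (fun _ => measurableSet_closedBall) hdisj2 _).symm
        _ ≤ L := setLIntegral_le_lintegral _ _
    have hsR4 : (0:ℝ) ≤ R - 2 * s := by linarith
    set ν : Measure (EuclideanSpace ℝ (Fin n)) := volume with hν
    set B := ν (ball (0 : EuclideanSpace ℝ (Fin n)) 1) with hB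
    have hBpos : B ≠ 0 := (measure_ball_pos ν _ one_pos).ne'
    have hBtop : B ≠ ⊤ := measure_ball_lt_top.ne
    set A := (R + 2*s)^n - (R - 2*s)^n with hA
    have hApos : 0 < A := by
      have h1 : (R - 2*s) < (R + 2*s) := by linarith
      have := pow_lt_pow_left₀ h1 hsR4 (by omega : n ≠ 0)
      simp only [hA]
      linarith
    have hsub : ball (0 : EuclideanSpace ℝ (Fin n)) (R - 2*s) ⊆
        closedBall (0 : EuclideanSpace ℝ (Fin n)) (R + 2*s) :=
      ball_subset_closedBall.trans (closedBall_subset_closedBall (by linarith))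
    have hAnnvol : ν (closedBall (0 : EuclideanSpace ℝ (Fin n)) (R + 2*s) \
        ball (0 : EuclideanSpace ℝ (Fin n)) (R - 2*s)) = ENNReal.ofReal A * B := by
      rw [measure_diff hsub measurableSet_ball.nullMeasurableSet measure_ball_lt_top.ne,
        Measure.addHaar_closedBall ν _ (by linarith : (0:ℝ) ≤ R + 2*s),
        Measure.addHaar_ball ν _ hsR4, finrank_euclideanSpace_fin,
        ← ENNReal.sub_mul (fun _ _ => hBtop), ← ENNReal.ofReal_sub _ (pow_nonneg hsR4 _)]
    have hcover : closedBall (0 : EuclideanSpace ℝ (Fin n)) (R + 2*s) \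
        ball (0 : EuclideanSpace ℝ (Fin n)) (R - 2*s) ⊆
        ⋃ z : M, closedBall (z : EuclideanSpace ℝ (Fin n)) (4*s) := by
      rintro y ⟨hy1, hy2⟩
      simp only [mem_closedBall, dist_zero_right] at hy1
      simp only [mem_ball, dist_zero_right, not_lt] at hy2
      have hy0 : 0 < ‖y‖ := by linarith
      set p := (R / ‖y‖) • y with hp
      have hpnorm : ‖p‖ = R := by
        rw [hp, norm_smul, Real.norm_eq_abs, abs_of_pos (div_pos hR hy0),
          div_mul_cancel₀ _ hy0.ne']
      obtain ⟨z, hzM, hzp⟩ := hcov p (mem_sphere_zero_iff_norm.2 hpnorm)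
      have hyp : dist y p ≤ 2 * s := by
        rw [dist_eq_norm, hp]
        have h1 : y - (R / ‖y‖) • y = (1 - R / ‖y‖) • y := by
          rw [sub_smul, one_smul]
        rw [h1, norm_smul, Real.norm_eq_abs]
        have h2 : |1 - R/‖y‖| * ‖y‖ = |‖y‖ - R| := by
          rw [← abs_of_pos hy0, ← abs_mul]
          · congr 1
            field_simp
            rw [abs_of_pos hy0]; ring
        rw [h2]
        rw [abs_le]
        constructor <;> linarith
      refine mem_iUnion.2 ⟨⟨z, hzM⟩, ?_⟩
      rw [mem_closedBall]
      calc dist y z ≤ dist y p + dist p z := dist_triangle _ _ _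
        _ ≤ 2*s + 2*s := add_le_add hyp hzp
        _ = 4*s := by ring
    have hvol4 : ∀ z : M, ν (closedBall (z : EuclideanSpace ℝ (Fin n)) (4*s)) =
        ENNReal.ofReal ((4*s)^n) * B := fun z => by
      rw [Measure.addHaar_closedBall ν _ (by positivity), finrank_euclideanSpace_fin]
    have hchain : m * (ENNReal.ofReal A * B) ≤ (ENNReal.ofReal ((4*s)^n) * B) * L := by
      calc m * (ENNReal.ofReal A * B)
          = m * ν (closedBall (0 : EuclideanSpace ℝ (Fin n)) (R + 2*s) \
            ball (0 : EuclideanSpace ℝ (Fin n)) (R - 2*s)) := by rw [hAnnvol]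
        _ ≤ m * ∑' z : M, ν (closedBall (z : EuclideanSpace ℝ (Fin n)) (4*s)) :=
            mul_le_mul_right ((measure_mono hcover).trans (measure_iUnion_le _)) _
        _ = m * ∑' _ : M, (ENNReal.ofReal ((4*s)^n) * B) := by
            congr 1; exact tsum_congr fun z => hvol4 z
        _ = ∑' _ : M, m * (ENNReal.ofReal ((4*s)^n) * B) := ENNReal.tsum_mul_left.symm
        _ = (∑' _ : M, m) * (ENNReal.ofReal ((4*s)^n) * B) := ENNReal.tsum_mul_right
        _ ≤ L * (ENNReal.ofReal ((4*s)^n) * B) := mul_le_mul_left hsum _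
        _ = (ENNReal.ofReal ((4*s)^n) * B) * L := mul_comm _ _
    have hkey : (4*s)^n ≤ (8 * (8*s/R)^3) * A := by
      have ha1 : (0:ℝ) < 8*s/R := by positivity
      have ha2 : 8*s/R ≤ 1 := by rw [div_le_one hR]; linarith
      have hpow : (8*s/R)^(n-1) ≤ (8*s/R)^3 := pow_le_pow_of_le_one ha1.le ha2 (by omega)
      have hhalf : R/2 ≤ R - 2*s := by linarith
      have hpow2 : (R/2)^(n-1) ≤ (R-2*s)^(n-1) := pow_le_pow_left₀ (by positivity) hhalf _
      have hfac : (4*s)^n = 4*s * ((8*s/R)^(n-1) * (R/2)^(n-1)) := by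
        rw [← mul_pow]
        have h8 : 8*s/R * (R/2) = 4*s := by field_simp; ring
        rw [h8, ← pow_succ']
        congr 1
        omega
      have hA1 : 4*s*(R-2*s)^(n-1) ≤ A := by
        have e1 : (R+2*s)^n = (R+2*s) * (R+2*s)^(n-1) := by
          rw [← pow_succ']; congr 1; omega
        have e2 : (R-2*s)^n = (R-2*s) * (R-2*s)^(n-1) := by
          rw [← pow_succ']; congr 1; omega
        have h3 : (R-2*s)^(n-1) ≤ (R+2*s)^(n-1) := pow_le_pow_left₀ hsR4 (by linarith) _
        have h4 : (R+2*s) * (R-2*s)^(n-1) ≤ (R+2*s)^n := by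
          rw [e1]; exact mul_le_mul_of_nonneg_left h3 (by linarith)
        have h5 : (0:ℝ) ≤ (R-2*s)^(n-1) := pow_nonneg hsR4 _
        simp only [hA]
        rw [e2]
        nlinarith [h4]
      calc (4*s)^n = 4*s * ((8*s/R)^(n-1) * (R/2)^(n-1)) := hfac
        _ ≤ 4*s * ((8*s/R)^3 * (R-2*s)^(n-1)) := by
            refine mul_le_mul_of_nonneg_left ?_ (by positivity)
            exact mul_le_mul hpow hpow2 (by positivity) (by positivity)
        _ = (8*s/R)^3 * (4*s*(R-2*s)^(n-1)) := by ring
        _ ≤ (8*s/R)^3 * A := mul_le_mul_of_nonneg_left hA1 (by positivity)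
        _ ≤ (8 * (8*s/R)^3) * A := by nlinarith [hApos.le, pow_nonneg ha1.le 3]
    have hABne : ENNReal.ofReal A * B ≠ 0 := by
      apply mul_ne_zero _ hBpos
      simp only [ne_eq, ENNReal.ofReal_eq_zero, not_le]
      exact hApos
    have hABtop : ENNReal.ofReal A * B ≠ ⊤ := ENNReal.mul_ne_top ENNReal.ofReal_ne_top hBtop
    have hstep : (ENNReal.ofReal ((4*s)^n) * B) * L ≤
        (ENNReal.ofReal (8*(8*s/R)^3) * L) * (ENNReal.ofReal A * B) := by
      have h6 : ENNReal.ofReal ((4*s)^n) ≤ ENNReal.ofReal (8*(8*s/R)^3) * ENNReal.ofReal A := by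
        rw [← ENNReal.ofReal_mul (by positivity)]
        exact ENNReal.ofReal_le_ofReal hkey
      calc (ENNReal.ofReal ((4*s)^n) * B) * L
          ≤ (ENNReal.ofReal (8*(8*s/R)^3) * ENNReal.ofReal A * B) * L :=
            mul_le_mul_left (mul_le_mul_left h6 _) _
        _ = (ENNReal.ofReal (8*(8*s/R)^3) * L) * (ENNReal.ofReal A * B) := by ring
    exact (ENNReal.mul_le_mul_iff_left hABne hABtop).1 (hchain.trans hstep)

private def pieces (n : ℕ) (x : EuclideanSpace ℝ (Fin n)) (R : ℝ) :
    ℕ → Set (EuclideanSpace ℝ (Fin n))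
  | 0 => {y | R / 2 < ‖x - y‖} ∪ {x}
  | j + 1 => {y | R / 2 ^ (j + 2) < ‖x - y‖ ∧ ‖x - y‖ ≤ R / 2 ^ (j + 1)}

private noncomputable def coef (R : ℝ) : ℕ → ℝ≥0∞
  | 0 => ENNReal.ofReal (4 / R^2)
  | j + 1 => ENNReal.ofReal (16384 / R^2) * (2⁻¹ : ℝ≥0∞)^(j+1)

set_option maxHeartbeats 2000000 in
/-- Case 2 (n > 3) of the proof of Proposition 2.1 (iii): for `n ≥ 4` there is a constant
`C = C(n) > 0` so that for every radially symmetric integrable `f` and every `x ≠ 0`,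
`|x|² ∫ |x − y|⁻² |f(y)| dH^n(y) ≤ C ∫ |f| dH^n`. -/
theorem radial_potential_quadratic_decay
    (n : ℕ) (hn : 4 ≤ n) :
    ∃ C : ℝ, 0 < C ∧ ∀ f : EuclideanSpace ℝ (Fin n) → ℝ, Measurable f →
      (∀ x y : EuclideanSpace ℝ (Fin n), ‖x‖ = ‖y‖ → f x = f y) →
      Integrable f μH[(n : ℝ)] →
      ∀ x : EuclideanSpace ℝ (Fin n), x ≠ 0 →
        ENNReal.ofReal (‖x‖ ^ 2) *
            ∫⁻ y, ENNReal.ofReal ((‖x - y‖ ^ 2)⁻¹ * |f y|) ∂μH[(n : ℝ)] ≤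
          ENNReal.ofReal (C * ∫ y, |f y| ∂μH[(n : ℝ)]) := by
  refine ⟨16388, by norm_num, ?_⟩
  intro f hmf hrad hint x hx
  have hR : 0 < ‖x‖ := norm_pos_iff.2 hx
  set R := ‖x‖ with hRdef
  set L := ∫⁻ y, ENNReal.ofReal |f y| ∂μH[(n : ℝ)] with hLdef
  have hLfin : L = ENNReal.ofReal (∫ y, |f y| ∂μH[(n : ℝ)]) :=
    (ofReal_integral_eq_lintegral_ofReal hint.abs
      (Eventually.of_forall fun y => abs_nonneg _)).symm
  set F : EuclideanSpace ℝ (Fin n) → ℝ≥0∞ :=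
    fun y => ENNReal.ofReal ((‖x - y‖ ^ 2)⁻¹ * |f y|) with hF
  have habs : Measurable fun y => ENNReal.ofReal |f y| := hmf.abs.ennreal_ofReal
  -- covering of the whole space by the dyadic pieces
  have hcover : (Set.univ : Set (EuclideanSpace ℝ (Fin n))) ⊆ ⋃ j, pieces n x R j := by
    intro y _
    rcases eq_or_ne y x with rfl | hyx
    · exact mem_iUnion.2 ⟨0, Or.inr rfl⟩
    rcases lt_or_ge (R/2) ‖x - y‖ with hfar | hnear
    · exact mem_iUnion.2 ⟨0, Or.inl hfar⟩
    have hd : 0 < ‖x - y‖ := norm_pos_iff.2 (sub_ne_zero.2 (Ne.symm hyx))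
    have hex : ∃ j : ℕ, R / 2 ^ (j + 2) < ‖x - y‖ := by
      obtain ⟨k, hk⟩ := pow_unbounded_of_one_lt (R / ‖x - y‖) (one_lt_two (α := ℝ))
      refine ⟨k, ?_⟩
      rw [div_lt_iff₀ (by positivity)]
      rw [div_lt_iff₀ hd] at hk
      calc R < 2 ^ k * ‖x - y‖ := hk
        _ ≤ ‖x - y‖ * 2 ^ (k+2) := by
            rw [mul_comm]
            exact mul_le_mul_of_nonneg_left
              (pow_le_pow_right₀ (by norm_num) (by omega)) hd.le
    have hj0lt : R / 2 ^ (Nat.find hex + 2) < ‖x - y‖ := Nat.find_spec hex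
    have hj0le : ‖x - y‖ ≤ R / 2 ^ (Nat.find hex + 1) := by
      rcases Nat.eq_zero_or_pos (Nat.find hex) with h0 | hpos
      · rw [h0]; simpa using hnear
      · have hmin := Nat.find_min hex (show Nat.find hex - 1 < Nat.find hex by omega)
        have hj : Nat.find hex - 1 + 2 = Nat.find hex + 1 := by omega
        rw [hj] at hmin
        linarith [not_lt.1 hmin]
    exact mem_iUnion.2 ⟨Nat.find hex + 1, ⟨hj0lt, hj0le⟩⟩
  -- bound on each piece
  have hbound : ∀ j, ∫⁻ y in pieces n x R j, F y ∂μH[(n : ℝ)] ≤ coef R j * L := by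
    intro j
    cases j with
    | zero =>
      have hmono : ∫⁻ y in pieces n x R 0, F y ∂μH[(n : ℝ)] ≤
          ∫⁻ y in pieces n x R 0,
            ENNReal.ofReal (4/R^2) * ENNReal.ofReal |f y| ∂μH[(n : ℝ)] := by
        refine setLIntegral_mono (measurable_const.mul habs) ?_
        intro y hy
        rcases hy with hy | hy
        · rw [← ENNReal.ofReal_mul (by positivity)]
          apply ENNReal.ofReal_le_ofReal
          apply mul_le_mul_of_nonneg_right _ (abs_nonneg _)
          have h1 : (R/2)^2 ≤ ‖x - y‖^2 := pow_le_pow_left₀ (by positivity) (le_of_lt hy) 2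
          have h2 : (‖x - y‖^2)⁻¹ ≤ ((R/2)^2)⁻¹ :=
            inv_anti₀ (by positivity) h1
          refine h2.trans_eq ?_
          rw [div_pow, inv_div]
          norm_num
        · simp only [mem_singleton_iff] at hy
          subst hy
          simp [hF, sub_self]
      calc ∫⁻ y in pieces n x R 0, F y ∂μH[(n : ℝ)] ≤ _ := hmono
        _ = ENNReal.ofReal (4/R^2) *
            ∫⁻ y in pieces n x R 0, ENNReal.ofReal |f y| ∂μH[(n : ℝ)] :=
          lintegral_const_mul _ habs
        _ ≤ ENNReal.ofReal (4/R^2) * L :=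
          mul_le_mul_right (setLIntegral_le_lintegral _ _) _
        _ = coef R 0 * L := rfl
    | succ j =>
      have hsub : pieces n x R (j+1) ⊆ closedBall x (R / 2^(j+1)) := by
        intro y hy
        rw [mem_closedBall, dist_comm, dist_eq_norm]
        exact hy.2
      have hstep1 : ∫⁻ y in pieces n x R (j+1), F y ∂μH[(n : ℝ)] ≤
          ENNReal.ofReal (4^(j+2)/R^2) *
            ∫⁻ y in closedBall x (R / 2^(j+1)), ENNReal.ofReal |f y| ∂μH[(n : ℝ)] := by
        calc ∫⁻ y in pieces n x R (j+1), F y ∂μH[(n : ℝ)]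
            ≤ ∫⁻ y in pieces n x R (j+1),
                ENNReal.ofReal (4^(j+2)/R^2) * ENNReal.ofReal |f y| ∂μH[(n : ℝ)] := by
              refine setLIntegral_mono (measurable_const.mul habs) ?_
              intro y hy
              rw [← ENNReal.ofReal_mul (by positivity)]
              apply ENNReal.ofReal_le_ofReal
              apply mul_le_mul_of_nonneg_right _ (abs_nonneg _)
              have h1 : (R/2^(j+2))^2 ≤ ‖x - y‖^2 :=
                pow_le_pow_left₀ (by positivity) hy.1.le 2
              have h2 : (‖x - y‖^2)⁻¹ ≤ ((R/2^(j+2))^2)⁻¹ :=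
                inv_anti₀ (by positivity) h1
              refine h2.trans_eq ?_
              have h3 : ((2:ℝ)^(j+2))^2 = 4^(j+2) := by
                rw [← pow_mul, mul_comm, pow_mul]; norm_num
              rw [div_pow, inv_div, h3]
          _ = ENNReal.ofReal (4^(j+2)/R^2) *
              ∫⁻ y in pieces n x R (j+1), ENNReal.ofReal |f y| ∂μH[(n : ℝ)] :=
            lintegral_const_mul _ habs
          _ ≤ _ := mul_le_mul_right (lintegral_mono_set hsub) _
      have hs2 : (0:ℝ) < R / 2^(j+1) := by positivity
      have hs3 : R / 2^(j+1) ≤ R / 2 := by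
        apply div_le_div_of_nonneg_left hR.le two_pos
        calc (2:ℝ) = 2^1 := (pow_one 2).symm
          _ ≤ 2^(j+1) := pow_le_pow_right₀ (by norm_num) (by omega)
      have hstep2 := ball_mass hn hrad hx hs2 hs3
      have harith : (4:ℝ)^(j+2)/R^2 * (8*(8*(R/2^(j+1))/R)^3) = 16384/R^2 * (1/2)^(j+1) := by
        have h2ne : ((2:ℝ))^(j+1) ≠ 0 := by positivity
        have e1 : 8*(R/2^(j+1))/R = 8/2^(j+1) := by
          field_simp
        rw [e1, div_mul_eq_mul_div]
        have key : (4:ℝ)^(j+2) * 8^3 * 8 * 2^(j+1) = 16384 * (2^(j+1))^3 := by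
          rw [show ((4:ℝ)) = 2^2 by norm_num, ← pow_mul, ← pow_mul]
          have e : (2:ℝ)^(2*(j+2)) * 2^(j+1) = 2^((j+1)*3) * 2^2 := by
            rw [← pow_add, ← pow_add]
            congr 1
            ring
          linear_combination (4096:ℝ) * e
        have e2 : (4:ℝ)^(j+2) * (8*(8/2^(j+1))^3) = 16384 * (1/2)^(j+1) := by
          rw [div_pow, div_pow, one_pow]
          field_simp
          rw [show (4:ℝ) = 2^2 by norm_num, ← pow_mul]
          ring
        rw [e2]
        ring
      calc ∫⁻ y in pieces n x R (j+1), F y ∂μH[(n : ℝ)] ≤ _ := hstep1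
        _ ≤ ENNReal.ofReal (4^(j+2)/R^2) *
            (ENNReal.ofReal (8*(8*(R/2^(j+1))/R)^3) * L) :=
          mul_le_mul_right hstep2 _
        _ = coef R (j+1) * L := by
          have hcoefsucc : coef R (j+1) = ENNReal.ofReal (16384/R^2) * (2⁻¹ : ℝ≥0∞)^(j+1) := rfl
          have hhalf2 : ENNReal.ofReal ((1:ℝ)/2) = (2⁻¹ : ℝ≥0∞) := by
            rw [one_div, ENNReal.ofReal_inv_of_pos two_pos]
            norm_num
          rw [← mul_assoc, ← ENNReal.ofReal_mul (by positivity), harith, hcoefsucc,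
            ENNReal.ofReal_mul (by positivity), ENNReal.ofReal_pow (by norm_num), hhalf2]
  -- sum of the coefficients
  have htsum : ∑' j, coef R j ≤ ENNReal.ofReal (16388 / R^2) := by
    rw [tsum_eq_zero_add' ENNReal.summable]
    have h1 : ∑' j : ℕ, coef R (j+1) = ENNReal.ofReal (16384/R^2) := by
      have hc : ∀ j : ℕ, coef R (j+1) = ENNReal.ofReal (16384/R^2) * (2⁻¹ : ℝ≥0∞)^(j+1) :=
        fun j => rfl
      simp only [hc]
      rw [ENNReal.tsum_mul_left]
      have h2 : ∑' j : ℕ, (2⁻¹ : ℝ≥0∞)^(j+1) = 1 := by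
        simp only [pow_succ']
        rw [ENNReal.tsum_mul_left, ENNReal.tsum_geometric, ENNReal.one_sub_inv_two, inv_inv]
        exact ENNReal.inv_mul_cancel two_ne_zero ENNReal.ofNat_ne_top
      rw [h2, mul_one]
    rw [h1, show coef R 0 = ENNReal.ofReal (4/R^2) from rfl,
      ← ENNReal.ofReal_add (by positivity) (by positivity)]
    apply ENNReal.ofReal_le_ofReal
    rw [← add_div]
    norm_num
  -- assemble
  calc ENNReal.ofReal (R ^ 2) * ∫⁻ y, F y ∂μH[(n : ℝ)]
      = ENNReal.ofReal (R ^ 2) * ∫⁻ y in Set.univ, F y ∂μH[(n : ℝ)] := by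
        rw [setLIntegral_univ]
    _ ≤ ENNReal.ofReal (R ^ 2) * ∫⁻ y in ⋃ j, pieces n x R j, F y ∂μH[(n : ℝ)] :=
        mul_le_mul_right (lintegral_mono_set hcover) _
    _ ≤ ENNReal.ofReal (R ^ 2) * ∑' j, ∫⁻ y in pieces n x R j, F y ∂μH[(n : ℝ)] :=
        mul_le_mul_right (lintegral_iUnion_le _ _) _
    _ ≤ ENNReal.ofReal (R ^ 2) * ∑' j, coef R j * L :=
        mul_le_mul_right (ENNReal.tsum_le_tsum hbound) _
    _ = ENNReal.ofReal (R ^ 2) * ((∑' j, coef R j) * L) := by rw [ENNReal.tsum_mul_right]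
    _ ≤ ENNReal.ofReal (R ^ 2) * (ENNReal.ofReal (16388/R^2) * L) :=
        mul_le_mul_right (mul_le_mul_left htsum _) _
    _ = ENNReal.ofReal 16388 * L := by
        rw [← mul_assoc, ← ENNReal.ofReal_mul (by positivity)]
        congr 2
        field_simp
    _ = ENNReal.ofReal (16388 * ∫ y, |f y| ∂μH[(n : ℝ)]) := by
        rw [hLfin, ← ENNReal.ofReal_mul (by norm_num)]
end

section
/- Let n ≥ 3 and k ≥ 1 be integers. For every x ∈ ℝⁿ with x ≠ 0, the k-fold iterated Laplacian of log|x| satisfies Δ^k (log|·|)(x) = (n − 2) · ( ∏_{j=1}^{k−1} 2j (2j + 2 − n) ) · |x|^{−2k}, where the empty product (for k = 1) is 1. -/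
open MeasureTheory Filter Metric Real Topology

/-- The Euclidean Laplacian `Δu = ∑ ∂²u/∂x_k²` on `ℝⁿ`. -/
noncomputable def laplacian {n : ℕ} (f : EuclideanSpace ℝ (Fin n) → ℝ)
    (x : EuclideanSpace ℝ (Fin n)) : ℝ :=
  ∑ i : Fin n, iteratedFDeriv ℝ 2 f x ![EuclideanSpace.single i 1, EuclideanSpace.single i 1]

section aux

variable {n : ℕ}

local notation "E" => EuclideanSpace ℝ (Fin n)

noncomputable def innB (n : ℕ) :
    EuclideanSpace ℝ (Fin n) →L[ℝ] EuclideanSpace ℝ (Fin n) →L[ℝ] ℝ := innerSL ℝ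

@[simp] lemma innB_apply (x y : E) : innB n x y = inner ℝ x y := rfl

lemma laplacian_congr {f g : E → ℝ} {x : E} (h : f =ᶠ[nhds x] g) :
    laplacian f x = laplacian g x := by
  unfold laplacian
  refine Finset.sum_congr rfl fun i _ => ?_
  rw [iteratedFDeriv_two_apply, iteratedFDeriv_two_apply, h.fderiv.fderiv_eq]

lemma hasFDerivAt_radial (f f' : ℝ → ℝ) (hf : ∀ t > (0:ℝ), HasDerivAt f (f' t) t)
    (y : E) (hy : y ≠ 0) :
    HasFDerivAt (fun z : E => f (‖z‖ ^ 2)) ((f' (‖y‖ ^ 2)) • ((2:ℝ) • innB n y)) y := by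
  have h1 : HasFDerivAt (fun z : E => ‖z‖ ^ 2) ((2:ℝ) • innB n y) y := by
    have h2 : ((2:ℕ) • (innerSL ℝ y : E →L[ℝ] ℝ)) = (2:ℝ) • innB n y := by
      ext v; simp [two_smul]
    rw [← h2]
    exact (hasStrictFDerivAt_norm_sq y).hasFDerivAt
  have ht : (0:ℝ) < ‖y‖ ^ 2 := pow_pos (norm_pos_iff.mpr hy) 2
  exact (hf _ ht).comp_hasFDerivAt y h1

lemma sum_inner_single_sq (x : E) :
    ∑ i : Fin n, (inner ℝ x (EuclideanSpace.single i (1:ℝ)) : ℝ) ^ 2 = ‖x‖ ^ 2 := by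
  have : ∀ i : Fin n, (inner ℝ x (EuclideanSpace.single i (1:ℝ)) : ℝ) = x i := by
    intro i
    rw [EuclideanSpace.inner_single_right]
    simp
  simp_rw [this]
  rw [EuclideanSpace.norm_eq, Real.sq_sqrt (by positivity)]
  simp [sq_abs]

lemma laplacian_radial (f f' f'' : ℝ → ℝ)
    (hf : ∀ t > (0:ℝ), HasDerivAt f (f' t) t)
    (hf' : ∀ t > (0:ℝ), HasDerivAt f' (f'' t) t)
    (x : E) (hx : x ≠ 0) :
    laplacian (fun z : E => f (‖z‖ ^ 2)) x
      = 4 * ‖x‖ ^ 2 * f'' (‖x‖ ^ 2) + 2 * n * f' (‖x‖ ^ 2) := by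
  set t := ‖x‖ ^ 2 with ht_def
  have ht : (0:ℝ) < t := pow_pos (norm_pos_iff.mpr hx) 2
  set G : E → (E →L[ℝ] ℝ) := fun y => (f' (‖y‖ ^ 2)) • ((2:ℝ) • innB n y) with hG
  have hev : fderiv ℝ (fun z : E => f (‖z‖ ^ 2)) =ᶠ[nhds x] G := by
    filter_upwards [IsOpen.mem_nhds isOpen_compl_singleton hx] with y hy
    exact (hasFDerivAt_radial f f' hf y hy).fderiv
  -- derivative of G at x
  have hc : HasFDerivAt (fun y : E => f' (‖y‖ ^ 2))
      ((f'' t) • ((2:ℝ) • innB n x)) x := hasFDerivAt_radial f' f'' hf' x hx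
  have hg : HasFDerivAt (fun y : E => (2:ℝ) • innB n y)
      ((2:ℝ) • innB n) x := ((2:ℝ) • innB n).hasFDerivAt
  have hGd : HasFDerivAt G
      ((f' t) • ((2:ℝ) • innB n) +
        ((f'' t) • ((2:ℝ) • innB n x)).smulRight ((2:ℝ) • innB n x)) x :=
    hc.smul hg
  have key : ∀ i : Fin n,
      iteratedFDeriv ℝ 2 (fun z : E => f (‖z‖ ^ 2)) x
        ![EuclideanSpace.single i 1, EuclideanSpace.single i 1]
      = f' t * (2 * inner ℝ (EuclideanSpace.single i (1:ℝ)) (EuclideanSpace.single i (1:ℝ)))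
        + (f'' t * (2 * inner ℝ x (EuclideanSpace.single i (1:ℝ))))
          * (2 * inner ℝ x (EuclideanSpace.single i (1:ℝ))) := by
    intro i
    rw [iteratedFDeriv_two_apply]
    have : fderiv ℝ (fderiv ℝ (fun z : E => f (‖z‖ ^ 2))) x = fderiv ℝ G x :=
      hev.fderiv_eq
    rw [Matrix.cons_val_zero, Matrix.cons_val_one, Matrix.cons_val_zero, this, hGd.fderiv]
    simp [innerSL_apply_apply, mul_comm, mul_assoc, mul_left_comm]
  unfold laplacian
  rw [Finset.sum_congr rfl fun i _ => key i]
  have hsingle : ∀ i : Fin n,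
      (inner ℝ (EuclideanSpace.single i (1:ℝ)) (EuclideanSpace.single i (1:ℝ)) : ℝ) = 1 := by
    intro i
    rw [EuclideanSpace.inner_single_right]
    simp [EuclideanSpace.single_apply]
  simp_rw [hsingle]
  rw [Finset.sum_add_distrib, Finset.sum_const]
  have : ∑ i : Fin n, (f'' t * (2 * (inner ℝ x (EuclideanSpace.single i (1:ℝ)) : ℝ)))
      * (2 * (inner ℝ x (EuclideanSpace.single i (1:ℝ)) : ℝ))
      = 4 * f'' t * ∑ i : Fin n, (inner ℝ x (EuclideanSpace.single i (1:ℝ)) : ℝ) ^ 2 := by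
    rw [Finset.mul_sum]
    refine Finset.sum_congr rfl fun i _ => ?_
    ring
  rw [this, sum_inner_single_sq]
  simp [Finset.card_univ]
  ring

lemma iter_lap (hn : 3 ≤ n) (k : ℕ) (hk : 1 ≤ k) :
    ∀ y : EuclideanSpace ℝ (Fin n), y ≠ 0 →
      (laplacian^[k] (fun z : EuclideanSpace ℝ (Fin n) => Real.log ‖z‖)) y
        = ((n : ℝ) - 2) *
            (∏ j ∈ Finset.Icc 1 (k - 1), ((2 * (j : ℝ)) * (2 * (j : ℝ) + 2 - (n : ℝ)))) *
            (‖y‖ ^ 2) ^ (-(k : ℤ)) := by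
  induction k, hk using Nat.le_induction with
  | base =>
    intro y hy
    have hfun : (fun z : EuclideanSpace ℝ (Fin n) => Real.log ‖z‖)
        = fun z : EuclideanSpace ℝ (Fin n) => Real.log (‖z‖ ^ 2) / 2 := by
      funext z
      rw [Real.log_pow]
      push_cast
      ring
    have hy2 : (0:ℝ) < ‖y‖ ^ 2 := pow_pos (norm_pos_iff.mpr hy) 2
    rw [Function.iterate_one, hfun,
      laplacian_radial (fun t => Real.log t / 2) (fun t => t⁻¹ / 2)
        (fun t => -(t ^ 2)⁻¹ / 2)
        (fun t ht => (Real.hasDerivAt_log ht.ne').div_const 2)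
        (fun t ht => (hasDerivAt_inv ht.ne').div_const 2) y hy]
    norm_num
    field_simp
    ring
  | succ k hk ih =>
    intro y hy
    set C : ℝ := ((n : ℝ) - 2) *
        (∏ j ∈ Finset.Icc 1 (k - 1), ((2 * (j : ℝ)) * (2 * (j : ℝ) + 2 - (n : ℝ)))) with hC
    have hev : (laplacian^[k] (fun z : EuclideanSpace ℝ (Fin n) => Real.log ‖z‖))
        =ᶠ[nhds y] fun z => C * (‖z‖ ^ 2) ^ (-(k : ℤ)) := by
      filter_upwards [IsOpen.mem_nhds isOpen_compl_singleton hy] with z hz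
      exact ih z hz
    rw [Function.iterate_succ_apply', laplacian_congr hev]
    have hy2 : (0:ℝ) < ‖y‖ ^ 2 := pow_pos (norm_pos_iff.mpr hy) 2
    rw [laplacian_radial (fun t => C * t ^ (-(k:ℤ)))
        (fun t => C * ((Int.cast (-(k:ℤ)) : ℝ) * t ^ (-(k:ℤ) - 1)))
        (fun t => C * ((Int.cast (-(k:ℤ)) : ℝ) * ((Int.cast (-(k:ℤ) - 1) : ℝ) * t ^ (-(k:ℤ) - 1 - 1))))
        (fun t ht => (hasDerivAt_zpow _ _ (Or.inl ht.ne')).const_mul C)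
        (fun t ht => (((hasDerivAt_zpow _ _ (Or.inl ht.ne')).const_mul
            ((Int.cast (-(k:ℤ)) : ℝ))).const_mul C))
        y hy]
    -- now pure algebra
    set t : ℝ := ‖y‖ ^ 2 with ht_def
    have ht : (0:ℝ) < t := hy2
    have hprod : (∏ j ∈ Finset.Icc 1 (k + 1 - 1), ((2 * (j : ℝ)) * (2 * (j : ℝ) + 2 - (n : ℝ))))
        = (∏ j ∈ Finset.Icc 1 (k - 1), ((2 * (j : ℝ)) * (2 * (j : ℝ) + 2 - (n : ℝ))))
          * ((2 * (k : ℝ)) * (2 * (k : ℝ) + 2 - (n : ℝ))) := by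
      have hk1 : k - 1 + 1 = k := Nat.succ_pred_eq_of_pos hk
      rw [Nat.add_sub_cancel, ← hk1, Finset.prod_Icc_succ_top (by omega)]
      rw [hk1]
    rw [hprod]
    have e1 : t ^ (-(k:ℤ) - 1 - 1) = t ^ (-(k:ℤ) - 1) * t⁻¹ := by
      rw [zpow_sub_one₀ ht.ne']
    have e2 : (-(((k:ℕ)+1 : ℕ)) : ℤ) = -(k:ℤ) - 1 := by push_cast; ring
    rw [e1]
    push_cast
    rw [show (-((k:ℤ) + 1)) = -(k:ℤ) - 1 by ring]
    field_simp
    rw [hC]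
    ring
  done

end aux

/-- The pointwise computation underlying Proposition 2.1 (iv): for `n ≥ 3`, `k ≥ 1` and
`x ≠ 0`, `Δ^k log|x| = (n − 2) · (∏_{j=1}^{k−1} 2j (2j + 2 − n)) · |x|^{−2k}`. -/
theorem iterated_laplacian_log_norm
    (n : ℕ) (hn : 3 ≤ n) (k : ℕ) (hk : 1 ≤ k)
    (x : EuclideanSpace ℝ (Fin n)) (hx : x ≠ 0) :
    (laplacian^[k] (fun y : EuclideanSpace ℝ (Fin n) => Real.log ‖y‖)) x =
      ((n : ℝ) - 2) *
        (∏ j ∈ Finset.Icc 1 (k - 1), ((2 * (j : ℝ)) * (2 * (j : ℝ) + 2 - (n : ℝ)))) *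
        ‖x‖ ^ (-(2 * (k : ℤ))) := by
  rw [iter_lap hn k hk x hx]
  congr 1
  rw [← zpow_natCast ‖x‖ 2, ← zpow_mul]
  norm_num
end

section
/- Let u : (0, ∞) → ℝ be differentiable and β ∈ ℝ. If lim_{r→∞} r u′(r) = −β and ∫₁^∞ e^{u(r)} dr = ∞, then β ≤ 1. -/
open MeasureTheory Filter Metric Real Topology

/-- The elementary lemma concluding the proof of Proposition 2.1 (vi): if `u` is
differentiable on `(0,∞)` with `r u'(r) → −β` as `r → ∞`, and `∫₁^∞ e^{u(r)} dr = ∞`,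
then `β ≤ 1`. -/
theorem radial_completeness_limit_bound
    (u : ℝ → ℝ) (β : ℝ)
    (hdiff : ∀ r : ℝ, 0 < r → DifferentiableAt ℝ u r)
    (hlim : Filter.Tendsto (fun r : ℝ => r * deriv u r) Filter.atTop (𝓝 (-β)))
    (hint : ∫⁻ r in Set.Ioi (1 : ℝ), ENNReal.ofReal (Real.exp (u r)) = ⊤) :
    β ≤ 1 := by
  by_contra hcon
  push_neg at hcon
  set β' : ℝ := (1 + β) / 2 with hβ'def
  have hβ'1 : 1 < β' := by simp only [hβ'def]; linarith
  have hβ'β : β' < β := by simp only [hβ'def]; linarith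
  have hev : ∀ᶠ r in atTop, r * deriv u r < -β' :=
    hlim.eventually_lt_const (by linarith)
  obtain ⟨R₀, hR₀⟩ := eventually_atTop.mp hev
  set R : ℝ := max R₀ 1 with hRdef
  have hR1 : (1 : ℝ) ≤ R := le_max_right _ _
  have hR0 : (0 : ℝ) < R := lt_of_lt_of_le one_pos hR1
  have hRprop : ∀ r, R ≤ r → r * deriv u r < -β' := fun r hr =>
    hR₀ r (le_trans (le_max_left _ _) hr)
  -- the auxiliary function g
  set g : ℝ → ℝ := fun r => u r + β' * Real.log r with hgdef
  have hganti : AntitoneOn g (Set.Ici R) := by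
    have hconv : Convex ℝ (Set.Ici R) := convex_Ici R
    have hdg : ∀ x ∈ Set.Ici R, DifferentiableAt ℝ g x := by
      intro x hx
      have hx0 : 0 < x := lt_of_lt_of_le hR0 hx
      exact (hdiff x hx0).add ((Real.differentiableAt_log (ne_of_gt hx0)).const_mul β')
    have hcont : ContinuousOn g (Set.Ici R) := fun x hx =>
      (hdg x hx).continuousAt.continuousWithinAt
    refine antitoneOn_of_deriv_nonpos hconv hcont ?_ ?_
    · intro x hx
      rw [interior_Ici] at hx
      exact (hdg x (Set.mem_Ici.mpr (le_of_lt hx))).differentiableWithinAt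
    · intro x hx
      rw [interior_Ici] at hx
      have hx0 : 0 < x := lt_of_lt_of_le hR0 (le_of_lt hx)
      have hderiv : deriv g x = deriv u x + β' * x⁻¹ := by
        rw [hgdef]
        rw [deriv_fun_add (hdiff x hx0)
          ((Real.differentiableAt_log (ne_of_gt hx0)).const_mul β'),
          deriv_const_mul _ (Real.differentiableAt_log (ne_of_gt hx0)),
          Real.deriv_log]
      rw [hderiv]
      have h1 : x * deriv u x < -β' := hRprop x (le_of_lt hx)
      have : x * (deriv u x + β' * x⁻¹) ≤ 0 := by
        rw [mul_add, mul_comm β' x⁻¹, ← mul_assoc, mul_inv_cancel₀ (ne_of_gt hx0), one_mul]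
        linarith
      nlinarith
  -- pointwise bound for r ≥ R
  have hbound : ∀ r, R ≤ r → Real.exp (u r) ≤ Real.exp (g R) * r ^ (-β') := by
    intro r hr
    have hr0 : 0 < r := lt_of_lt_of_le hR0 hr
    have h1 : g r ≤ g R := hganti (Set.self_mem_Ici) hr hr
    have h2 : u r ≤ g R - β' * Real.log r := by
      simp only [hgdef] at h1 ⊢; linarith
    calc Real.exp (u r) ≤ Real.exp (g R - β' * Real.log r) := Real.exp_le_exp.mpr h2
      _ = Real.exp (g R) * r ^ (-β') := by
          rw [Real.rpow_def_of_pos hr0, ← Real.exp_add]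
          ring_nf
  -- finiteness on Ioi R
  have hfin1 : (∫⁻ r in Set.Ioi R, ENNReal.ofReal (Real.exp (u r))) < ⊤ := by
    have hintg : IntegrableOn (fun r : ℝ => Real.exp (g R) * r ^ (-β')) (Set.Ioi R) :=
      (integrableOn_Ioi_rpow_of_lt (by linarith) hR0).const_mul _
    have hle : (∫⁻ r in Set.Ioi R, ENNReal.ofReal (Real.exp (u r)))
        ≤ ∫⁻ r in Set.Ioi R, ENNReal.ofReal (Real.exp (g R) * r ^ (-β')) := by
      refine setLIntegral_mono' measurableSet_Ioi ?_
      intro r hr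
      exact ENNReal.ofReal_le_ofReal (hbound r (le_of_lt hr))
    exact lt_of_le_of_lt hle hintg.lintegral_lt_top
  -- finiteness on Ioc 1 R
  have hfin2 : (∫⁻ r in Set.Ioc 1 R, ENNReal.ofReal (Real.exp (u r))) < ⊤ := by
    have hcont : ContinuousOn (fun r => Real.exp (u r)) (Set.Icc 1 R) := fun x hx =>
      (Real.continuous_exp.continuousAt.comp
        (hdiff x (lt_of_lt_of_le one_pos hx.1)).continuousAt).continuousWithinAt
    obtain ⟨M, hM⟩ := (isCompact_Icc.exists_bound_of_continuousOn hcont)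
    calc (∫⁻ r in Set.Ioc 1 R, ENNReal.ofReal (Real.exp (u r)))
        ≤ ∫⁻ _ in Set.Ioc 1 R, ENNReal.ofReal M := by
          refine setLIntegral_mono' measurableSet_Ioc ?_
          intro r hr
          refine ENNReal.ofReal_le_ofReal ?_
          have := hM r (Set.mem_Icc.mpr ⟨le_of_lt hr.1, hr.2⟩)
          calc Real.exp (u r) ≤ ‖Real.exp (u r)‖ := le_abs_self _
            _ ≤ M := this
      _ = ENNReal.ofReal M * volume (Set.Ioc 1 R) := by
          rw [setLIntegral_const]
      _ < ⊤ := ENNReal.mul_lt_top ENNReal.ofReal_lt_top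
          (by rw [Real.volume_Ioc]; exact ENNReal.ofReal_lt_top)
  -- combine
  have hsplit : Set.Ioi (1 : ℝ) = Set.Ioc 1 R ∪ Set.Ioi R :=
    (Set.Ioc_union_Ioi_eq_Ioi hR1).symm
  have : (∫⁻ r in Set.Ioi (1 : ℝ), ENNReal.ofReal (Real.exp (u r))) < ⊤ := by
    rw [hsplit]
    calc (∫⁻ r in Set.Ioc 1 R ∪ Set.Ioi R, ENNReal.ofReal (Real.exp (u r)))
        ≤ (∫⁻ r in Set.Ioc 1 R, ENNReal.ofReal (Real.exp (u r)))
          + ∫⁻ r in Set.Ioi R, ENNReal.ofReal (Real.exp (u r)) :=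
          lintegral_union_le _ _ _
      _ < ⊤ := ENNReal.add_lt_top.mpr ⟨hfin2, hfin1⟩
  exact absurd hint (ne_of_lt this)
end

section
/- Let n ≥ 3. There is a constant C > 0, depending only on n, such that for every r > 0 and every y ∈ ℝⁿ with |y| ≥ r/2, (1 / H^{n−1}(∂B_r(0))) ∫_{∂B_r(0)} | log( |y| / |x − y| ) | dH^{n−1}(x) ≤ C. -/
open MeasureTheory Filter Metric Real Topology
open scoped ENNReal NNReal RealInnerProductSpace

namespace SphereLogAux


lemma Kreal (m : ℕ) :
    ((((Fintype.card (Fin m) : ℝ≥0) ^ ((1:ℝ≥0∞)/2).toReal : ℝ≥0)) : ℝ) = Real.sqrt m := by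
  have he : ((1:ℝ≥0∞)/2).toReal = (2⁻¹ : ℝ) := by
    rw [ENNReal.toReal_div]; norm_num
  rw [he, NNReal.coe_rpow, NNReal.coe_natCast, Fintype.card_fin, ← one_div, ← Real.sqrt_eq_rpow]

lemma Kennreal (m : ℕ) :
    ((((Fintype.card (Fin m) : ℝ≥0) ^ ((1:ℝ≥0∞)/2).toReal : ℝ≥0)) : ℝ≥0∞)
      = ENNReal.ofReal (Real.sqrt m) := by
  rw [← ENNReal.ofReal_coe_nnreal, Kreal]

lemma haus_le_of_subset_ball (m : ℕ) {s : Set (EuclideanSpace ℝ (Fin m))}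
    {c : EuclideanSpace ℝ (Fin m)} {ρ : ℝ} (hρ : 0 < ρ) (hs : s ⊆ Metric.ball c ρ) :
    μH[(m:ℝ)] s ≤ ENNReal.ofReal (Real.sqrt m) ^ m * ENNReal.ofReal (2 * ρ) ^ m := by
  have hd : (0:ℝ) ≤ m := Nat.cast_nonneg m
  have anti := (PiLp.antilipschitzWith_ofLp 2 (fun _ : Fin m => ℝ) :
    AntilipschitzWith _ (WithLp.equiv 2 (∀ _ : Fin m, ℝ)))
  have h1 := anti.le_hausdorffMeasure_image hd s
  rw [Kennreal, ENNReal.rpow_natCast] at h1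
  refine h1.trans ?_
  gcongr
  have hpi : μH[(m:ℝ)] ((WithLp.equiv 2 (∀ _ : Fin m, ℝ)) '' s)
      = volume ((WithLp.equiv 2 (∀ _ : Fin m, ℝ)) '' s) := by
    have := MeasureTheory.hausdorffMeasure_pi_real (ι := Fin m)
    rw [Fintype.card_fin] at this
    rw [this]
  rw [show (@WithLp.ofLp 2 (Fin m → ℝ)) = WithLp.equiv 2 (∀ _ : Fin m, ℝ) from rfl, hpi]
  have himg : (WithLp.equiv 2 (∀ _ : Fin m, ℝ)) '' s ⊆ Metric.ball ((WithLp.equiv 2 _) c) ρ := by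
    rintro _ ⟨x, hx, rfl⟩
    have := (PiLp.lipschitzWith_ofLp 2 (fun _ : Fin m => ℝ) :
      LipschitzWith 1 (WithLp.equiv 2 (∀ _ : Fin m, ℝ))).dist_le_mul x c
    simp only [NNReal.coe_one, one_mul] at this
    exact lt_of_le_of_lt this (hs hx)
  calc volume ((WithLp.equiv 2 (∀ _ : Fin m, ℝ)) '' s)
      ≤ volume (Metric.ball ((WithLp.equiv 2 (∀ _ : Fin m, ℝ)) c) ρ) := measure_mono himg
    _ = ENNReal.ofReal (2 * ρ) ^ m := by
        rw [MeasureTheory.volume_pi_ball _ hρ]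
        simp [Real.volume_ball]

lemma haus_ball_lower (m : ℕ) (hm : 0 < m) {ρ : ℝ} (hρ : 0 < ρ) (c : EuclideanSpace ℝ (Fin m)) :
    ENNReal.ofReal (2 * (ρ / Real.sqrt m)) ^ m ≤ μH[(m:ℝ)] (Metric.ball c ρ) := by
  have hd : (0:ℝ) ≤ m := Nat.cast_nonneg m
  have hsm : 0 < Real.sqrt m := Real.sqrt_pos.2 (by exact_mod_cast hm)
  have h1 := (PiLp.lipschitzWith_ofLp 2 (fun _ : Fin m => ℝ) :
      LipschitzWith 1 (WithLp.equiv 2 (∀ _ : Fin m, ℝ))).hausdorffMeasure_image_le hd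
      (Metric.ball c ρ)
  simp only [ENNReal.coe_one, ENNReal.one_rpow, one_mul] at h1
  refine le_trans ?_ h1
  have hpi : μH[(m:ℝ)] ((WithLp.equiv 2 (∀ _ : Fin m, ℝ)) '' (Metric.ball c ρ))
      = volume ((WithLp.equiv 2 (∀ _ : Fin m, ℝ)) '' (Metric.ball c ρ)) := by
    have := MeasureTheory.hausdorffMeasure_pi_real (ι := Fin m)
    rw [Fintype.card_fin] at this
    rw [this]
  rw [show (@WithLp.ofLp 2 (Fin m → ℝ)) = WithLp.equiv 2 (∀ _ : Fin m, ℝ) from rfl, hpi]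
  have hsub : Metric.ball ((WithLp.equiv 2 (∀ _ : Fin m, ℝ)) c) (ρ / Real.sqrt m)
      ⊆ (WithLp.equiv 2 (∀ _ : Fin m, ℝ)) '' (Metric.ball c ρ) := by
    intro u hu
    refine ⟨(WithLp.equiv 2 (∀ _ : Fin m, ℝ)).symm u, ?_, by simp⟩
    have ha := (PiLp.antilipschitzWith_ofLp 2 (fun _ : Fin m => ℝ) :
      AntilipschitzWith _ (WithLp.equiv 2 (∀ _ : Fin m, ℝ))).le_mul_dist
      ((WithLp.equiv 2 (∀ _ : Fin m, ℝ)).symm u) c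
    simp only [Equiv.apply_symm_apply, WithLp.equiv_symm_apply, WithLp.ofLp_toLp] at ha
    rw [Metric.mem_ball] at hu ⊢
    have hKc : ((((Fintype.card (Fin m) : ℝ≥0) ^ ((1:ℝ≥0∞)/2).toReal : ℝ≥0)) : ℝ)
        = Real.sqrt m := Kreal m
    calc dist ((WithLp.equiv 2 (∀ _ : Fin m, ℝ)).symm u) c
        ≤ Real.sqrt m * dist u ((WithLp.equiv 2 (∀ _ : Fin m, ℝ)) c) := by
          rw [← hKc]; exact ha
      _ < Real.sqrt m * (ρ / Real.sqrt m) := mul_lt_mul_of_pos_left hu hsm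
      _ = ρ := by field_simp
  calc ENNReal.ofReal (2 * (ρ / Real.sqrt m)) ^ m
      = volume (Metric.ball ((WithLp.equiv 2 (∀ _ : Fin m, ℝ)) c) (ρ / Real.sqrt m)) := by
        rw [MeasureTheory.volume_pi_ball _ (by positivity)]
        simp [Real.volume_ball]
    _ ≤ _ := measure_mono hsub



lemma normsq {m : ℕ} (v : EuclideanSpace ℝ (Fin m)) : ‖v‖^2 = ∑ i, v i ^ 2 := by
  rw [EuclideanSpace.norm_eq, Real.sq_sqrt (by positivity)]
  simp [Real.norm_eq_abs, sq_abs]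

noncomputable def proj (m : ℕ) (x : EuclideanSpace ℝ (Fin (m+1))) : EuclideanSpace ℝ (Fin m) :=
  WithLp.toLp 2 (fun i : Fin m => x i.castSucc)

noncomputable def graphMap (m : ℕ) (r : ℝ) (z : EuclideanSpace ℝ (Fin m)) : EuclideanSpace ℝ (Fin (m+1)) :=
  WithLp.toLp 2 (Fin.snoc (α := fun _ : Fin (m+1) => ℝ) (fun i => z i) (Real.sqrt (r^2 - ‖z‖^2)))

lemma proj_apply {m : ℕ} (x : EuclideanSpace ℝ (Fin (m+1))) (i : Fin m) :
    proj m x i = x i.castSucc := rfl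

lemma graphMap_castSucc {m : ℕ} (r : ℝ) (z : EuclideanSpace ℝ (Fin m)) (i : Fin m) :
    graphMap m r z i.castSucc = z i := by
  simp [graphMap, Fin.snoc_castSucc]

lemma graphMap_last {m : ℕ} (r : ℝ) (z : EuclideanSpace ℝ (Fin m)) :
    graphMap m r z (Fin.last m) = Real.sqrt (r^2 - ‖z‖^2) := by
  simp [graphMap]

lemma normsq_split {m : ℕ} (x : EuclideanSpace ℝ (Fin (m+1))) :
    ‖x‖^2 = ‖proj m x‖^2 + x (Fin.last m) ^ 2 := by
  rw [normsq, normsq, Fin.sum_univ_castSucc]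
  rfl

lemma norm_proj_le {m : ℕ} (x : EuclideanSpace ℝ (Fin (m+1))) : ‖proj m x‖ ≤ ‖x‖ := by
  have h := normsq_split x
  nlinarith [norm_nonneg (proj m x), norm_nonneg x, sq_nonneg (x (Fin.last m))]

lemma proj_sub {m : ℕ} (x w : EuclideanSpace ℝ (Fin (m+1))) :
    proj m (x - w) = proj m x - proj m w := rfl

lemma proj_lipschitz (m : ℕ) : LipschitzWith 1 (proj m) := by
  apply LipschitzWith.of_dist_le_mul
  intro x w
  rw [NNReal.coe_one, one_mul, dist_eq_norm, dist_eq_norm, ← proj_sub]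
  exact norm_proj_le _

lemma norm_graphMap {m : ℕ} {r : ℝ} (hr : 0 ≤ r) {z : EuclideanSpace ℝ (Fin m)}
    (hz : ‖z‖ ≤ r) : ‖graphMap m r z‖ = r := by
  have h1 : ‖z‖^2 ≤ r^2 := by nlinarith [norm_nonneg z]
  have h2 : ‖graphMap m r z‖^2 = r^2 := by
    rw [normsq_split]
    have hp : proj m (graphMap m r z) = z := by
      ext i; rw [proj_apply, graphMap_castSucc]
    rw [hp, graphMap_last, Real.sq_sqrt (by linarith)]
    ring
  nlinarith [norm_nonneg (graphMap m r z)]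

lemma proj_graphMap {m : ℕ} (r : ℝ) (z : EuclideanSpace ℝ (Fin m)) :
    proj m (graphMap m r z) = z := by
  ext i; rw [proj_apply, graphMap_castSucc]

lemma graphMap_of_mem {m : ℕ} {r : ℝ} {x : EuclideanSpace ℝ (Fin (m+1))}
    (hx : ‖x‖ = r) (hlast : 0 ≤ x (Fin.last m)) : graphMap m r (proj m x) = x := by
  have hs : r^2 - ‖proj m x‖^2 = x (Fin.last m) ^ 2 := by
    have := normsq_split x; rw [hx] at this; linarith
  ext j
  refine Fin.lastCases ?_ ?_ j
  · rw [graphMap_last, hs, Real.sqrt_sq hlast]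
  · intro i; rw [graphMap_castSucc, proj_apply]

lemma norm_proj_sq {m : ℕ} {r : ℝ} {x : EuclideanSpace ℝ (Fin (m+1))} (hx : ‖x‖ = r) :
    ‖proj m x‖^2 = r^2 - x (Fin.last m)^2 := by
  have := normsq_split x; rw [hx] at this; linarith

lemma graphMap_lipschitzOn {m : ℕ} {r h : ℝ} (hh : 0 < h) (hhr : h ≤ r) :
    LipschitzOnWith (Real.toNNReal (1 + r / h)) (graphMap m r)
      {z : EuclideanSpace ℝ (Fin m) | ‖z‖^2 ≤ r^2 - h^2} := by
  rw [lipschitzOnWith_iff_dist_le_mul]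
  intro z hz w hw
  simp only [Set.mem_setOf_eq] at hz hw
  have hr : 0 < r := lt_of_lt_of_le hh hhr
  have hzr : ‖z‖ ≤ r := by nlinarith [norm_nonneg z, sq_nonneg h]
  have hwr : ‖w‖ ≤ r := by nlinarith [norm_nonneg w, sq_nonneg h]
  set fz := Real.sqrt (r^2 - ‖z‖^2) with hfz
  set fw := Real.sqrt (r^2 - ‖w‖^2) with hfw
  have hfzh : h ≤ fz := by
    rw [hfz, show h = Real.sqrt (h^2) from (Real.sqrt_sq hh.le).symm]
    exact Real.sqrt_le_sqrt (by linarith)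
  have hfwh : h ≤ fw := by
    rw [hfw, show h = Real.sqrt (h^2) from (Real.sqrt_sq hh.le).symm]
    exact Real.sqrt_le_sqrt (by linarith)
  have hfz2 : fz^2 = r^2 - ‖z‖^2 := Real.sq_sqrt (by nlinarith [sq_nonneg h])
  have hfw2 : fw^2 = r^2 - ‖w‖^2 := Real.sq_sqrt (by nlinarith [sq_nonneg h])
  -- |fz - fw| ≤ (r/h) * ‖z - w‖
  have hnn : |‖z‖ - ‖w‖| ≤ ‖z - w‖ := abs_norm_sub_norm_le z w
  have key : |fz - fw| ≤ (r/h) * ‖z - w‖ := by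
    have hprod : |fz - fw| * (fz + fw) = |fz^2 - fw^2| := by
      rw [← abs_of_nonneg (by linarith : (0:ℝ) ≤ fz + fw), ← abs_mul]
      ring_nf
    have h2 : |fz^2 - fw^2| = |‖w‖ - ‖z‖| * (‖w‖ + ‖z‖) := by
      rw [hfz2, hfw2, show r^2 - ‖z‖^2 - (r^2 - ‖w‖^2) = (‖w‖-‖z‖)*(‖w‖+‖z‖) by ring,
        abs_mul, abs_of_nonneg (by positivity : (0:ℝ) ≤ ‖w‖ + ‖z‖)]
    have h3 : |fz^2 - fw^2| ≤ ‖z - w‖ * (2*r) := by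
      rw [h2]
      have : |‖w‖ - ‖z‖| ≤ ‖z - w‖ := by rw [abs_sub_comm]; exact hnn
      have h4 : ‖w‖ + ‖z‖ ≤ 2*r := by linarith
      exact mul_le_mul this h4 (by positivity) (norm_nonneg _)
    have h5 : |fz - fw| * (2*h) ≤ ‖z - w‖ * (2*r) := by
      calc |fz - fw| * (2*h) ≤ |fz - fw| * (fz + fw) :=
            mul_le_mul_of_nonneg_left (by linarith) (abs_nonneg _)
        _ = |fz^2 - fw^2| := hprod
        _ ≤ ‖z - w‖ * (2*r) := h3
    rw [div_mul_eq_mul_div, le_div_iff₀ hh]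
    nlinarith
  -- combine
  have hd : dist (graphMap m r z) (graphMap m r w) ^ 2 = ‖z - w‖^2 + (fz - fw)^2 := by
    have hpr : proj m (graphMap m r z - graphMap m r w) = z - w := by
      ext i
      show graphMap m r z i.castSucc - graphMap m r w i.castSucc = z i - w i
      rw [graphMap_castSucc, graphMap_castSucc]
    have hlast : (graphMap m r z - graphMap m r w) (Fin.last m) = fz - fw := by
      show graphMap m r z (Fin.last m) - graphMap m r w (Fin.last m) = fz - fw
      rw [graphMap_last, graphMap_last]
    rw [dist_eq_norm, normsq_split, hpr, hlast]
  have hC : (0:ℝ) ≤ 1 + r/h := by positivity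
  rw [Real.coe_toNNReal _ hC]
  have hb : dist (graphMap m r z) (graphMap m r w) ^ 2 ≤ ((1 + r/h) * dist z w)^2 := by
    rw [hd, dist_eq_norm]
    have h6 : (fz - fw)^2 ≤ ((r/h) * ‖z - w‖)^2 := by
      rw [← sq_abs (fz - fw)]
      have : (0:ℝ) ≤ (r/h) * ‖z-w‖ := by positivity
      nlinarith [abs_nonneg (fz - fw)]
    have hrh : (0:ℝ) ≤ r/h := by positivity
    nlinarith [norm_nonneg (z - w), sq_nonneg (‖z-w‖)]
  have hs := Real.sqrt_le_sqrt hb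
  rwa [Real.sqrt_sq dist_nonneg, Real.sqrt_sq (by positivity)] at hs




-- the cap bound for caps lying above level h in the last coordinate
lemma graph_cap_bound {m : ℕ} {r h ρ : ℝ} (hh : 0 < h) (hhr : h ≤ r) (hρ : 0 < ρ)
    (c' : EuclideanSpace ℝ (Fin (m+1))) :
    μH[(m:ℝ)] {x : EuclideanSpace ℝ (Fin (m+1)) |
        ‖x‖ = r ∧ h ≤ x (Fin.last m) ∧ ‖x - c'‖ < ρ}
      ≤ ENNReal.ofReal ((1 + r/h) * (Real.sqrt m * (2*ρ))) ^ m := by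
  set S := {x : EuclideanSpace ℝ (Fin (m+1)) | ‖x‖ = r ∧ h ≤ x (Fin.last m) ∧ ‖x - c'‖ < ρ}
  set D := {z : EuclideanSpace ℝ (Fin m) | ‖z‖^2 ≤ r^2 - h^2}
  set T := D ∩ Metric.ball (proj m c') ρ
  have hST : S ⊆ graphMap m r '' T := by
    intro x hx
    obtain ⟨hx1, hx2, hx3⟩ := hx
    have hlast0 : 0 ≤ x (Fin.last m) := le_trans hh.le hx2
    refine ⟨proj m x, ⟨?_, ?_⟩, graphMap_of_mem hx1 hlast0⟩
    · show ‖proj m x‖^2 ≤ r^2 - h^2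
      rw [norm_proj_sq hx1]
      nlinarith
    · rw [Metric.mem_ball, dist_eq_norm, ← proj_sub]
      exact lt_of_le_of_lt (norm_proj_le _) hx3
  have h1 : μH[(m:ℝ)] S ≤ μH[(m:ℝ)] (graphMap m r '' T) := measure_mono hST
  have hTD : T ⊆ D := Set.inter_subset_left
  have h2 := ((graphMap_lipschitzOn (m := m) hh hhr).mono
      hTD).hausdorffMeasure_image_le (Nat.cast_nonneg m)
  have h3 : μH[(m:ℝ)] T ≤ ENNReal.ofReal (Real.sqrt m) ^ m * ENNReal.ofReal (2 * ρ) ^ m :=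
    haus_le_of_subset_ball m hρ (Set.inter_subset_right)
  have hr0 : (0:ℝ) < r := lt_of_lt_of_le hh hhr
  have hC : (0:ℝ) ≤ 1 + r/h := by positivity
  have hcoe : ((Real.toNNReal (1 + r/h) : ℝ≥0) : ℝ≥0∞) = ENNReal.ofReal (1 + r/h) := rfl
  calc μH[(m:ℝ)] S ≤ μH[(m:ℝ)] (graphMap m r '' T) := h1
    _ ≤ ((Real.toNNReal (1 + r/h) : ℝ≥0) : ℝ≥0∞) ^ (m:ℝ) * μH[(m:ℝ)] T := h2
    _ ≤ ENNReal.ofReal (1 + r/h) ^ m *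
        (ENNReal.ofReal (Real.sqrt m) ^ m * ENNReal.ofReal (2 * ρ) ^ m) := by
        rw [hcoe, ENNReal.rpow_natCast]
        exact mul_le_mul_right h3 _
    _ = ENNReal.ofReal ((1 + r/h) * (Real.sqrt m * (2*ρ))) ^ m := by
        rw [ENNReal.ofReal_mul hC, ENNReal.ofReal_mul (Real.sqrt_nonneg _)]
        ring

-- rotated version: level h in direction of an arbitrary unit vector e
lemma rot_cap_bound {m : ℕ} {r h ρ : ℝ} (hh : 0 < h) (hhr : h ≤ r) (hρ : 0 < ρ)
    {e : EuclideanSpace ℝ (Fin (m+1))} (he : ‖e‖ = 1) (c : EuclideanSpace ℝ (Fin (m+1))) :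
    μH[(m:ℝ)] {x : EuclideanSpace ℝ (Fin (m+1)) | ‖x‖ = r ∧ h ≤ ⟪x, e⟫ ∧ ‖x - c‖ < ρ}
      ≤ ENNReal.ofReal ((1 + r/h) * (Real.sqrt m * (2*ρ))) ^ m := by
  -- get an orthonormal basis with b (last) = e
  have hcard : Module.finrank ℝ (EuclideanSpace ℝ (Fin (m+1))) = Fintype.card (Fin (m+1)) := by
    simp [finrank_euclideanSpace_fin]
  have horth : Orthonormal ℝ (({Fin.last m} : Set (Fin (m+1))).restrict
      (fun _ : Fin (m+1) => e)) := by
    constructor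
    · intro i; exact he
    · intro i j hij
      exact absurd (Subsingleton.elim i j) hij
  obtain ⟨b, hb⟩ := horth.exists_orthonormalBasis_extension_of_card_eq hcard
  have hbe : b (Fin.last m) = e := hb _ rfl
  set φ := b.repr
  have hiso : Isometry φ := φ.isometry
  set S := {x : EuclideanSpace ℝ (Fin (m+1)) | ‖x‖ = r ∧ h ≤ ⟪x, e⟫ ∧ ‖x - c‖ < ρ}
  have himg : φ '' S ⊆ {x : EuclideanSpace ℝ (Fin (m+1)) |
      ‖x‖ = r ∧ h ≤ x (Fin.last m) ∧ ‖x - φ c‖ < ρ} := by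
    rintro _ ⟨x, ⟨hx1, hx2, hx3⟩, rfl⟩
    refine ⟨by simp [φ, hx1], ?_, ?_⟩
    · have : (φ x) (Fin.last m) = ⟪φ x, EuclideanSpace.single (Fin.last m) (1:ℝ)⟫ := by
        rw [EuclideanSpace.inner_single_right]; simp
      rw [this, ← b.repr_self (Fin.last m), hbe]
      rw [φ.inner_map_map]
      exact hx2
    · rw [← map_sub φ x c, φ.norm_map]
      exact hx3
  calc μH[(m:ℝ)] S = μH[(m:ℝ)] (φ '' S) :=
        (hiso.hausdorffMeasure_image (Or.inl (Nat.cast_nonneg m)) S).symm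
    _ ≤ μH[(m:ℝ)] {x : EuclideanSpace ℝ (Fin (m+1)) |
          ‖x‖ = r ∧ h ≤ x (Fin.last m) ∧ ‖x - φ c‖ < ρ} := measure_mono himg
    _ ≤ _ := graph_cap_bound hh hhr hρ (φ c)




lemma real_inner_single {k : ℕ} (j : Fin k) (a : ℝ) (x : EuclideanSpace ℝ (Fin k)) :
    ⟪x, EuclideanSpace.single j a⟫ = a * x j := by
  rw [EuclideanSpace.inner_single_right]
  simp

noncomputable def capConst (m : ℕ) : ℝ≥0∞ :=
  ((m+1)*2 : ℕ) * ENNReal.ofReal ((1 + Real.sqrt (m+1)) * (16 * Real.sqrt m)) ^ m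

lemma capConst_lt_top (m : ℕ) : capConst m < ⊤ := by
  rw [capConst]
  exact ENNReal.mul_lt_top (ENNReal.natCast_lt_top _) (ENNReal.pow_lt_top ENNReal.ofReal_lt_top)

lemma cap_bound (m : ℕ) {r ρ : ℝ} (hr : 0 < r) (hρ : 0 < ρ)
    (c : EuclideanSpace ℝ (Fin (m+1))) :
    μH[(m:ℝ)] {x : EuclideanSpace ℝ (Fin (m+1)) | ‖x‖ = r ∧ ‖x - c‖ < ρ}
      ≤ capConst m * ENNReal.ofReal ρ ^ m := by
  have hsm : (0:ℝ) ≤ Real.sqrt m := Real.sqrt_nonneg _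
  have hsm1 : (0:ℝ) ≤ Real.sqrt (m+1) := Real.sqrt_nonneg _
  by_cases hcase : ρ ≤ r/4
  · -- small cap
    set S := {x : EuclideanSpace ℝ (Fin (m+1)) | ‖x‖ = r ∧ ‖x - c‖ < ρ} with hS
    rcases Set.eq_empty_or_nonempty S with hemp | ⟨x₀, hx₀1, hx₀2⟩
    · rw [hemp]; simp
    · set e : EuclideanSpace ℝ (Fin (m+1)) := r⁻¹ • x₀ with he_def
      have he : ‖e‖ = 1 := by
        rw [he_def, norm_smul, hx₀1]
        rw [Real.norm_eq_abs, abs_of_pos (inv_pos.2 hr), inv_mul_cancel₀ hr.ne']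
      have hsub : S ⊆ {x : EuclideanSpace ℝ (Fin (m+1)) |
          ‖x‖ = r ∧ r/2 ≤ ⟪x, e⟫ ∧ ‖x - x₀‖ < 2*ρ} := by
        rintro x ⟨h1x, h2x⟩
        have hxx₀ : ‖x - x₀‖ < 2*ρ := by
          calc ‖x - x₀‖ = ‖(x - c) - (x₀ - c)‖ := by abel_nf
            _ ≤ ‖x - c‖ + ‖x₀ - c‖ := norm_sub_le _ _
            _ < 2*ρ := by linarith
        refine ⟨h1x, ?_, hxx₀⟩
        have hinner : r^2/2 ≤ ⟪x, x₀⟫ := by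
          have hnsq := norm_sub_sq_real x x₀
          rw [h1x, hx₀1] at hnsq
          nlinarith [norm_nonneg (x - x₀)]
        rw [he_def, real_inner_smul_right]
        calc r/2 = r⁻¹ * (r^2/2) := by field_simp
          _ ≤ r⁻¹ * ⟪x, x₀⟫ :=
            mul_le_mul_of_nonneg_left hinner (inv_nonneg.2 hr.le)
      have hbound := rot_cap_bound (r := r) (h := r/2) (by positivity) (by linarith)
        (by positivity : (0:ℝ) < 2*ρ) he x₀
      calc μH[(m:ℝ)] S ≤ _ := measure_mono hsub
        _ ≤ ENNReal.ofReal ((1 + r/(r/2)) * (Real.sqrt m * (2*(2*ρ)))) ^ m := hbound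
        _ ≤ capConst m * ENNReal.ofReal ρ ^ m := by
            have hrr : r/(r/2) = 2 := by field_simp
            rw [hrr]
            have h1 : (1 + 2) * (Real.sqrt m * (2*(2*ρ))) = (12 * Real.sqrt m) * ρ := by ring
            rw [h1, ENNReal.ofReal_mul (by positivity), mul_pow]
            have h2 : ENNReal.ofReal (12 * Real.sqrt m) ^ m
                ≤ ENNReal.ofReal ((1 + Real.sqrt (m+1)) * (16 * Real.sqrt m)) ^ m := by
              gcongr ENNReal.ofReal ?_ ^ m
              nlinarith
            calc ENNReal.ofReal (12 * Real.sqrt m) ^ m * ENNReal.ofReal ρ ^ m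
                ≤ ENNReal.ofReal ((1 + Real.sqrt (m+1)) * (16 * Real.sqrt m)) ^ m *
                  ENNReal.ofReal ρ ^ m := by gcongr
              _ ≤ capConst m * ENNReal.ofReal ρ ^ m := by
                  rw [capConst, mul_assoc]
                  refine le_mul_of_one_le_left (zero_le) ?_
                  calc (1:ℝ≥0∞) ≤ 2 := by norm_num
                    _ ≤ ((m:ℝ≥0∞)+1)*2 := le_mul_of_one_le_left (zero_le) (by simp)
                    _ = (((m+1)*2 : ℕ) : ℝ≥0∞) := by push_cast; ring
  · -- large ρ : bound via the whole sphere
    push_neg at hcase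
    have hsqm1 : (1:ℝ) ≤ Real.sqrt (m+1) := by
      have h := Real.sqrt_le_sqrt (show (1:ℝ) ≤ (m:ℝ)+1 by push_cast; linarith)
      rwa [Real.sqrt_one] at h
    set ee : Fin (m+1) × Bool → EuclideanSpace ℝ (Fin (m+1)) :=
      fun p => EuclideanSpace.single p.1 (cond p.2 (1:ℝ) (-1)) with hee
    have hee_norm : ∀ p, ‖ee p‖ = 1 := by
      rintro ⟨j, b⟩
      cases b <;> simp [hee, EuclideanSpace.norm_single]
    set Sp : Fin (m+1) × Bool → Set (EuclideanSpace ℝ (Fin (m+1))) := fun p =>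
      {x | ‖x‖ = r ∧ r/Real.sqrt (m+1) ≤ ⟪x, ee p⟫ ∧ ‖x - 0‖ < 2*r} with hSp
    have hcov : {x : EuclideanSpace ℝ (Fin (m+1)) | ‖x‖ = r ∧ ‖x - c‖ < ρ} ⊆ ⋃ p, Sp p := by
      rintro x ⟨h1x, _⟩
      have hex : ∃ j, r^2/(m+1) ≤ x j ^ 2 := by
        by_contra hcon
        push_neg at hcon
        have hsum : ∑ j, x j ^2 < ∑ _j : Fin (m+1), r^2/((m:ℝ)+1) :=
          Finset.sum_lt_sum_of_nonempty ⟨0, Finset.mem_univ 0⟩ (by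
            intro j _; exact_mod_cast hcon j)
        rw [← normsq, h1x, Finset.sum_const, Finset.card_univ, Fintype.card_fin] at hsum
        rw [nsmul_eq_mul] at hsum
        have : ((m:ℝ)+1) * (r^2/((m:ℝ)+1)) = r^2 := by
          field_simp
        push_cast at hsum
        rw [this] at hsum
        exact lt_irrefl _ hsum
      obtain ⟨j, hj⟩ := hex
      have habs : r/Real.sqrt (m+1) ≤ |x j| := by
        have h1 : (r/Real.sqrt ((m:ℝ)+1))^2 = r^2/((m:ℝ)+1) := by
          rw [div_pow, Real.sq_sqrt (by positivity)]
        have hnn : (0:ℝ) ≤ r / Real.sqrt ((m:ℝ)+1) := by positivity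
        nlinarith [abs_nonneg (x j), sq_abs (x j)]
      rcases le_or_gt 0 (x j) with hsgn | hsgn
      · refine Set.mem_iUnion.2 ⟨(j, true), h1x, ?_, ?_⟩
        · show r/Real.sqrt ((m:ℝ)+1) ≤ ⟪x, EuclideanSpace.single j (cond true (1:ℝ) (-1))⟫
          rw [real_inner_single]
          rw [abs_of_nonneg hsgn] at habs
          simpa using habs
        · rw [sub_zero, h1x]; linarith
      · refine Set.mem_iUnion.2 ⟨(j, false), h1x, ?_, ?_⟩
        · show r/Real.sqrt ((m:ℝ)+1) ≤ ⟪x, EuclideanSpace.single j (cond false (1:ℝ) (-1))⟫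
          rw [real_inner_single]
          rw [abs_of_neg hsgn] at habs
          have : (cond false (1:ℝ) (-1)) = -1 := rfl
          rw [this]
          linarith
        · rw [sub_zero, h1x]; linarith
    have hone : ∀ p, μH[(m:ℝ)] (Sp p)
        ≤ ENNReal.ofReal ((1 + Real.sqrt (m+1)) * (Real.sqrt m * (2*(2*r)))) ^ m := by
      intro p
      have h0 : (0:ℝ) < r/Real.sqrt (m+1) := by positivity
      have hle : r/Real.sqrt (m+1) ≤ r := by
        rw [div_le_iff₀ (by positivity)]
        nlinarith
      have := rot_cap_bound (r := r) (h := r/Real.sqrt (m+1)) h0 hle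
        (by positivity : (0:ℝ) < 2*r) (hee_norm p) 0
      have hq : r / (r/Real.sqrt ((m:ℝ)+1)) = Real.sqrt ((m:ℝ)+1) := by
        rw [div_div_eq_mul_div, mul_comm, mul_div_assoc, div_self hr.ne', mul_one]
      rwa [hq] at this
    calc μH[(m:ℝ)] {x : EuclideanSpace ℝ (Fin (m+1)) | ‖x‖ = r ∧ ‖x - c‖ < ρ}
        ≤ μH[(m:ℝ)] (⋃ p, Sp p) := measure_mono hcov
      _ ≤ ∑ p : Fin (m+1) × Bool, μH[(m:ℝ)] (Sp p) := measure_iUnion_fintype_le _ _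
      _ ≤ ∑ _p : Fin (m+1) × Bool,
            ENNReal.ofReal ((1 + Real.sqrt (m+1)) * (Real.sqrt m * (2*(2*r)))) ^ m :=
          Finset.sum_le_sum (fun p _ => hone p)
      _ = ((m+1)*2 : ℕ) *
            ENNReal.ofReal ((1 + Real.sqrt (m+1)) * (Real.sqrt m * (2*(2*r)))) ^ m := by
          rw [Finset.sum_const, Finset.card_univ]
          simp [Fintype.card_prod, nsmul_eq_mul]
      _ ≤ capConst m * ENNReal.ofReal ρ ^ m := by
          rw [capConst, mul_assoc]
          refine mul_le_mul_right ?_ _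
          rw [← mul_pow, ← ENNReal.ofReal_mul (by positivity)]
          gcongr ENNReal.ofReal ?_ ^ m
          nlinarith [mul_nonneg (by linarith : (0:ℝ) ≤ 1 + Real.sqrt (m+1)) hsm, hcase]




lemma sphere_haus_lower (m : ℕ) (hm : 0 < m) {r : ℝ} (hr : 0 < r) :
    ENNReal.ofReal (2 * (r / Real.sqrt m)) ^ m
      ≤ μH[(m:ℝ)] (Metric.sphere (0 : EuclideanSpace ℝ (Fin (m+1))) r) := by
  have hsub : Metric.ball (0 : EuclideanSpace ℝ (Fin m)) r
      ⊆ proj m '' (Metric.sphere (0 : EuclideanSpace ℝ (Fin (m+1))) r) := by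
    intro z hz
    rw [Metric.mem_ball, dist_zero_right] at hz
    exact ⟨graphMap m r z, by
      rw [mem_sphere_zero_iff_norm]; exact norm_graphMap hr.le hz.le, proj_graphMap r z⟩
  have h1 := (proj_lipschitz m).hausdorffMeasure_image_le (Nat.cast_nonneg m)
      (Metric.sphere (0 : EuclideanSpace ℝ (Fin (m+1))) r)
  simp only [ENNReal.coe_one, ENNReal.one_rpow, one_mul] at h1
  calc ENNReal.ofReal (2 * (r / Real.sqrt m)) ^ m
      ≤ μH[(m:ℝ)] (Metric.ball (0 : EuclideanSpace ℝ (Fin m)) r) := haus_ball_lower m hm hr 0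
    _ ≤ μH[(m:ℝ)] (proj m '' (Metric.sphere (0 : EuclideanSpace ℝ (Fin (m+1))) r)) :=
        measure_mono hsub
    _ ≤ _ := h1

lemma sphere_haus_upper (m : ℕ) {r : ℝ} (hr : 0 < r) :
    μH[(m:ℝ)] (Metric.sphere (0 : EuclideanSpace ℝ (Fin (m+1))) r)
      ≤ capConst m * ENNReal.ofReal (2*r) ^ m := by
  refine le_trans (measure_mono ?_) (cap_bound m hr (by positivity) 0)
  intro x hx
  rw [mem_sphere_zero_iff_norm] at hx
  exact ⟨hx, by rw [sub_zero, hx]; linarith⟩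




lemma one_le_capConst (m : ℕ) (hm : 1 ≤ m) : 1 ≤ capConst m := by
  have h1 : (1:ℝ) ≤ Real.sqrt m := by
    have h := Real.sqrt_le_sqrt (show (1:ℝ) ≤ (m:ℝ) by exact_mod_cast hm)
    rwa [Real.sqrt_one] at h
  have h2 : (1:ℝ) ≤ (1 + Real.sqrt (m+1)) * (16 * Real.sqrt m) := by
    nlinarith [Real.sqrt_nonneg ((m:ℝ)+1)]
  rw [capConst]
  calc (1:ℝ≥0∞) = 1 * 1 := by ring
    _ ≤ ((m+1)*2 : ℕ) * ENNReal.ofReal ((1 + Real.sqrt (m+1)) * (16 * Real.sqrt m)) ^ m := by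
        gcongr
        · exact_mod_cast Nat.one_le_iff_ne_zero.2 (by positivity)
        · exact one_le_pow₀ (ENNReal.one_le_ofReal.2 h2)


end SphereLogAux

open SphereLogAux

/-- The kernel estimate in the proof of Proposition 3.1 (ii): for `n ≥ 3` there is
`C = C(n) > 0` so that for all `r > 0` and `y` with `|y| ≥ r/2`,
`⨍_{∂B_r(0)} |log(|y|/|x−y|)| dH^{n−1}(x) ≤ C`. -/
theorem sphere_average_log_kernel_bound
    (n : ℕ) (hn : 3 ≤ n) :
    ∃ C : ℝ, 0 < C ∧ ∀ r : ℝ, 0 < r → ∀ y : EuclideanSpace ℝ (Fin n), r / 2 ≤ ‖y‖ →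
      (μH[(n : ℝ) - 1] (Metric.sphere (0 : EuclideanSpace ℝ (Fin n)) r)).toReal⁻¹ *
        ∫ x in Metric.sphere (0 : EuclideanSpace ℝ (Fin n)) r,
          |Real.log (‖y‖ / ‖x - y‖)| ∂μH[(n : ℝ) - 1] ≤ C := by
  obtain ⟨m, rfl⟩ : ∃ m, n = m + 1 := ⟨n - 1, by omega⟩
  have hm : 2 ≤ m := by omega
  have hm0 : (0:ℕ) < m := by omega
  have hm1 : (1:ℝ) ≤ Real.sqrt m := by
    have h := Real.sqrt_le_sqrt (show (1:ℝ) ≤ (m:ℝ) by exact_mod_cast hm0)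
    rwa [Real.sqrt_one] at h
  have hsm : (0:ℝ) < Real.sqrt m := by linarith
  have hcast : ((m+1 : ℕ) : ℝ) - 1 = (m : ℝ) := by push_cast; ring
  simp only [hcast]
  set Cbig : ℝ≥0∞ :=
    ENNReal.ofReal (Real.log 3) + 2 * capConst m * ENNReal.ofReal (2*Real.sqrt m) ^ m with hCbig
  have hCtop : Cbig ≠ ⊤ := by
    rw [hCbig]
    refine ENNReal.add_ne_top.2 ⟨ENNReal.ofReal_ne_top, ?_⟩
    exact (ENNReal.mul_lt_top (ENNReal.mul_lt_top (by norm_num) (capConst_lt_top m))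
      (ENNReal.pow_lt_top ENNReal.ofReal_lt_top)).ne
  refine ⟨Cbig.toReal + 1, by positivity, ?_⟩
  intro r hr y hy
  have h0y : (0:ℝ) < ‖y‖ := lt_of_lt_of_le (by linarith) hy
  set S := Metric.sphere (0 : EuclideanSpace ℝ (Fin (m+1))) r with hSdef
  set M := μH[(m:ℝ)] S with hMdef
  -- bounds on M
  have hMlo : ENNReal.ofReal (2*(r/Real.sqrt m)) ^ m ≤ M := sphere_haus_lower m hm0 hr
  have hMne : M ≠ 0 := by
    intro h0
    rw [h0] at hMlo
    have : ENNReal.ofReal (2*(r/Real.sqrt m)) ^ m ≠ 0 :=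
      pow_ne_zero _ (by simp [ENNReal.ofReal_eq_zero]; positivity)
    exact this (le_antisymm hMlo (zero_le))
  have hMtop : M ≠ ⊤ := by
    refine ne_top_of_le_ne_top ?_ (sphere_haus_upper m hr)
    exact (ENNReal.mul_lt_top (capConst_lt_top m) (ENNReal.pow_lt_top ENNReal.ofReal_lt_top)).ne
  -- the shells
  set A : ℕ → Set (EuclideanSpace ℝ (Fin (m+1))) :=
    fun k => S ∩ {x | ‖x - y‖ ≤ ‖y‖ * Real.exp (-(k:ℝ))} with hAdef
  have hmeas1 : Measurable fun x : EuclideanSpace ℝ (Fin (m+1)) => ‖x - y‖ :=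
    ((continuous_id.sub continuous_const).norm).measurable
  have hSmeas : MeasurableSet S := isClosed_sphere.measurableSet
  have hA : ∀ k, MeasurableSet (A k) := fun k =>
    hSmeas.inter (measurableSet_le hmeas1 measurable_const)
  have hAS : ∀ k, A k ⊆ S := fun k => Set.inter_subset_left
  set f := fun x : EuclideanSpace ℝ (Fin (m+1)) => |Real.log (‖y‖ / ‖x - y‖)| with hfdef
  have hfm : Measurable f := by
    have h2 : Measurable fun x : EuclideanSpace ℝ (Fin (m+1)) => ‖y‖ / ‖x - y‖ :=
      measurable_const.div hmeas1
    exact (Real.measurable_log.comp h2).abs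
  set g : ℕ → EuclideanSpace ℝ (Fin (m+1)) → ℝ≥0∞ :=
    fun k => Set.indicator (A k) (fun _ => ENNReal.ofReal ((k:ℝ)+1)) with hgdef
  -- pointwise bound
  have hpoint : ∀ x ∈ S, ENNReal.ofReal (f x)
      ≤ ENNReal.ofReal (Real.log 3) + ∑' k : ℕ, g k x := by
    intro x hx
    by_cases hxy : ‖x - y‖ = 0
    · rw [hfdef]
      simp only [hxy, div_zero, Real.log_zero, abs_zero, ENNReal.ofReal_zero]
      exact zero_le
    · have hxy' : (0:ℝ) < ‖x - y‖ := (norm_nonneg _).lt_of_ne (Ne.symm hxy)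
      have hxn : ‖x‖ = r := mem_sphere_zero_iff_norm.1 hx
      have hub : ‖x - y‖ ≤ 3 * ‖y‖ := by
        calc ‖x - y‖ ≤ ‖x‖ + ‖y‖ := norm_sub_le _ _
          _ = r + ‖y‖ := by rw [hxn]
          _ ≤ 3 * ‖y‖ := by linarith
      set L := Real.log (‖y‖ / ‖x - y‖) with hLdef
      have hlog3 : (0:ℝ) ≤ Real.log 3 := Real.log_nonneg (by norm_num)
      have hneg : -L ≤ Real.log 3 := by
        have hinv : -L = Real.log (‖x - y‖ / ‖y‖) := by
          rw [hLdef, ← Real.log_inv, inv_div]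
        rw [hinv]
        have harg : ‖x - y‖ / ‖y‖ ≤ 3 := by
          rw [div_le_iff₀ h0y]; linarith
        exact Real.log_le_log (by positivity) harg
      have habs : |L| ≤ Real.log 3 + max L 0 := by
        rcases abs_cases L with ⟨h1, _⟩ | ⟨h1, _⟩
        · rw [h1]; have := le_max_left L (0:ℝ); linarith
        · rw [h1]; have := le_max_right L (0:ℝ); linarith
      have hstep : ENNReal.ofReal (max L 0) ≤ ∑' k : ℕ, g k x := by
        rcases le_or_gt L 0 with hL | hL
        · rw [max_eq_right hL, ENNReal.ofReal_zero]; exact zero_le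
        · rw [max_eq_left hL.le]
          have harg : (0:ℝ) < ‖y‖ / ‖x - y‖ := by positivity
          set k := ⌊L⌋₊ with hk
          have hk1 : (k:ℝ) ≤ L := Nat.floor_le hL.le
          have hk2 : L < (k:ℝ) + 1 := Nat.lt_floor_add_one L
          have hmem : x ∈ A k := by
            refine ⟨hx, ?_⟩
            have hexp : Real.exp (k:ℝ) ≤ ‖y‖ / ‖x - y‖ := by
              have h := Real.exp_le_exp.2 hk1
              rwa [Real.exp_log harg] at h
            have h2 := (le_div_iff₀ hxy').1 hexp
            show ‖x - y‖ ≤ ‖y‖ * Real.exp (-(k:ℝ))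
            rw [Real.exp_neg, ← div_eq_mul_inv, le_div_iff₀ (Real.exp_pos _)]
            nlinarith
          calc ENNReal.ofReal L ≤ ENNReal.ofReal ((k:ℝ)+1) :=
                ENNReal.ofReal_le_ofReal hk2.le
            _ = g k x := by rw [hgdef]; exact (Set.indicator_of_mem hmem (fun _ => ENNReal.ofReal ((k:ℝ)+1))).symm
            _ ≤ ∑' j : ℕ, g j x := ENNReal.le_tsum k
      calc ENNReal.ofReal (f x) ≤ ENNReal.ofReal (Real.log 3 + max L 0) :=
            ENNReal.ofReal_le_ofReal habs
        _ = ENNReal.ofReal (Real.log 3) + ENNReal.ofReal (max L 0) :=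
            ENNReal.ofReal_add hlog3 (le_max_right _ _)
        _ ≤ _ := add_le_add_right hstep _
  -- the sum over shells
  have hsum : ∑' k : ℕ, ENNReal.ofReal ((k:ℝ)+1) * μH[(m:ℝ)] (A k)
      ≤ 2 * capConst m * ENNReal.ofReal (2*Real.sqrt m) ^ m * M := by
    rcases le_or_gt ‖y‖ (2*r) with hcase | hcase
    · -- near case
      have hterm : ∀ k : ℕ, ENNReal.ofReal ((k:ℝ)+1) * μH[(m:ℝ)] (A k)
          ≤ capConst m * ENNReal.ofReal (2*‖y‖)^m * (ENNReal.ofReal 2⁻¹)^k := by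
        intro k
        have hρpos : (0:ℝ) < 2*(‖y‖*Real.exp (-(k:ℝ))) := by positivity
        have hsubcap : A k ⊆ {x : EuclideanSpace ℝ (Fin (m+1)) |
            ‖x‖ = r ∧ ‖x - y‖ < 2*(‖y‖*Real.exp (-(k:ℝ)))} := by
          rintro x ⟨hxS, hxd⟩
          refine ⟨mem_sphere_zero_iff_norm.1 hxS, ?_⟩
          have h2 : (0:ℝ) < ‖y‖*Real.exp (-(k:ℝ)) := by positivity
          calc ‖x - y‖ ≤ ‖y‖*Real.exp (-(k:ℝ)) := hxd
            _ < 2*(‖y‖*Real.exp (-(k:ℝ))) := by linarith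
        have hcap : μH[(m:ℝ)] (A k)
            ≤ capConst m * ENNReal.ofReal (2*‖y‖)^m * ENNReal.ofReal (Real.exp (-(k:ℝ)))^m := by
          refine le_trans (measure_mono hsubcap) (le_trans (cap_bound m hr hρpos y) ?_)
          have heq : ENNReal.ofReal (2*(‖y‖*Real.exp (-(k:ℝ))))
              = ENNReal.ofReal (2*‖y‖) * ENNReal.ofReal (Real.exp (-(k:ℝ))) := by
            rw [← ENNReal.ofReal_mul (by positivity)]
            ring_nf
          rw [heq, mul_pow, mul_assoc]
        -- coefficient bound
        have hcoef : ENNReal.ofReal ((k:ℝ)+1) * ENNReal.ofReal (Real.exp (-(k:ℝ)))^m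
            ≤ (ENNReal.ofReal 2⁻¹)^k := by
          have h1 : ENNReal.ofReal ((k:ℝ)+1) ≤ 2^k := by
            rw [show ((k:ℝ)+1) = ((k+1 : ℕ):ℝ) by push_cast; ring, ENNReal.ofReal_natCast]
            have hn2 : (k+1 : ℕ) ≤ 2^k := Nat.succ_le_of_lt (Nat.lt_two_pow_self)
            calc ((k+1:ℕ):ℝ≥0∞) ≤ ((2^k : ℕ):ℝ≥0∞) := Nat.cast_le.2 hn2
              _ = 2^k := by push_cast; ring
          have h2 : ENNReal.ofReal (Real.exp (-(k:ℝ)))^m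
              ≤ ENNReal.ofReal (Real.exp (-(k:ℝ)))^2 :=
            pow_le_pow_of_le_one (zero_le)
              (ENNReal.ofReal_le_one.2 (Real.exp_le_one_iff.2
                (neg_nonpos.2 (Nat.cast_nonneg k)))) hm
          have hbase : Real.exp (-2:ℝ) ≤ 4⁻¹ := by
            have h2e : (2:ℝ) ≤ Real.exp 1 := by
              have := Real.exp_one_gt_d9; linarith
            have h4e : (4:ℝ) ≤ Real.exp 2 := by
              have hh : Real.exp 2 = Real.exp 1 * Real.exp 1 := by
                rw [← Real.exp_add]; norm_num
              nlinarith
            rw [Real.exp_neg, inv_le_inv₀ (Real.exp_pos 2) (by norm_num)]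
            exact h4e
          have h3 : ENNReal.ofReal (Real.exp (-(k:ℝ)))^2 ≤ ENNReal.ofReal ((4⁻¹:ℝ)^k) := by
            rw [← ENNReal.ofReal_pow (Real.exp_pos _).le]
            apply ENNReal.ofReal_le_ofReal
            calc (Real.exp (-(k:ℝ)))^2 = Real.exp ((2:ℕ) * (-(k:ℝ))) :=
                  (Real.exp_nat_mul _ 2).symm
              _ = Real.exp ((k:ℕ) * (-2:ℝ)) := by congr 1; push_cast; ring
              _ = (Real.exp (-2:ℝ))^k := Real.exp_nat_mul _ k
              _ ≤ (4⁻¹:ℝ)^k := pow_le_pow_left₀ (Real.exp_pos _).le hbase k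
          calc ENNReal.ofReal ((k:ℝ)+1) * ENNReal.ofReal (Real.exp (-(k:ℝ)))^m
              ≤ 2^k * ENNReal.ofReal ((4⁻¹:ℝ)^k) := mul_le_mul' h1 (h2.trans h3)
            _ = 2^k * (ENNReal.ofReal (4⁻¹:ℝ))^k := by rw [ENNReal.ofReal_pow (by norm_num)]
            _ = (2 * ENNReal.ofReal (4⁻¹:ℝ))^k := (mul_pow _ _ _).symm
            _ = (ENNReal.ofReal 2⁻¹)^k := by
                congr 1
                rw [show (2:ℝ≥0∞) = ENNReal.ofReal 2 by simp,
                  ← ENNReal.ofReal_mul (by norm_num)]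
                norm_num
        calc ENNReal.ofReal ((k:ℝ)+1) * μH[(m:ℝ)] (A k)
            ≤ ENNReal.ofReal ((k:ℝ)+1) * (capConst m * ENNReal.ofReal (2*‖y‖)^m *
              ENNReal.ofReal (Real.exp (-(k:ℝ)))^m) := mul_le_mul_right hcap _
          _ = capConst m * ENNReal.ofReal (2*‖y‖)^m *
              (ENNReal.ofReal ((k:ℝ)+1) * ENNReal.ofReal (Real.exp (-(k:ℝ)))^m) := by ring
          _ ≤ capConst m * ENNReal.ofReal (2*‖y‖)^m * (ENNReal.ofReal 2⁻¹)^k :=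
              mul_le_mul_right hcoef _
      calc ∑' k : ℕ, ENNReal.ofReal ((k:ℝ)+1) * μH[(m:ℝ)] (A k)
          ≤ ∑' k : ℕ, capConst m * ENNReal.ofReal (2*‖y‖)^m * (ENNReal.ofReal 2⁻¹)^k :=
            ENNReal.tsum_le_tsum hterm
        _ = capConst m * ENNReal.ofReal (2*‖y‖)^m * ∑' k : ℕ, (ENNReal.ofReal 2⁻¹)^k :=
            ENNReal.tsum_mul_left
        _ = capConst m * ENNReal.ofReal (2*‖y‖)^m * 2 := by
            rw [ENNReal.tsum_geometric]
            congr 1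
            rw [ENNReal.ofReal_inv_of_pos (by norm_num), ENNReal.ofReal_ofNat]
            rw [ENNReal.one_sub_inv_two, inv_inv]
        _ ≤ capConst m * (M * ENNReal.ofReal (2*Real.sqrt m)^m) * 2 := by
            refine mul_le_mul_left (mul_le_mul_right ?_ _) _
            have h4r : ENNReal.ofReal (2*‖y‖)^m ≤ ENNReal.ofReal (4*r)^m := by
              gcongr ENNReal.ofReal ?_ ^ m
              linarith
            have hsplit : ENNReal.ofReal (4*r)
                = ENNReal.ofReal (2*(r/Real.sqrt m)) * ENNReal.ofReal (2*Real.sqrt m) := by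
              rw [← ENNReal.ofReal_mul (by positivity)]
              congr 1
              field_simp
              ring
            calc ENNReal.ofReal (2*‖y‖)^m ≤ ENNReal.ofReal (4*r)^m := h4r
              _ = ENNReal.ofReal (2*(r/Real.sqrt m))^m * ENNReal.ofReal (2*Real.sqrt m)^m := by
                  rw [hsplit, mul_pow]
              _ ≤ M * ENNReal.ofReal (2*Real.sqrt m)^m := mul_le_mul_left hMlo _
        _ = 2 * capConst m * ENNReal.ofReal (2*Real.sqrt m) ^ m * M := by ring
    · -- far case
      have hA0 : ∀ k : ℕ, k ≠ 0 → μH[(m:ℝ)] (A k) = 0 := by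
        intro k hk
        have hAempty : A k = ∅ := by
          ext x
          simp only [hAdef, Set.mem_inter_iff, Set.mem_setOf_eq, Set.mem_empty_iff_false,
            iff_false, not_and]
          intro hxS hxd
          have hxn : ‖x‖ = r := mem_sphere_zero_iff_norm.1 hxS
          have hlow : ‖y‖ - r ≤ ‖x - y‖ := by
            have h := norm_sub_norm_le y x
            rw [norm_sub_rev] at h
            linarith
          have hk1 : (1:ℝ) ≤ (k:ℝ) := by exact_mod_cast Nat.one_le_iff_ne_zero.2 hk
          have hexp : Real.exp (-(k:ℝ)) ≤ Real.exp (-1) := Real.exp_le_exp.2 (by linarith)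
          have he2 : Real.exp (-1) ≤ 2⁻¹ := by
            rw [Real.exp_neg]
            have h2e : (2:ℝ) ≤ Real.exp 1 := by
              have := Real.exp_one_gt_d9
              linarith
            rw [inv_le_inv₀ (Real.exp_pos 1) (by norm_num)]
            exact h2e
          have hle : ‖x - y‖ ≤ ‖y‖ * 2⁻¹ := by
            calc ‖x - y‖ ≤ ‖y‖ * Real.exp (-(k:ℝ)) := hxd
              _ ≤ ‖y‖ * 2⁻¹ := by
                  exact mul_le_mul_of_nonneg_left (le_trans hexp he2) h0y.le
          nlinarith
        rw [hAempty]
        exact measure_empty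
      have htsum := tsum_eq_single (L := SummationFilter.unconditional ℕ) (f := fun k : ℕ => ENNReal.ofReal ((k:ℝ)+1) * μH[(m:ℝ)] (A k))
        0 (fun k hk => by
          show ENNReal.ofReal ((k:ℝ)+1) * μH[(m:ℝ)] (A k) = 0
          rw [hA0 k hk, mul_zero])
      rw [htsum]
      simp only [Nat.cast_zero, zero_add, ENNReal.ofReal_one, one_mul]
      have hle : μH[(m:ℝ)] (A 0) ≤ M := measure_mono (hAS 0)
      refine le_trans hle ?_
      refine le_mul_of_one_le_left (zero_le) ?_
      calc (1:ℝ≥0∞) = 1 * 1 * 1 := by ring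
        _ ≤ 2 * capConst m * ENNReal.ofReal (2*Real.sqrt m) ^ m := by
            gcongr
            · norm_num
            · exact one_le_capConst m (by omega)
            · exact one_le_pow₀ (ENNReal.one_le_ofReal.2 (by linarith))
  -- lintegral computation
  have hglint : ∀ k : ℕ, ∫⁻ x in S, g k x ∂μH[(m:ℝ)]
      = ENNReal.ofReal ((k:ℝ)+1) * μH[(m:ℝ)] (A k) := by
    intro k
    rw [hgdef]
    show ∫⁻ x in S, (A k).indicator (fun _ => ENNReal.ofReal ((k:ℝ)+1)) x ∂μH[(m:ℝ)] = _
    rw [lintegral_indicator (hA k), setLIntegral_const, Measure.restrict_apply (hA k),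
      Set.inter_eq_self_of_subset_left (hAS k)]
  have hkey : ∫⁻ x in S, ENNReal.ofReal (f x) ∂μH[(m:ℝ)] ≤ Cbig * M := by
    have hb1 : ∫⁻ x in S, ENNReal.ofReal (f x) ∂μH[(m:ℝ)]
        ≤ ∫⁻ x in S, (ENNReal.ofReal (Real.log 3) + ∑' k : ℕ, g k x) ∂μH[(m:ℝ)] := by
      refine lintegral_mono_ae ?_
      filter_upwards [ae_restrict_mem hSmeas] with x hx
      exact hpoint x hx
    have hb2 : ∫⁻ x in S, (ENNReal.ofReal (Real.log 3) + ∑' k : ℕ, g k x) ∂μH[(m:ℝ)]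
        = ENNReal.ofReal (Real.log 3) * M
          + ∑' k : ℕ, ENNReal.ofReal ((k:ℝ)+1) * μH[(m:ℝ)] (A k) := by
      rw [lintegral_add_left measurable_const]
      congr 1
      · rw [lintegral_const, Measure.restrict_apply_univ]
      · rw [lintegral_tsum (fun k => (measurable_const.indicator (hA k)).aemeasurable)]
        exact tsum_congr hglint
    refine le_trans hb1 (le_trans hb2.le ?_)
    calc ENNReal.ofReal (Real.log 3) * M
          + ∑' k : ℕ, ENNReal.ofReal ((k:ℝ)+1) * μH[(m:ℝ)] (A k)
        ≤ ENNReal.ofReal (Real.log 3) * M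
          + 2 * capConst m * ENNReal.ofReal (2*Real.sqrt m) ^ m * M := add_le_add_right hsum _
      _ = Cbig * M := by rw [hCbig]; ring
  have hint : ∫ x in S, f x ∂μH[(m:ℝ)]
      = (∫⁻ x in S, ENNReal.ofReal (f x) ∂μH[(m:ℝ)]).toReal :=
    integral_eq_lintegral_of_nonneg_ae (Filter.Eventually.of_forall fun x => abs_nonneg _)
      hfm.aestronglyMeasurable
  rw [hint]
  have h1 : (∫⁻ x in S, ENNReal.ofReal (f x) ∂μH[(m:ℝ)]).toReal ≤ (Cbig * M).toReal :=
    ENNReal.toReal_mono (ENNReal.mul_ne_top hCtop hMtop) hkey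
  have hMt0 : M.toReal ≠ 0 := ENNReal.toReal_ne_zero.2 ⟨hMne, hMtop⟩
  have hMtnn : (0:ℝ) ≤ M.toReal⁻¹ := inv_nonneg.2 ENNReal.toReal_nonneg
  calc M.toReal⁻¹ * (∫⁻ x in S, ENNReal.ofReal (f x) ∂μH[(m:ℝ)]).toReal
      ≤ M.toReal⁻¹ * (Cbig * M).toReal := mul_le_mul_of_nonneg_left h1 hMtnn
    _ = Cbig.toReal * (M.toReal⁻¹ * M.toReal) := by rw [ENNReal.toReal_mul]; ring
    _ = Cbig.toReal := by rw [inv_mul_cancel₀ hMt0, mul_one]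
    _ ≤ Cbig.toReal + 1 := by linarith
end
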